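/- arXiv:1007.2159 — 8 statements merged into one kernel-verified Lean document; each statement's English description precedes it below -/
import Mathlib

section
/- Let p be a prime, G a finite group in which every normal p-subgroup is trivial, and N a normal subgroup of G such that the quotient G/N is a p-group. Then the Frattini subgroup of G equals the Frattini subgroup of N (viewed as subgroups of G). -/
/-!
Auxiliary material: the Gaschütz splitting and complement-extension theorems,
and the key inductive lemma, used to prove the main result below.
-/

open Subgroup
open scoped IsMulCommutative commutatorElement

namespace FrattiniAux

universe u

variable {G : Type*} [Group G]

/-- strict mono of card on subgroups -/
lemma card_lt_of_lt [Finite G] {H K : Subgroup G} (h : H < K) : Nat.card H < Nat.card K := by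
  refine lt_of_le_of_ne (Subgroup.card_le_of_le h.le) fun hc => h.ne ?_
  exact Subgroup.eq_of_le_of_card_ge h.le hc.ge

/-- If `X` is normal in `G` and contained in (the image in `G` of) the Frattini subgroup
of a subgroup `H`, then `X ≤ frattini G`. -/
lemma le_frattini_of_le_frattini_subgroup [Finite G] {X : Subgroup G} (hX : X.Normal)
    {H : Subgroup G} (hXf : X ≤ (frattini ↥H).map H.subtype) : X ≤ frattini G := by
  have hXH : X ≤ H := hXf.trans (map_subtype_le _)
  -- show X ≤ K for every coatom K
  refine le_iInf fun K => le_iInf fun hK => ?_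
  by_contra hnot
  have hsup : K ⊔ X = ⊤ := hK.2 _ (lt_of_le_of_ne le_sup_left (fun h => hnot (h ▸ le_sup_right)))
  -- H = (K ⊓ H) ⊔ X inside H
  have key : ((K ⊓ H).subgroupOf H) ⊔ frattini ↥H = ⊤ := by
    rw [eq_top_iff]
    intro h _
    have hh : (h : G) ∈ (↑(K ⊔ X) : Set G) := by rw [hsup]; trivial
    rw [Subgroup.mul_normal] at hh
    obtain ⟨k, hk, x, hx, hkx⟩ := hh
    have hxX : x ∈ X := hx
    have hxH : x ∈ H := hXH hxX
    have hkK : k ∈ K := hk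
    have hkeq : k = (h : G) * x⁻¹ := by rw [← hkx]; group
    have hkH : k ∈ K ⊓ H := ⟨hkK, hkeq ▸ mul_mem h.2 (H.inv_mem hxH)⟩
    have : h = (⟨k, hkH.2⟩ : H) * ⟨x, hxH⟩ := Subtype.ext (by simp [← hkx])
    rw [this]
    refine mul_mem (mem_sup_left ?_) (mem_sup_right ?_)
    · exact hkH
    · -- ⟨x,hxH⟩ ∈ frattini H since X ≤ map subtype (frattini H)
      have := hXf hxX
      obtain ⟨y, hy, hyx⟩ := this
      have : (⟨x, hxH⟩ : H) = y := Subtype.ext (by simp [← hyx])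
      exact this ▸ hy
  have := frattini_nongenerating key
  -- hence H ≤ K
  have hHK : H ≤ K := by
    intro h hh
    have : (⟨h, hh⟩ : H) ∈ (K ⊓ H).subgroupOf H := this ▸ mem_top _
    exact (mem_subgroupOf.mp this).1
  exact hnot (hXH.trans hHK)


lemma comm_of_mem {Q : Subgroup G} (hc : IsMulCommutative Q) {x y : G} (hx : x ∈ Q) (hy : y ∈ Q) :
    x * y = y * x := congrArg Subtype.val (mul_comm (⟨x, hx⟩ : Q) (⟨y, hy⟩ : Q))

open scoped Classical in
/-- The `Q`-part of an element with respect to a factorization `N = Q * C`. -/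
noncomputable def gPhi (Q C : Subgroup G) (g : G) : ↥Q :=
  if h : ∃ x : ↥Q, (x : G)⁻¹ * g ∈ C then h.choose else 1

open scoped Classical in
lemma gPhi_pos {Q C : Subgroup G} {g : G} (h : ∃ x : ↥Q, (x : G)⁻¹ * g ∈ C) :
    gPhi Q C g = h.choose := dif_pos h

section phi

variable {Q N C : Subgroup G}

lemma gPhi_exists [Q.Normal] (hsup : Q ⊔ C = N) {g : G} (hg : g ∈ N) :
    ∃ x : ↥Q, (x : G)⁻¹ * g ∈ C := by
  have : g ∈ (↑(Q ⊔ C) : Set G) := by rw [hsup]; exact hg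
  rw [Subgroup.normal_mul] at this
  obtain ⟨x, hx, c, hc, rfl⟩ := this
  exact ⟨⟨x, hx⟩, by simpa using hc⟩

lemma gPhi_eq (hinf : Q ⊓ C = ⊥) {g : G} (x : ↥Q) (hx : (x : G)⁻¹ * g ∈ C) :
    gPhi Q C g = x := by
  have h : ∃ x : ↥Q, (x : G)⁻¹ * g ∈ C := ⟨x, hx⟩
  rw [gPhi_pos h]
  have hy := h.choose_spec
  set y := h.choose
  -- y⁻¹ * x ∈ Q ⊓ C
  have hyx : ((y : G)⁻¹ * x) ∈ Q ⊓ C := by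
    refine ⟨mul_mem (Q.inv_mem y.2) x.2, ?_⟩
    have : (y : G)⁻¹ * x = ((y : G)⁻¹ * g) * ((x : G)⁻¹ * g)⁻¹ := by group
    rw [this]
    exact mul_mem hy (C.inv_mem hx)
  rw [hinf] at hyx
  have : (y : G)⁻¹ * x = 1 := hyx
  have := inv_mul_eq_one.mp this
  exact Subtype.ext this

lemma gPhi_spec [Q.Normal] (hsup : Q ⊔ C = N) {g : G} (hg : g ∈ N) :
    ((gPhi Q C g : G))⁻¹ * g ∈ C := by
  have h := gPhi_exists (C := C) hsup hg
  rw [gPhi_pos h]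
  exact h.choose_spec

lemma gPhi_coe (hinf : Q ⊓ C = ⊥) (x : ↥Q) : gPhi Q C (x : G) = x :=
  gPhi_eq hinf x (by simpa using C.one_mem)

lemma gPhi_mul [Q.Normal] (hcomm : IsMulCommutative Q) (hsup : Q ⊔ C = N) (hinf : Q ⊓ C = ⊥)
    {m n : G} (hm : m ∈ N) (hn : n ∈ N) :
    gPhi Q C (m * n) = gPhi Q C m * MulAut.conjNormal m (gPhi Q C n) := by
  set a := gPhi Q C m with ha
  set b := gPhi Q C n with hb
  have hca : (a : G)⁻¹ * m ∈ C := gPhi_spec hsup hm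
  have hcb : (b : G)⁻¹ * n ∈ C := gPhi_spec hsup hn
  refine gPhi_eq hinf _ ?_
  have hcoe : ((a * MulAut.conjNormal m b : ↥Q) : G) = (a : G) * (m * b * m⁻¹) := by
    push_cast [MulAut.conjNormal_apply]; rfl
  rw [hcoe]
  -- ((a * (m b m⁻¹))⁻¹ * (m * n)) = m b⁻¹ m⁻¹ a⁻¹ m n  = a⁻¹ m b⁻¹ n ∈ C
  have key : ((a : G) * (m * b * m⁻¹))⁻¹ * (m * n)
      = ((a : G)⁻¹ * m) * ((b : G)⁻¹ * n) := by
    have hswap : (m * (b : G)⁻¹ * m⁻¹) * (a : G)⁻¹ = (a : G)⁻¹ * (m * (b : G)⁻¹ * m⁻¹) :=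
      comm_of_mem hcomm (by exact ‹Q.Normal›.conj_mem _ (Q.inv_mem b.2) m) (Q.inv_mem a.2)
    calc ((a : G) * (m * b * m⁻¹))⁻¹ * (m * n)
        = (m * (b : G)⁻¹ * m⁻¹) * (a : G)⁻¹ * (m * n) := by group
      _ = (a : G)⁻¹ * (m * (b : G)⁻¹ * m⁻¹) * (m * n) := by rw [hswap]
      _ = ((a : G)⁻¹ * m) * ((b : G)⁻¹ * n) := by group
  rw [key]
  exact mul_mem hca hcb

end phi

/-- the 1-cocycle `u g ω = σ(g·ω)⁻¹ g σ(ω)` with values in `N`. -/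
noncomputable def gU (N : Subgroup G) [N.Normal] (g : G) (ω : G ⧸ N) : G :=
  ((((QuotientGroup.mk' N) g) * ω).out)⁻¹ * g * ω.out

section u

variable (N : Subgroup G) [N.Normal]

lemma gU_mem (g : G) (ω : G ⧸ N) : gU N g ω ∈ N := by
  rw [← QuotientGroup.eq_one_iff, gU]
  rw [QuotientGroup.mk_mul, QuotientGroup.mk_mul, QuotientGroup.mk_inv]
  rw [show QuotientGroup.mk ((((QuotientGroup.mk' N) g) * ω).out) = ((QuotientGroup.mk' N) g) * ω
      from QuotientGroup.out_eq' _,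
    show (QuotientGroup.mk ω.out : G ⧸ N) = ω from QuotientGroup.out_eq' _]
  rw [QuotientGroup.mk'_apply]
  group

lemma gU_cocycle (g h : G) (ω : G ⧸ N) :
    gU N (g * h) ω = gU N g (((QuotientGroup.mk' N) h) * ω) * gU N h ω := by
  simp only [gU, map_mul, mul_assoc]
  group

lemma gU_of_mem {a : G} (ha : a ∈ N) (ω : G ⧸ N) :
    gU N a ω = (ω.out)⁻¹ * a * ω.out := by
  have h1 : (QuotientGroup.mk' N) a = 1 := by
    rw [QuotientGroup.mk'_apply]
    exact (QuotientGroup.eq_one_iff _).mpr ha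
  rw [gU, h1, one_mul]

end u


/-- Gaschütz splitting theorem. -/
lemma gaschutz_splitting [Finite G] (A : Subgroup G) (hA : A.Normal)
    (hcomm : IsMulCommutative A) (hAf : A ⊓ frattini G = ⊥) :
    ∃ C : Subgroup G, A ⊔ C = ⊤ ∧ A ⊓ C = ⊥ := by
  classical
  -- pick a supplement H of minimal cardinality
  have hsne : {n | ∃ H : Subgroup G, A ⊔ H = ⊤ ∧ Nat.card H = n}.Nonempty :=
    ⟨Nat.card (⊤ : Subgroup G), ⊤, by simp, rfl⟩
  obtain ⟨H, hH, hcard⟩ : ∃ H : Subgroup G, A ⊔ H = ⊤ ∧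
      Nat.card H = sInf {n | ∃ H : Subgroup G, A ⊔ H = ⊤ ∧ Nat.card H = n} :=
    Nat.sInf_mem hsne
  have hmin : ∀ H' : Subgroup G, A ⊔ H' = ⊤ → ¬ Nat.card H' < Nat.card H := by
    intro H' h1 h2
    exact Nat.notMem_of_lt_sInf (hcard ▸ h2)
      (show Nat.card ↥H' ∈ {n | ∃ H : Subgroup G, A ⊔ H = ⊤ ∧ Nat.card ↥H = n} from ⟨H', h1, rfl⟩)
  refine ⟨H, hH, ?_⟩
  -- X := A ⊓ H is normal in G
  have hXnorm : (A ⊓ H).Normal := by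
    constructor
    intro x hx g
    have hg : g ∈ (↑(A ⊔ H) : Set G) := by rw [hH]; trivial
    rw [Subgroup.normal_mul] at hg
    obtain ⟨a, ha, h, hh, rfl⟩ := hg
    have haA : a ∈ A := ha
    have hhH : h ∈ H := hh
    have hy : h * x * h⁻¹ ∈ A ⊓ H := ⟨hA.conj_mem _ hx.1 _, mul_mem (mul_mem hhH hx.2) (H.inv_mem hhH)⟩
    have hcomm' : a * (h * x * h⁻¹) = (h * x * h⁻¹) * a := by
      have := mul_comm (⟨a, haA⟩ : A) ⟨h * x * h⁻¹, hy.1⟩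
      exact congrArg Subtype.val this
    have : a * h * x * (a * h)⁻¹ = h * x * h⁻¹ := by
      rw [mul_inv_rev]
      calc a * h * x * (h⁻¹ * a⁻¹) = a * (h * x * h⁻¹) * a⁻¹ := by group
        _ = (h * x * h⁻¹) * a * a⁻¹ := by rw [hcomm']
        _ = h * x * h⁻¹ := by group
    exact this ▸ hy
  -- X is contained in the Frattini subgroup of H
  have hXfH : A ⊓ H ≤ (frattini ↥H).map H.subtype := by
    have hXsub : (A ⊓ H).subgroupOf H ≤ frattini ↥H := by
      refine le_iInf fun M' => le_iInf fun hM' => ?_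
      by_contra hnot
      have hsup' : M' ⊔ (A ⊓ H).subgroupOf H = ⊤ :=
        hM'.2 _ (lt_of_le_of_ne le_sup_left fun h => hnot (h ▸ le_sup_right))
      have hmapeq : ((A ⊓ H).subgroupOf H).map H.subtype = A ⊓ H := by
        rw [Subgroup.subgroupOf_map_subtype]; exact inf_eq_left.mpr inf_le_right
      have hsupG : M'.map H.subtype ⊔ (A ⊓ H) = H := by
        have h2 := congrArg (Subgroup.map H.subtype) hsup'
        rw [Subgroup.map_sup, hmapeq] at h2
        rw [h2, ← MonoidHom.range_eq_map]
        exact Subgroup.range_subtype H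
      have hAM : A ⊔ M'.map H.subtype = ⊤ := by
        rw [← hH]
        refine le_antisymm (sup_le le_sup_left ((map_subtype_le _).trans le_sup_right)) ?_
        refine sup_le le_sup_left ?_
        refine le_trans (le_of_eq hsupG.symm) ?_
        exact sup_le le_sup_right (inf_le_left.trans le_sup_left)
      refine hmin _ hAM ?_
      have hc1 : Nat.card (M'.map H.subtype) = Nat.card M' :=
        (Nat.card_congr (Subgroup.equivMapOfInjective M' H.subtype H.subtype_injective).toEquiv).symm
      have hc2 : Nat.card (⊤ : Subgroup ↥H) = Nat.card ↥H := Nat.card_congr Subgroup.topEquiv.toEquiv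
      rw [hc1, ← hc2]
      exact card_lt_of_lt hM'.1.lt_top
    have hmapeq : ((A ⊓ H).subgroupOf H).map H.subtype = A ⊓ H := by
      rw [Subgroup.subgroupOf_map_subtype]; exact inf_eq_left.mpr inf_le_right
    rw [← hmapeq]
    exact Subgroup.map_mono hXsub
  -- conclude
  have := le_frattini_of_le_frattini_subgroup hXnorm hXfH
  exact le_antisymm (le_trans (le_inf inf_le_left this) (le_of_eq hAf)) bot_le


/-- The averaged product over all cosets. -/
noncomputable def gS (Q N C : Subgroup G) [Q.Normal] [N.Normal] [IsMulCommutative Q]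
    [Fintype (G ⧸ N)] (g : G) : ↥Q :=
  ∏ ω : G ⧸ N, MulAut.conjNormal ((((QuotientGroup.mk' N) g) * ω).out) (gPhi Q C (gU N g ω))

section S

variable (Q N C : Subgroup G) [Q.Normal] [N.Normal] [IsMulCommutative Q] [Fintype (G ⧸ N)]

lemma gS_mul (hsup : Q ⊔ C = N) (hinf : Q ⊓ C = ⊥) (g h : G) :
    gS Q N C (g * h) = gS Q N C g * MulAut.conjNormal g (gS Q N C h) := by
  have step : ∀ ω : G ⧸ N,
      MulAut.conjNormal ((((QuotientGroup.mk' N) (g * h)) * ω).out)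
          (gPhi Q C (gU N (g * h) ω))
        = (fun ω' => MulAut.conjNormal ((((QuotientGroup.mk' N) g) * ω').out)
            (gPhi Q C (gU N g ω'))) (((QuotientGroup.mk' N) h) * ω)
          * MulAut.conjNormal g
            (MulAut.conjNormal ((((QuotientGroup.mk' N) h) * ω).out) (gPhi Q C (gU N h ω))) := by
    intro ω
    simp only
    rw [gU_cocycle N g h ω,
      gPhi_mul ‹IsMulCommutative Q› hsup hinf
        (gU_mem N g _) (gU_mem N h ω)]
    rw [map_mul]
    have hout : (((QuotientGroup.mk' N) (g * h)) * ω).out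
        = (((QuotientGroup.mk' N) g) * (((QuotientGroup.mk' N) h) * ω)).out := by
      rw [map_mul, mul_assoc]
    congr 1
    · rw [hout]
    · -- composite conjugation
      rw [← MulAut.mul_apply, ← map_mul, hout]
      rw [show (((QuotientGroup.mk' N) g) * (((QuotientGroup.mk' N) h) * ω)).out * gU N g (((QuotientGroup.mk' N) h) * ω)
          = g * (((QuotientGroup.mk' N) h) * ω).out by rw [gU]; group]
      rw [map_mul, MulAut.mul_apply]
  simp only [gS]
  calc (∏ ω : G ⧸ N, MulAut.conjNormal ((((QuotientGroup.mk' N) (g * h)) * ω).out)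
          (gPhi Q C (gU N (g * h) ω)))
      = ∏ ω : G ⧸ N, ((fun ω' => MulAut.conjNormal ((((QuotientGroup.mk' N) g) * ω').out)
            (gPhi Q C (gU N g ω'))) (((QuotientGroup.mk' N) h) * ω)
          * MulAut.conjNormal g
            (MulAut.conjNormal ((((QuotientGroup.mk' N) h) * ω).out) (gPhi Q C (gU N h ω)))) := by
        exact Finset.prod_congr rfl fun ω _ => step ω
    _ = (∏ ω : G ⧸ N, (fun ω' => MulAut.conjNormal ((((QuotientGroup.mk' N) g) * ω').out)
            (gPhi Q C (gU N g ω'))) (((QuotientGroup.mk' N) h) * ω))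
          * ∏ ω : G ⧸ N, MulAut.conjNormal g
            (MulAut.conjNormal ((((QuotientGroup.mk' N) h) * ω).out) (gPhi Q C (gU N h ω))) :=
        Finset.prod_mul_distrib
    _ = (∏ ω' : G ⧸ N, MulAut.conjNormal ((((QuotientGroup.mk' N) g) * ω').out)
            (gPhi Q C (gU N g ω')))
          * MulAut.conjNormal g (∏ ω : G ⧸ N,
            MulAut.conjNormal ((((QuotientGroup.mk' N) h) * ω).out) (gPhi Q C (gU N h ω))) := by
        congr 1
        · exact Equiv.prod_comp (Equiv.mulLeft ((QuotientGroup.mk' N) h))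
            (fun ω' => MulAut.conjNormal ((((QuotientGroup.mk' N) g) * ω').out)
              (gPhi Q C (gU N g ω')))
        · rw [← map_prod]

lemma gS_of_mem (hQN : Q ≤ N) (hinf : Q ⊓ C = ⊥) (x : ↥Q) :
    gS Q N C (x : G) = x ^ Fintype.card (G ⧸ N) := by
  have hxN : (x : G) ∈ N := hQN x.2
  have hmk : ((QuotientGroup.mk' N) (x : G)) = 1 := by
    rw [QuotientGroup.mk'_apply]
    exact (QuotientGroup.eq_one_iff _).mpr hxN
  rw [gS]
  have step : ∀ ω : G ⧸ N,
      MulAut.conjNormal ((((QuotientGroup.mk' N) (x : G)) * ω).out)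
        (gPhi Q C (gU N (x : G) ω)) = x := by
    intro ω
    have h1 : gU N (x : G) ω = (ω.out)⁻¹ * x * ω.out := gU_of_mem N hxN ω
    have hmem : (ω.out)⁻¹ * (x : G) * ω.out ∈ Q := by
      have := (‹Q.Normal› : Q.Normal).conj_mem _ x.2 (ω.out)⁻¹
      simpa using this
    have h2 : gPhi Q C (gU N (x : G) ω) = ⟨(ω.out)⁻¹ * x * ω.out, hmem⟩ := by
      rw [h1]
      exact gPhi_coe hinf ⟨_, hmem⟩
    rw [h2, hmk, one_mul]
    ext
    rw [MulAut.conjNormal_apply]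
    group
  rw [Finset.prod_congr rfl fun ω _ => step ω, Finset.prod_const, Finset.card_univ]

end S

/-- Gaschütz complement-extension theorem. -/
lemma gaschutz_extension [Finite G] (Q N C : Subgroup G) [Q.Normal] [N.Normal]
    (hcomm : IsMulCommutative Q) (hQN : Q ≤ N) (hCN : C ≤ N) (hsup : Q ⊔ C = N) (hinf : Q ⊓ C = ⊥)
    (hcop : (Nat.card ↥Q).Coprime N.index) :
    ∃ T : Subgroup G, Q ⊔ T = ⊤ ∧ Q ⊓ T = ⊥ := by
  classical
  rcases eq_or_ne Q ⊥ with hQ | hQ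
  · exact ⟨⊤, by simp [hQ], by simp [hQ]⟩
  letI : Fintype (G ⧸ N) := Fintype.ofFinite _
  have hcard1 : 1 < Nat.card ↥Q := by
    rcases Nat.lt_or_ge (Nat.card ↥Q) 2 with h | h
    · interval_cases h' : Nat.card ↥Q
      · exact absurd h' Nat.card_pos.ne'
      · exact absurd (Subgroup.card_eq_one.mp h') hQ
    · exact h
  obtain ⟨m', -, hm'⟩ := Nat.exists_mul_mod_eq_one_of_coprime hcop.symm hcard1
  -- here hm' : N.index * m' % Nat.card ↥Q = 1
  set n := Fintype.card (G ⧸ N) with hn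
  have hnidx : n = N.index := by rw [hn, Subgroup.index, Nat.card_eq_fintype_card]
  set ψ : G → ↥Q := fun g => (gS Q N C g) ^ m' with hψ
  have hψmul : ∀ g h : G, ψ (g * h) = ψ g * MulAut.conjNormal g (ψ h) := by
    intro g h
    rw [hψ]
    simp only
    rw [gS_mul Q N C hsup hinf, mul_pow, ← map_pow]
  have hψQ : ∀ x : ↥Q, ψ (x : G) = x := by
    intro x
    rw [hψ]
    simp only
    rw [gS_of_mem Q N C hQN hinf, ← pow_mul, ← hn]
    conv_rhs => rw [← pow_one x]
    rw [← Nat.div_add_mod (n * m') (Nat.card ↥Q), hnidx, hm']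
    rw [pow_add, pow_mul, pow_card_eq_one', one_pow, one_mul]
  have hψone : ψ 1 = 1 := by
    have := hψmul 1 1
    rw [one_mul] at this
    have h2 : ψ 1 * 1 = ψ 1 * MulAut.conjNormal (1 : G) (ψ 1) := by rw [mul_one]; exact this
    have := mul_left_cancel h2
    rw [map_one, MulAut.one_apply] at this
    exact this.symm
  refine ⟨{ carrier := {g | ψ g = 1}
            one_mem' := hψone
            mul_mem' := ?_
            inv_mem' := ?_ }, ?_, ?_⟩
  · intro a b ha hb
    simp only [Set.mem_setOf_eq] at *
    rw [hψmul, ha, hb, map_one, mul_one]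
  · intro a ha
    simp only [Set.mem_setOf_eq] at *
    have := hψmul a⁻¹ a
    rw [inv_mul_cancel, hψone, ha, map_one, mul_one] at this
    exact this.symm
  · -- sup
    rw [eq_top_iff]
    intro g _
    have hT : ψ ((ψ g : G)⁻¹ * g) = 1 := by
      have hinv : ((ψ g)⁻¹ : ↥Q) = ((ψ g : G)⁻¹ : G) := rfl
      have h1 : ψ (((ψ g)⁻¹ : ↥Q) : G) = (ψ g)⁻¹ := hψQ _
      have h2 := hψmul (((ψ g)⁻¹ : ↥Q) : G) g
      have hcoe : (((ψ g)⁻¹ : ↥Q) : G) = (ψ g : G)⁻¹ := rfl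
      rw [hcoe] at h1 h2
      rw [h2, h1]
      have h3 : MulAut.conjNormal ((ψ g : G)⁻¹) (ψ g) = ψ g := by
        ext
        rw [MulAut.conjNormal_apply]
        group
      rw [h3, inv_mul_cancel]
    have : g = ((ψ g : G)) * ((ψ g : G)⁻¹ * g) := by group
    rw [this]
    exact mul_mem (mem_sup_left (ψ g).2) (mem_sup_right hT)
  · -- inf
    rw [eq_bot_iff]
    rintro x ⟨hxQ, hxT⟩
    have := hψQ ⟨x, hxQ⟩
    have hx1 : (⟨x, hxQ⟩ : ↥Q) = 1 := by
      rw [← this]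
      exact hxT
    have : x = 1 := congrArg Subtype.val hx1
    simp [this]


lemma commutator_ne_top {H : Type*} [Group H] [hn : Group.IsNilpotent H] [Nontrivial H] :
    commutator H ≠ ⊤ := by
  intro htop
  have hall : ∀ n, (⊤ : Subgroup H).lowerCentralSeries n = ⊤ := by
    intro n
    induction n with
    | zero => rfl
    | succ n ihn => rw [Subgroup.lowerCentralSeries_succ, ihn]; exact htop
  obtain ⟨n, hn'⟩ := Subgroup.nilpotent_iff_lowerCentralSeries.mp hn
  rw [hall n] at hn'
  obtain ⟨x, hx⟩ := exists_ne (1 : H)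
  exact hx (Subgroup.mem_bot.mp (hn' ▸ Subgroup.mem_top x))

/-- The key inductive lemma. -/
lemma keyLemma : ∀ (n : ℕ) (G : Type u) (_ : Group G) (_ : Finite G) (N Q M : Subgroup G),
    Nat.card G + Nat.card Q ≤ n → N.Normal → Q.Normal → Q ≤ N → Q ≤ frattini G →
    (Nat.card ↥Q).Coprime N.index → M < N → (∀ X : Subgroup G, M < X → X ≤ N → X = N) →
    ¬ Q ≤ M → False := by
  intro n
  induction n with
  | zero =>
    intro G _ _ N Q M hle _ _ _ _ _ _ _ _
    have h1 : 0 < Nat.card G := Nat.card_pos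
    omega
  | succ n ih =>
    intro G _ _ N Q M hcard hN hQnorm hQN hQfr hcop hMN hmax hQM
    haveI := hN; haveI := hQnorm
    have hQne : Q ≠ ⊥ := fun h => hQM (h ▸ bot_le)
    have hQsupM : Q ⊔ M = N := by
      refine hmax _ (lt_of_le_of_ne le_sup_right fun h => hQM (h ▸ le_sup_left)) (sup_le hQN hMN.le)
    by_cases hY : ∃ Y : Subgroup G, Y.Normal ∧ Y ≠ ⊥ ∧ Y ≤ M
    · -- quotient reduction
      obtain ⟨Y, hYnorm, hYne, hYM⟩ := hY
      haveI := hYnorm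
      set π := QuotientGroup.mk' Y with hπdef
      have hπ : Function.Surjective π := QuotientGroup.mk'_surjective Y
      have hker : π.ker = Y := QuotientGroup.ker_mk' Y
      have hYN : Y ≤ N := hYM.trans hMN.le
      -- cardinalities
      have hc1 : Nat.card (G ⧸ Y) < Nat.card G := by
        have heq := Subgroup.card_eq_card_quotient_mul_card_subgroup Y
        have h2 : 1 < Nat.card Y := (Subgroup.one_lt_card_iff_ne_bot (H := Y)).mpr hYne
        have h3 : 0 < Nat.card (G ⧸ Y) := Nat.card_pos
        calc Nat.card (G ⧸ Y) < Nat.card (G ⧸ Y) * Nat.card Y := by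
              exact (Nat.lt_mul_iff_one_lt_right h3).mpr h2
          _ = Nat.card G := heq.symm
      have hc2 : Nat.card (Q.map π) ≤ Nat.card Q := by
        have : Nat.card (Q.map π) ∣ Nat.card Q :=
          Subgroup.card_dvd_of_surjective (π.subgroupMap Q) (π.subgroupMap_surjective Q)
        exact Nat.le_of_dvd Nat.card_pos this
      -- transported hypotheses
      have hNmap : (N.map π).Normal := Subgroup.Normal.map hN π hπ
      have hQmap : (Q.map π).Normal := Subgroup.Normal.map hQnorm π hπ
      have hQNmap : Q.map π ≤ N.map π := Subgroup.map_mono hQN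
      have hQfrmap : Q.map π ≤ frattini (G ⧸ Y) := by
        refine le_trans (Subgroup.map_mono ?_) (Subgroup.map_comap_le _ _)
        exact hQfr.trans (frattini_le_comap_frattini_of_surjective hπ)
      have hcopmap : (Nat.card ↥(Q.map π)).Coprime (N.map π).index := by
        have hdvd1 : Nat.card (Q.map π) ∣ Nat.card Q :=
          Subgroup.card_dvd_of_surjective (π.subgroupMap Q) (π.subgroupMap_surjective Q)
        have hdvd2 : (N.map π).index ∣ N.index := N.index_map_dvd hπ
        exact Nat.Coprime.coprime_dvd_right hdvd2 (Nat.Coprime.coprime_dvd_left hdvd1 hcop)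
      have hcomapM : (M.map π).comap π = M := by
        rw [Subgroup.comap_map_eq, hker, sup_of_le_left hYM]
      have hcomapN : (N.map π).comap π = N := by
        rw [Subgroup.comap_map_eq, hker, sup_of_le_left hYN]
      have hMNmap : M.map π < N.map π := by
        refine lt_of_le_of_ne (Subgroup.map_mono hMN.le) fun h => hMN.ne ?_
        rw [← hcomapM, ← hcomapN, h]
      have hmaxmap : ∀ X : Subgroup (G ⧸ Y), M.map π < X → X ≤ N.map π → X = N.map π := by
        intro X hMX hXN
        have h1 : M < X.comap π := by
          refine lt_of_le_of_ne ?_ fun h => hMX.ne ?_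
          · rw [← hcomapM]; exact Subgroup.comap_mono hMX.le
          · rw [h, Subgroup.map_comap_eq_self_of_surjective hπ]
        have h2 : X.comap π ≤ N := by rw [← hcomapN]; exact Subgroup.comap_mono hXN
        have := hmax _ h1 h2
        rw [← Subgroup.map_comap_eq_self_of_surjective hπ (H := X), this]
      have hQMmap : ¬ Q.map π ≤ M.map π := by
        intro h
        refine hQM ?_
        have h2 : (Q.map π).comap π ≤ (M.map π).comap π := Subgroup.comap_mono (f := π) h
        rw [hcomapM] at h2
        exact le_trans (Subgroup.le_comap_map π Q) h2
      exact ih (G ⧸ Y) (inferInstanceAs (Group (G ⧸ Y))) (inferInstanceAs (Finite (G ⧸ Y))) (N.map π) (Q.map π) (M.map π)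
        (by omega) hNmap hQmap hQNmap hQfrmap hcopmap hMNmap hmaxmap hQMmap
    · -- core case
      have hcore : ∀ Y : Subgroup G, Y.Normal → Y ≤ M → Y = ⊥ := by
        intro Y h1 h2
        by_contra hne
        exact hY ⟨Y, h1, hne, h2⟩
      -- Q is minimal normal
      have hQmin : ∀ X : Subgroup G, X.Normal → X < Q → X = ⊥ := by
        intro X hXnorm hXQ
        by_contra hXne
        by_cases hXM : X ≤ M
        · exact hXne (hcore X hXnorm hXM)
        · have hcc : Nat.card G + Nat.card X ≤ n := by
            have := card_lt_of_lt hXQ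
            omega
          exact ih G inferInstance inferInstance N X M hcc hN hXnorm (hXQ.le.trans hQN)
            (hXQ.le.trans hQfr)
            (Nat.Coprime.coprime_dvd_left (Subgroup.card_dvd_of_le hXQ.le) hcop) hMN hmax hXM
      -- Q is commutative
      haveI hQcomm : IsMulCommutative Q := by
        have hDQle : ⁅Q, Q⁆ ≤ Q := Subgroup.commutator_le_left Q Q
        have hDQ : ⁅Q, Q⁆ = ⊥ := by
          rcases hDQle.lt_or_eq with hlt | heq
          · exact hQmin _ inferInstance hlt
          · exfalso
            haveI hnilF : Group.IsNilpotent ↥(frattini G) := frattini_nilpotent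
            haveI hnilQ : Group.IsNilpotent ↥Q :=
              nilpotent_of_mulEquiv (Subgroup.subgroupOfEquivOfLe hQfr)
            haveI : Nontrivial ↥Q := (Subgroup.nontrivial_iff_ne_bot Q).mpr hQne
            refine commutator_ne_top (H := ↥Q) ?_
            have hmap : Subgroup.map Q.subtype (commutator ↥Q) = ⁅Q, Q⁆ := by
              rw [_root_.commutator_def, Subgroup.map_commutator]
              congr 1 <;>
                · rw [← MonoidHom.range_eq_map, Subgroup.range_subtype]
            apply Subgroup.map_injective Q.subtype_injective
            rw [hmap, heq]
            rw [← MonoidHom.range_eq_map, Subgroup.range_subtype]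
        rw [isMulCommutative_iff]
        intro a b
        have h1 : ⁅(a : G), (b : G)⁆ ∈ (⊥ : Subgroup G) := by
          rw [← hDQ]
          exact Subgroup.commutator_mem_commutator a.2 b.2
        have h2 : Commute (a : G) (b : G) :=
          commutatorElement_eq_one_iff_commute.mp (Subgroup.mem_bot.mp h1)
        exact Subtype.ext h2
      -- M.subgroupOf N is a coatom
      have hMsub : Subgroup.map N.subtype (M.subgroupOf N) = M := by
        rw [Subgroup.subgroupOf_map_subtype, inf_eq_left.mpr hMN.le]
      have hcoatom : IsCoatom (M.subgroupOf N) := by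
        constructor
        · intro h
          have := congrArg (Subgroup.map N.subtype) h
          rw [hMsub] at this
          have h2 : N ≤ M := by
            rw [this]
            simp [← MonoidHom.range_eq_map, Subgroup.range_subtype]
          exact hMN.not_ge h2
        · intro X' hX'
          have h1 : M < X'.map N.subtype := by
            refine lt_of_le_of_ne ?_ fun h => hX'.ne ?_
            · rw [← hMsub]; exact Subgroup.map_mono hX'.le
            · apply Subgroup.map_injective N.subtype_injective
              rw [hMsub]
              exact h
          have h2 := hmax _ h1 (Subgroup.map_subtype_le X')
          apply Subgroup.map_injective N.subtype_injective
          rw [h2, ← MonoidHom.range_eq_map, Subgroup.range_subtype]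
      -- frattini N is trivial
      have hfrN : frattini ↥N = ⊥ := by
        have h1 : (frattini ↥N).map N.subtype ≤ M := by
          calc (frattini ↥N).map N.subtype ≤ (M.subgroupOf N).map N.subtype :=
                Subgroup.map_mono (frattini_le_coatom hcoatom)
            _ = M := hMsub
        have h2 : (frattini ↥N).map N.subtype = ⊥ := hcore _ inferInstance h1
        apply Subgroup.map_injective N.subtype_injective
        rw [h2, Subgroup.map_bot]
      -- split Q in N
      haveI : (Q.subgroupOf N).Normal := Subgroup.Normal.subgroupOf hQnorm N
      haveI : IsMulCommutative (Q.subgroupOf N) := inferInstance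
      obtain ⟨C', hC'sup, hC'inf⟩ := gaschutz_splitting (Q.subgroupOf N) inferInstance
        inferInstance (by rw [hfrN, inf_bot_eq])
      -- push complement to G
      have hQsubmap : (Q.subgroupOf N).map N.subtype = Q := by
        rw [Subgroup.subgroupOf_map_subtype, inf_eq_left.mpr hQN]
      have hCsup : Q ⊔ C'.map N.subtype = N := by
        have := congrArg (Subgroup.map N.subtype) hC'sup
        rw [Subgroup.map_sup, hQsubmap] at this
        rw [this, ← MonoidHom.range_eq_map, Subgroup.range_subtype]
      have hCinf : Q ⊓ C'.map N.subtype = ⊥ := by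
        have := congrArg (Subgroup.map N.subtype) hC'inf
        rw [Subgroup.map_inf _ _ _ N.subtype_injective, hQsubmap, Subgroup.map_bot] at this
        exact this
      obtain ⟨T, hTsup, hTinf⟩ := gaschutz_extension Q N (C'.map N.subtype) hQcomm hQN
        (Subgroup.map_subtype_le C') hCsup hCinf hcop
      have hTne : T ≠ ⊤ := by
        intro h
        rw [h, inf_top_eq] at hTinf
        exact hQne hTinf
      have hTfr : T ⊔ frattini G = ⊤ := by
        rw [eq_top_iff, ← hTsup]
        exact sup_le (hQfr.trans le_sup_right) le_sup_left
      exact hTne (frattini_nongenerating hTfr)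


end FrattiniAux

open Subgroup FrattiniAux

/-- Let `p` be a prime, `G` a finite group in which every normal `p`-subgroup
is trivial, and `N` a normal subgroup of `G` such that `G/N` is a `p`-group.  Then the Frattini
subgroup of `G` equals the Frattini subgroup of `N`, viewed as a subgroup of `G`. -/
theorem frattini_eq_frattini_of_pGroup_quotient {p : ℕ} (hp : p.Prime)
    {G : Type*} [Group G] [Finite G]
    (hOp : ∀ P : Subgroup G, P.Normal → IsPGroup p P → P = ⊥)
    (N : Subgroup G) (hN : N.Normal) (hquot : IsPGroup p (G ⧸ N)) :
    frattini G = Subgroup.map N.subtype (frattini N) := by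
  haveI : Fact p.Prime := ⟨hp⟩
  haveI := hN
  haveI hKnil : Group.IsNilpotent ↥(frattini G) := frattini_nilpotent
  -- step 1 : p does not divide the order of the Frattini subgroup
  have hpK : ¬ p ∣ Nat.card ↥(frattini G) := by
    intro hdvd
    obtain ⟨g, hg⟩ := exists_prime_orderOf_dvd_card' (G := ↥(frattini G)) p hdvd
    have hgP : IsPGroup p (Subgroup.zpowers g) := by
      apply IsPGroup.of_card (n := 1)
      rw [Nat.card_zpowers, hg, pow_one]
    obtain ⟨P, hle⟩ := hgP.exists_le_sylow
    -- P is normal in frattini G since the latter is nilpotent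
    have hPnormal : (P : Subgroup ↥(frattini G)).Normal := by
      have q := (isNilpotent_of_finite_tfae (G := ↥(frattini G))).out 0 3
      rw [q] at hKnil
      exact hKnil p ⟨hp⟩ P
    haveI := hPnormal
    haveI hPchar : (P : Subgroup ↥(frattini G)).Characteristic :=
      Sylow.characteristic_of_normal P hPnormal
    have hmapn : ((P : Subgroup ↥(frattini G)).map (frattini G).subtype).Normal :=
      inferInstance
    have hmapP : IsPGroup p ↥((P : Subgroup ↥(frattini G)).map (frattini G).subtype) :=
      P.2.map _
    have hbot := hOp _ hmapn hmapP
    -- contradiction: g has order p but lies in the trivial group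
    have hgmem : ((g : G)) ∈ (P : Subgroup ↥(frattini G)).map (frattini G).subtype :=
      mem_map_of_mem _ (hle (Subgroup.mem_zpowers g))
    rw [hbot, Subgroup.mem_bot] at hgmem
    have : g = 1 := Subtype.ext hgmem
    rw [this, orderOf_one] at hg
    exact hp.one_lt.ne hg
  -- index of N is a power of p
  obtain ⟨k, hk⟩ := hquot.exists_card_eq
  have hidx : N.index = p ^ k := by rw [Subgroup.index]; exact hk
  have hcop : (Nat.card ↥(frattini G)).Coprime N.index := by
    rw [hidx]
    exact Nat.Coprime.pow_right k ((Nat.coprime_comm).mp (hp.coprime_iff_not_dvd.mpr hpK))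
  -- frattini G ≤ N
  have hKN : frattini G ≤ N := by
    have hbot : (frattini G).map (QuotientGroup.mk' N) = ⊥ := by
      by_contra hne
      have hpg : IsPGroup p ↥((frattini G).map (QuotientGroup.mk' N)) :=
        IsPGroup.to_subgroup hquot _
      obtain ⟨j, hj⟩ := hpg.exists_card_eq
      have hdvd : Nat.card ↥((frattini G).map (QuotientGroup.mk' N)) ∣
          Nat.card ↥(frattini G) :=
        Subgroup.card_dvd_of_surjective _ (MonoidHom.subgroupMap_surjective _ _)
      have hj0 : j ≠ 0 := by
        intro h0
        rw [h0, pow_zero] at hj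
        exact hne (Subgroup.card_eq_one.mp hj)
      refine hpK (dvd_trans ?_ hdvd)
      rw [hj]
      exact dvd_pow_self p hj0
    rw [Subgroup.map_eq_bot_iff, QuotientGroup.ker_mk'] at hbot
    exact hbot
  -- the two inclusions
  have hsub : (frattini G).subgroupOf N ≤ frattini ↥N := by
    refine le_iInf fun M' => le_iInf fun hM' => ?_
    by_contra hnot
    have hMsubOf : (M'.map N.subtype).subgroupOf N = M' :=
      Subgroup.comap_map_eq_self_of_injective N.subtype_injective M'
    have hMN' : M'.map N.subtype < N := by
      refine lt_of_le_of_ne (map_subtype_le M') fun h => hM'.1 ?_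
      apply Subgroup.map_injective N.subtype_injective
      rw [h, ← MonoidHom.range_eq_map, Subgroup.range_subtype]
    have hmax : ∀ X : Subgroup G, M'.map N.subtype < X → X ≤ N → X = N := by
      intro X hMX hXN
      have h1 : M' < X.subgroupOf N := by
        rw [← hMsubOf]
        refine lt_of_le_of_ne (Subgroup.comap_mono hMX.le) fun h => hMX.ne ?_
        have := congrArg (Subgroup.map N.subtype) h
        rw [Subgroup.subgroupOf_map_subtype, Subgroup.subgroupOf_map_subtype,
          inf_eq_left.mpr hMN'.le, inf_eq_left.mpr hXN] at this
        exact this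
      have h2 := hM'.2 _ h1
      have := congrArg (Subgroup.map N.subtype) h2
      rw [Subgroup.subgroupOf_map_subtype, inf_eq_left.mpr hXN] at this
      rw [this, ← MonoidHom.range_eq_map, Subgroup.range_subtype]
    have hKM : ¬ frattini G ≤ M'.map N.subtype := by
      intro h
      refine hnot ?_
      rw [← hMsubOf]
      exact Subgroup.comap_mono h
    exact (keyLemma (Nat.card G + Nat.card ↥(frattini G)) G inferInstance inferInstance
      N (frattini G) (M'.map N.subtype) le_rfl hN inferInstance hKN le_rfl hcop hMN'
      hmax hKM).elim
  apply le_antisymm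
  · calc frattini G = ((frattini G).subgroupOf N).map N.subtype := by
          rw [Subgroup.subgroupOf_map_subtype, inf_eq_left.mpr hKN]
      _ ≤ Subgroup.map N.subtype (frattini ↥N) := Subgroup.map_mono hsub
  · exact le_frattini_of_le_frattini_subgroup inferInstance le_rfl
end

section
/- Let G be a finite group, S a Sylow 2-subgroup of G, and T a subgroup of S such that: (i) T is elementary abelian of index 2 in S; (ii) |C_T(S)|^2 = |T|. Then either |T| = 4, or T is strongly closed in S with respect to G, i.e. for every x ∈ T and every g ∈ G with gxg^{-1} ∈ S one has gxg^{-1} ∈ T. -/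
open Subgroup Pointwise

namespace SC4

variable {G : Type*} [Group G]

/-- A "system": the data of `(S, T, Z)` with the structural hypotheses. -/
structure Sys (G : Type*) [Group G] where
  S : Subgroup G
  T : Subgroup G
  Z : Subgroup G
  hTS : T ≤ S
  hZT : Z ≤ T
  hzc : ∀ z ∈ Z, ∀ s ∈ S, z * s = s * z
  hzmem : ∀ t ∈ T, (∀ s ∈ S, t * s = s * t) → t ∈ Z
  ht2 : ∀ t ∈ T, t * t = 1
  htc : ∀ t ∈ T, ∀ t' ∈ T, t * t' = t' * t
  hcoset : ∀ s ∈ S, s ∉ T → ∀ σ ∈ S, σ ∉ T → s⁻¹ * σ ∈ T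
  hcard : Nat.card Z * Nat.card Z = Nat.card T

namespace Sys

variable (A : Sys G)

theorem hZS : A.Z ≤ A.S := A.hZT.trans A.hTS

theorem inv_eq_self {t : G} (ht : t ∈ A.T) : t⁻¹ = t :=
  inv_eq_of_mul_eq_one_right (A.ht2 t ht)

theorem mul_mem_T {s σ : G} (hs : s ∈ A.S) (hsT : s ∉ A.T) (hσ : σ ∈ A.S)
    (hσT : σ ∉ A.T) : s * σ ∈ A.T := by
  have h1 : s⁻¹ ∈ A.S := inv_mem hs
  have h2 : s⁻¹ ∉ A.T := fun h => hsT (by simpa using inv_mem h)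
  simpa using A.hcoset s⁻¹ h1 h2 σ hσ hσT

/-- An element of `T` commuting with one element outside `T` is in `Z`. -/
theorem mem_Z_of_commute {s t : G} (hs : s ∈ A.S) (hsT : s ∉ A.T) (ht : t ∈ A.T)
    (hc : s * t = t * s) : t ∈ A.Z := by
  refine A.hzmem t ht (fun σ hσ => ?_)
  by_cases hσT : σ ∈ A.T
  · exact A.htc t ht σ hσT
  · have h1 : s⁻¹ * σ ∈ A.T := A.hcoset s hs hsT σ hσ hσT
    have e1 : σ = s * (s⁻¹ * σ) := by group
    have e2 : t * (s⁻¹ * σ) = (s⁻¹ * σ) * t := A.htc t ht _ h1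
    calc t * σ = (t * s) * (s⁻¹ * σ) := by group
    _ = (s * t) * (s⁻¹ * σ) := by rw [← hc]
    _ = s * ((s⁻¹ * σ) * t) := by rw [mul_assoc, e2]
    _ = σ * t := by rw [← mul_assoc, ← e1]

theorem sq_mem_Z {s : G} (hs : s ∈ A.S) : s * s ∈ A.Z := by
  by_cases hsT : s ∈ A.T
  · rw [A.ht2 s hsT]; exact one_mem _
  · have h1 : s * s ∈ A.T := A.mul_mem_T hs hsT hs hsT
    exact A.mem_Z_of_commute hs hsT h1 (by group)

/-- Conjugates of `y ∈ S \ T` by elements of `S` lie in `Z * y`. -/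
theorem conj_eq_z_mul {y σ : G} (hy : y ∈ A.S) (hyT : y ∉ A.T) (hy2 : y * y = 1)
    (hσ : σ ∈ A.S) : ∃ z ∈ A.Z, σ * y * σ⁻¹ = z * y := by
  have key : ∀ t : G, t ∈ A.T → ∃ z ∈ A.Z, t * y * t⁻¹ = z * y := by
    intro t ht
    refine ⟨(t * y) * (t * y), A.sq_mem_Z (mul_mem (A.hTS ht) hy), ?_⟩
    rw [A.inv_eq_self ht]
    calc t * y * t = t * y * t * 1 := by rw [mul_one]
      _ = t * y * t * (y * y) := by rw [hy2]
      _ = t * y * (t * y) * y := by group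
  rcases em (σ ∈ A.T) with hσT | hσT
  · exact key σ hσT
  · have ht : σ * y ∈ A.T := A.mul_mem_T hσ hσT hy hyT
    obtain ⟨z, hz, hzy⟩ := key (σ * y) ht
    refine ⟨z, hz, ?_⟩
    have e : (σ * y) * y * (σ * y)⁻¹ = σ * y * σ⁻¹ := by
      rw [mul_inv_rev]
      calc σ * y * y * (y⁻¹ * σ⁻¹) = σ * (y * y) * (y * y)⁻¹ * y * σ⁻¹ := by group
        _ = σ * y * σ⁻¹ := by group
    rw [← e]; rw [mul_assoc] at hzy; rw [mul_assoc]; exact hzy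

/-- The subgroup `D = Z ∪ Z y` for an involution `y ∈ S \ T`. -/
def D (A : Sys G) {y : G} (hy : y ∈ A.S) (hyT : y ∉ A.T) (hy2 : y * y = 1) : Subgroup G where
  carrier := {g | g ∈ A.Z ∨ ∃ z ∈ A.Z, g = z * y}
  one_mem' := Or.inl (one_mem _)
  mul_mem' := by
    rintro a b (ha | ⟨z, hz, rfl⟩) (hb | ⟨w, hw, rfl⟩)
    · exact Or.inl (mul_mem ha hb)
    · exact Or.inr ⟨a * w, mul_mem ha hw, by group⟩
    · -- (z*y)*b with b ∈ Z : commute y b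
      refine Or.inr ⟨z * b, mul_mem hz hb, ?_⟩
      have := A.hzc b hb y hy
      calc z * y * b = z * (y * b) := by group
        _ = z * (b * y) := by rw [← this]
        _ = z * b * y := by group
    · -- (z*y)*(w*y) = z*w*(y*y) using y w = w y
      refine Or.inl ?_
      have hc := A.hzc w hw y hy
      have : z * y * (w * y) = z * w * (y * y) := by
        calc z * y * (w * y) = z * (y * w) * y := by group
          _ = z * (w * y) * y := by rw [← hc]
          _ = z * w * (y * y) := by group
      rw [this, hy2, mul_one]; exact mul_mem hz hw
  inv_mem' := by
    rintro a (ha | ⟨z, hz, rfl⟩)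
    · exact Or.inl (inv_mem ha)
    · refine Or.inr ⟨z, hz, ?_⟩
      have hc := A.hzc z hz y hy
      have hinv : (z * y) * (z * y) = 1 := by
        calc z * y * (z * y) = z * (y * z) * y := by group
          _ = z * (z * y) * y := by rw [← hc]
          _ = (z * z) * (y * y) := by group
          _ = 1 := by rw [A.ht2 z (A.hZT hz), hy2, one_mul]
      exact inv_eq_of_mul_eq_one_right hinv

variable {y : G}

theorem mem_D_iff {hy : y ∈ A.S} {hyT : y ∉ A.T} {hy2 : y * y = 1} {g : G} :
    g ∈ A.D hy hyT hy2 ↔ g ∈ A.Z ∨ ∃ z ∈ A.Z, g = z * y := Iff.rfl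

theorem Z_le_D (hy : y ∈ A.S) (hyT : y ∉ A.T) (hy2 : y * y = 1) :
    A.Z ≤ A.D hy hyT hy2 := fun _ h => Or.inl h

theorem y_mem_D (hy : y ∈ A.S) (hyT : y ∉ A.T) (hy2 : y * y = 1) :
    y ∈ A.D hy hyT hy2 := Or.inr ⟨1, one_mem _, by rw [one_mul]⟩

theorem D_le_S (hy : y ∈ A.S) (hyT : y ∉ A.T) (hy2 : y * y = 1) :
    A.D hy hyT hy2 ≤ A.S := by
  rintro g (h | ⟨z, hz, rfl⟩)
  · exact A.hZS h
  · exact mul_mem (A.hZS hz) hy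

/-- Every element of `D` is an involution. -/
theorem D_inv (hy : y ∈ A.S) (hyT : y ∉ A.T) (hy2 : y * y = 1) :
    ∀ d ∈ A.D hy hyT hy2, d * d = 1 := by
  rintro d (h | ⟨z, hz, rfl⟩)
  · exact A.ht2 d (A.hZT h)
  · have hc := A.hzc z hz y hy
    calc z * y * (z * y) = z * (y * z) * y := by group
      _ = z * (z * y) * y := by rw [← hc]
      _ = (z * z) * (y * y) := by group
      _ = 1 := by rw [A.ht2 z (A.hZT hz), hy2, one_mul]

/-- `D` is "central in itself": any two elements commute; moreover every element of `D`
commutes with every element of... (elements of D commute with each other). -/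
theorem D_comm (hy : y ∈ A.S) (hyT : y ∉ A.T) (hy2 : y * y = 1) :
    ∀ d ∈ A.D hy hyT hy2, ∀ d' ∈ A.D hy hyT hy2, d * d' = d' * d := by
  have base : ∀ d ∈ A.D hy hyT hy2, d * y = y * d := by
    rintro d (h | ⟨z, hz, rfl⟩)
    · exact A.hzc d h y hy
    · have hc := A.hzc z hz y hy
      calc z * y * y = y * z * y := by rw [hc]
        _ = y * (z * y) := by group
  rintro d hd d' (h | ⟨z, hz, rfl⟩)
  · exact (A.hzc d' h d (A.D_le_S hy hyT hy2 hd)).symm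
  · have h1 : d * z = z * d := (A.hzc z hz d (A.D_le_S hy hyT hy2 hd)).symm
    calc d * (z * y) = (d * z) * y := by group
      _ = z * (d * y) := by rw [h1]; group
      _ = z * (y * d) := by rw [base d hd]
      _ = z * y * d := by group

/-- `D` is normal in `S`. -/
theorem D_normal (hy : y ∈ A.S) (hyT : y ∉ A.T) (hy2 : y * y = 1) :
    ∀ σ ∈ A.S, ∀ d ∈ A.D hy hyT hy2, σ * d * σ⁻¹ ∈ A.D hy hyT hy2 := by
  rintro σ hσ d (h | ⟨z, hz, rfl⟩)
  · have := A.hzc d h σ hσ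
    have e : σ * d * σ⁻¹ = d := by rw [← this]; group
    rw [e]; exact Or.inl h
  · obtain ⟨w, hw, hwy⟩ := A.conj_eq_z_mul hy hyT hy2 hσ
    have hzσ := A.hzc z hz σ hσ
    have e : σ * (z * y) * σ⁻¹ = z * (σ * y * σ⁻¹) := by
      calc σ * (z * y) * σ⁻¹ = (σ * z) * y * σ⁻¹ := by group
        _ = (z * σ) * y * σ⁻¹ := by rw [← hzσ]
        _ = z * (σ * y * σ⁻¹) := by group
    rw [e, hwy]
    exact Or.inr ⟨z * w, mul_mem hz hw, by group⟩

/-- Membership in S of normalizer of D -/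
theorem S_le_normalizer_D (hy : y ∈ A.S) (hyT : y ∉ A.T) (hy2 : y * y = 1) :
    A.S ≤ Subgroup.normalizer (A.D hy hyT hy2 : Set G) := by
  intro σ hσ
  rw [Subgroup.mem_normalizer_iff]
  intro d
  constructor
  · intro hd; exact A.D_normal hy hyT hy2 σ hσ d hd
  · intro hd
    have h2 := A.D_normal hy hyT hy2 σ⁻¹ (inv_mem hσ) _ hd
    simpa [mul_assoc] using h2

/-- Any element of `S` commuting with `y` lies in `D`. -/
theorem mem_D_of_commute (hy : y ∈ A.S) (hyT : y ∉ A.T) (hy2 : y * y = 1)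
    {c : G} (hc : c ∈ A.S) (hcy : c * y = y * c) : c ∈ A.D hy hyT hy2 := by
  by_cases hcT : c ∈ A.T
  · exact Or.inl (A.mem_Z_of_commute hy hyT hcT (by rw [hcy]))
  · have ht : c * y ∈ A.T := A.mul_mem_T hc hcT hy hyT
    have hz : c * y ∈ A.Z := by
      refine A.mem_Z_of_commute hy hyT ht ?_
      calc y * (c * y) = (y * c) * y := by group
        _ = (c * y) * y := by rw [← hcy]
    refine Or.inr ⟨c * y, hz, ?_⟩
    calc c = c * (y * y) := by rw [hy2, mul_one]
      _ = (c * y) * y := by group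

end Sys

/-- helper: subgroup equality from inclusion plus card bound. -/
theorem subgroup_eq_of_le_of_card_le {H K : Subgroup G} [Finite G]
    (h : H ≤ K) (hc : Nat.card K ≤ Nat.card H) : H = K := by
  have e1 : Nat.card (H.subgroupOf K) = Nat.card H :=
    Nat.card_congr (Subgroup.subgroupOfEquivOfLe h).toEquiv
  have : H.subgroupOf K = ⊤ := by
    apply Subgroup.eq_top_of_card_eq
    have e2 : Nat.card H = Nat.card K := le_antisymm (Subgroup.card_le_of_le h) hc
    rw [e1, e2]

  have hKH : K ≤ H := (Subgroup.subgroupOf_eq_top).1 this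
  exact le_antisymm h hKH

namespace Sys

variable [Finite G] (A : Sys G) {y : G}

/-- Cardinality of `D`: it is `2 * |Z|`. -/
theorem card_D (hy : y ∈ A.S) (hyT : y ∉ A.T) (hy2 : y * y = 1) :
    Nat.card (A.D hy hyT hy2) = 2 * Nat.card A.Z := by
  have hyZ : y ∉ A.Z := fun h => hyT (A.hZT h)
  have f : A.Z × Bool ≃ A.D hy hyT hy2 := by
    refine Equiv.ofBijective (fun p => match p with
      | (z, false) => ⟨(z : G), Or.inl z.2⟩
      | (z, true) => ⟨(z : G) * y, Or.inr ⟨z, z.2, rfl⟩⟩) ⟨?_, ?_⟩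
    · rintro ⟨z, b⟩ ⟨w, c⟩ h
      cases b <;> cases c <;>
        (have h := congrArg Subtype.val h; dsimp only at h; simp only [Prod.mk.injEq] at h ⊢)
      · exact ⟨Subtype.ext h, trivial⟩
      · exfalso; apply hyZ
        have : y = (w : G)⁻¹ * z := by rw [h]; group
        rw [this]; exact mul_mem (inv_mem w.2) z.2
      · exfalso; apply hyZ
        have : y = (z : G)⁻¹ * w := by rw [← h]; group
        rw [this]; exact mul_mem (inv_mem z.2) w.2
      · have : (z : G) = w := mul_right_cancel h
        exact ⟨Subtype.ext this, trivial⟩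
    · rintro ⟨d, hd | ⟨z, hz, rfl⟩⟩
      · exact ⟨⟨⟨d, hd⟩, false⟩, rfl⟩
      · exact ⟨⟨⟨z, hz⟩, true⟩, rfl⟩
  have := Nat.card_congr f
  simpa [Nat.card_eq_fintype_card, mul_comm] using this.symm

/-- surjectivity of `t ↦ [t, y]` onto `Z`. -/
theorem hsurj (hy : y ∈ A.S) (hyT : y ∉ A.T) (hy2 : y * y = 1) :
    ∀ a ∈ A.Z, ∃ t ∈ A.T, t * y * t⁻¹ = a * y := by
  classical
  -- the homomorphism ψ : T →* G, t ↦ t y t y = (ty)²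
  have hmemyty : ∀ t : G, t ∈ A.T → y * t * y ∈ A.T := by
    intro t ht
    by_cases h0 : t = 1
    · subst h0; simpa [hy2] using (one_mem A.T : (1:G) ∈ A.T)
    have h1 : y * t ∉ A.T := by
      intro h; apply hyT
      have : y = (y * t) * t⁻¹ := by group
      rw [this]; exact mul_mem h (inv_mem ht)
    have h2 : y * t ∈ A.S := mul_mem hy (A.hTS ht)
    exact A.mul_mem_T h2 h1 hy hyT
  set ψ : A.T →* G := {
    toFun := fun t => ((t : G) * y) * ((t : G) * y)
    map_one' := by simpa using hy2
    map_mul' := by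
      rintro ⟨t, ht⟩ ⟨t', ht'⟩
      simp only [Subgroup.coe_mul]
      have hq : y * t * y ∈ A.T := hmemyty t ht
      have e0 : (y * t * y) * (y * t' * y) = y * t * t' * y := by
        calc (y * t * y) * (y * t' * y) = y * t * (y * y) * (t' * y) := by group
          _ = y * t * t' * y := by rw [hy2]; group
      have e1 : t * t' * y * (t * t' * y) = t * (t' * ((y * t * y) * (y * t' * y))) := by
        rw [e0]; group
      have e2 : t' * (y * t * y) = (y * t * y) * t' := A.htc t' ht' _ hq
      rw [e1, show t' * (y * t * y * (y * t' * y)) = (t' * (y * t * y)) * (y * t' * y) from by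
        group, e2]
      group
  } with hψ
  have hrange : ψ.range ≤ A.Z := by
    rintro g ⟨⟨t, ht⟩, rfl⟩
    exact A.sq_mem_Z (mul_mem (A.hTS ht) hy)
  have hker : ψ.ker = A.Z.comap A.T.subtype := by
    ext ⟨t, ht⟩
    simp only [MonoidHom.mem_ker, Subgroup.mem_comap]
    constructor
    · intro h
      have h' : (t * y) * (t * y) = 1 := h
      have hcy : y * t = t * y := by
        have e : t * y * t = y⁻¹ :=
          eq_inv_of_mul_eq_one_left (by rw [show t * y * t * y = t * y * (t * y) from by group, h'])
        have hyinv : y⁻¹ = y := inv_eq_of_mul_eq_one_right hy2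
        have htinv : t⁻¹ = t := A.inv_eq_self ht
        have e2 : t * y * t = y := by rw [e, hyinv]
        calc y * t = (t * y * t) * t := by rw [e2]
          _ = t * y * (t * t) := by group
          _ = t * y := by rw [A.ht2 t ht, mul_one]
      exact A.mem_Z_of_commute hy hyT ht (by simpa using hcy)
    · intro h
      have hcy : t * y = y * t := by simpa using (A.hzc t h y hy)
      show (t * y) * (t * y) = 1
      calc (t * y) * (t * y) = t * (y * t) * y := by group
        _ = t * (t * y) * y := by rw [← hcy]
        _ = (t * t) * (y * y) := by group
        _ = 1 := by rw [A.ht2 t ht, hy2, one_mul]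
  -- cardinality chase
  have hq : Nat.card (A.T ⧸ ψ.ker) = Nat.card ψ.range :=
    Nat.card_congr (QuotientGroup.quotientKerEquivRange ψ).toEquiv
  have hlag : Nat.card A.T = Nat.card (A.T ⧸ ψ.ker) * Nat.card ψ.ker :=
    Subgroup.card_eq_card_quotient_mul_card_subgroup ψ.ker
  have hkerZ : Nat.card ψ.ker = Nat.card A.Z := by
    rw [hker]
    exact Nat.card_congr (Subgroup.subgroupOfEquivOfLe A.hZT).toEquiv
  have hZpos : 0 < Nat.card A.Z := Nat.card_pos
  have hrangecard : Nat.card ψ.range = Nat.card A.Z := by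
    have : Nat.card A.Z * Nat.card A.Z = Nat.card ψ.range * Nat.card A.Z := by
      rw [A.hcard, hlag, hq, hkerZ]
    exact (Nat.mul_left_cancel hZpos (by rw [mul_comm (Nat.card A.Z), this, mul_comm])).symm
  have hrangeZ : ψ.range = A.Z := by
    apply subgroup_eq_of_le_of_card_le hrange
    rw [hrangecard]
  intro a ha
  rw [← hrangeZ] at ha
  obtain ⟨⟨t, ht⟩, hta⟩ := ha
  refine ⟨t, ht, ?_⟩
  have hta' : (t * y) * (t * y) = a := hta
  have htinv : t⁻¹ = t := A.inv_eq_self ht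
  have hyinv : y⁻¹ = y := inv_eq_of_mul_eq_one_right hy2
  rw [htinv]
  calc t * y * t = ((t * y) * (t * y)) * y⁻¹ := by group
    _ = a * y⁻¹ := by rw [hta']
    _ = a * y := by rw [hyinv]

end Sys

/-- conjugate of a subgroup -/
noncomputable def cj (h : G) (K : Subgroup G) : Subgroup G :=
  K.map (MulAut.conj h).toMonoidHom

theorem mem_cj {h x : G} {K : Subgroup G} : x ∈ cj h K ↔ h⁻¹ * x * h ∈ K := by
  rw [cj, Subgroup.mem_map_equiv]
  simp [MulAut.conj_symm_apply, mul_assoc]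

theorem cj_self_mem {h x : G} {K : Subgroup G} (hx : x ∈ K) : h * x * h⁻¹ ∈ cj h K := by
  rw [mem_cj]; simpa [mul_assoc] using hx

theorem card_cj (h : G) (K : Subgroup G) : Nat.card (cj h K) = Nat.card K :=
  (Nat.card_congr (K.equivMapOfInjective _ (MulAut.conj h).injective).toEquiv).symm

theorem cj_mono (h : G) {K L : Subgroup G} (hKL : K ≤ L) : cj h K ≤ cj h L :=
  Subgroup.map_mono hKL

namespace Sys

/-- conjugate of a system -/
noncomputable def conj (A : Sys G) (h : G) : Sys G where
  S := cj h A.S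
  T := cj h A.T
  Z := cj h A.Z
  hTS := cj_mono h A.hTS
  hZT := cj_mono h A.hZT
  hzc := by
    intro z hz s hs
    rw [mem_cj] at hz hs
    have := A.hzc _ hz _ hs
    have e : (h⁻¹ * z * h) * (h⁻¹ * s * h) = (h⁻¹ * s * h) * (h⁻¹ * z * h) := this
    have := congrArg (fun w => h * w * h⁻¹) e
    simpa [mul_assoc] using this
  hzmem := by
    intro t ht hcomm
    rw [mem_cj] at ht
    rw [mem_cj]
    refine A.hzmem _ ht (fun s hs => ?_)
    have hs' : h * s * h⁻¹ ∈ cj h A.S := cj_self_mem hs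
    have e := hcomm _ hs'
    have := congrArg (fun w => h⁻¹ * w * h) e
    simpa [mul_assoc] using this
  ht2 := by
    intro t ht
    rw [mem_cj] at ht
    have := A.ht2 _ ht
    have := congrArg (fun w => h * w * h⁻¹) this
    simpa [mul_assoc] using this
  htc := by
    intro t ht t' ht'
    rw [mem_cj] at ht ht'
    have := A.htc _ ht _ ht'
    have := congrArg (fun w => h * w * h⁻¹) this
    simpa [mul_assoc] using this
  hcoset := by
    intro s hs hsT σ hσ hσT
    rw [mem_cj] at hs hσ
    rw [mem_cj]
    have hsT' : h⁻¹ * s * h ∉ A.T := fun hc => hsT (by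
      rw [mem_cj]; exact hc)
    have hσT' : h⁻¹ * σ * h ∉ A.T := fun hc => hσT (by rw [mem_cj]; exact hc)
    have := A.hcoset _ hs hsT' _ hσ hσT'
    have e : (h⁻¹ * s * h)⁻¹ * (h⁻¹ * σ * h) = h⁻¹ * (s⁻¹ * σ) * h := by group
    rw [e] at this
    exact this
  hcard := by rw [card_cj, card_cj, A.hcard]

@[simp] theorem conj_S (A : Sys G) (h : G) : (A.conj h).S = cj h A.S := rfl
@[simp] theorem conj_T (A : Sys G) (h : G) : (A.conj h).T = cj h A.T := rfl
@[simp] theorem conj_Z (A : Sys G) (h : G) : (A.conj h).Z = cj h A.Z := rfl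

end Sys

theorem isPGroup_two_of_invol {K : Subgroup G} (hK : ∀ k ∈ K, k * k = 1) :
    IsPGroup 2 K := by
  intro q
  refine ⟨1, ?_⟩
  have : ((q : G)) * q = 1 := hK q q.2
  have : (q : G) ^ (2 ^ 1) = 1 := by
    have e : (2:ℕ) ^ 1 = 2 := by norm_num
    rw [e, pow_two, this]
  exact Subtype.ext (by simpa using this)

/-- conjugation periodicity helper -/
theorem conj_period {k a ζ : G} (hka : k * a * k⁻¹ = a)
    (h2 : k ^ 2 * ζ * (k ^ 2)⁻¹ = a * ζ) (ha2 : a * a = 1) :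
    ∀ j : ℕ, k ^ (4 * j + 2) * ζ * (k ^ (4 * j + 2))⁻¹ = a * ζ := by
  have cc : ∀ (m n : ℕ) (x : G), k ^ m * (k ^ n * x * (k ^ n)⁻¹) * (k ^ m)⁻¹
      = k ^ (m + n) * x * (k ^ (m + n))⁻¹ := by
    intro m n x; rw [pow_add]; group
  have hka' : ∀ m : ℕ, k ^ m * a * (k ^ m)⁻¹ = a := by
    intro m
    induction m with
    | zero => simp
    | succ i ih =>
      have : k ^ (1 + i) * a * (k ^ (1 + i))⁻¹ = a := by
        rw [← cc 1 i a, ih, pow_one, hka]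
      rwa [Nat.add_comm 1 i] at this
  have h4 : k ^ 4 * ζ * (k ^ 4)⁻¹ = ζ := by
    have : k ^ 2 * (k ^ 2 * ζ * (k ^ 2)⁻¹) * (k ^ 2)⁻¹ = k ^ 4 * ζ * (k ^ 4)⁻¹ := cc 2 2 ζ
    rw [h2] at this
    rw [← this]
    have e : k ^ 2 * (a * ζ) * (k ^ 2)⁻¹ = (k ^ 2 * a * (k ^ 2)⁻¹) * (k ^ 2 * ζ * (k ^ 2)⁻¹) := by
      group
    rw [e, hka' 2, h2, ← mul_assoc, ha2, one_mul]
  intro j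
  induction j with
  | zero => simpa using h2
  | succ i ih =>
    have e1 : 4 * (i + 1) + 2 = 4 + (4 * i + 2) := by ring
    rw [e1, ← cc 4 (4 * i + 2) ζ, ih]
    have e : k ^ 4 * (a * ζ) * (k ^ 4)⁻¹ = (k ^ 4 * a * (k ^ 4)⁻¹) * (k ^ 4 * ζ * (k ^ 4)⁻¹) := by
      group
    rw [e, hka' 4, h4]


variable [Finite G]

instance : Fact (Nat.Prime 2) := ⟨Nat.prime_two⟩

theorem conj_into_sylow (N : Subgroup G) (S₀ : Sylow 2 G) (hS₀N : (S₀ : Subgroup G) ≤ N)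
    {σ : G} (hσN : σ ∈ N) (hσp : IsPGroup 2 (Subgroup.zpowers σ)) :
    ∃ n ∈ N, n * σ * n⁻¹ ∈ (S₀ : Subgroup G) := by
  obtain ⟨Q₅, hQ₅⟩ := (hσp.comap_subtype (K := N)).exists_le_sylow
  obtain ⟨ν, hν⟩ := MulAction.exists_smul_eq (↥N) Q₅ (S₀.subtype hS₀N)
  refine ⟨(ν : G), ν.2, ?_⟩
  have hσQ : (⟨σ, hσN⟩ : ↥N) ∈ Q₅ :=
    hQ₅ (Subgroup.mem_comap.2 (Subgroup.mem_zpowers σ))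
  have hsm : (MulAut.conj ν) • (⟨σ, hσN⟩ : ↥N) ∈ (MulAut.conj ν) • Q₅.toSubgroup :=
    Subgroup.smul_mem_pointwise_smul _ _ _ hσQ
  have heq : (MulAut.conj ν) • Q₅.toSubgroup = ((S₀.subtype hS₀N) : Subgroup ↥N) := by
    rw [← hν]; rfl
  rw [heq, Sylow.coe_subtype, Subgroup.mem_subgroupOf] at hsm
  have e : ((MulAut.conj ν • (⟨σ, hσN⟩ : ↥N) : ↥N) : G) = (ν : G) * σ * (ν : G)⁻¹ := by
    simp only [MulAut.smul_def, MulAut.conj_apply]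
    push_cast
    rfl
  rwa [e] at hsm

set_option maxHeartbeats 2000000 in
theorem no_fusion (A : Sys G) (S₀ : Sylow 2 G) (hS₀ : (S₀ : Subgroup G) = A.S)
    (hZ3 : 3 ≤ Nat.card A.Z)
    {x yy g : G} (hx : x ∈ A.T) (hyeq : yy = g * x * g⁻¹) (hyS : yy ∈ A.S)
    (hyT : yy ∉ A.T) : False := by
  classical
  have hZpos : 0 < Nat.card A.Z := Nat.card_pos
  have hy2 : yy * yy = 1 := by
    rw [hyeq]
    have : x * x = 1 := A.ht2 x hx
    calc g * x * g⁻¹ * (g * x * g⁻¹) = g * (x * x) * g⁻¹ := by group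
      _ = 1 := by rw [this]; group
  set DD := A.D hyS hyT hy2 with hDD
  set H := Subgroup.centralizer ({yy} : Set G) with hHdef
  have hmemH : ∀ c : G, c * yy = yy * c → c ∈ H := by
    intro c hc
    rw [hHdef, Subgroup.mem_centralizer_iff]
    rintro w rfl1
    simp only [Set.mem_singleton_iff] at rfl1
    subst rfl1
    rw [hc]
  have hDDH : DD ≤ H := by
    intro d hd
    exact hmemH d (A.D_comm hyS hyT hy2 d hd yy (A.y_mem_D hyS hyT hy2))
  have hTgH : cj g A.T ≤ H := by
    intro τ hτ
    rw [mem_cj] at hτ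
    apply hmemH
    rw [hyeq]
    set t₀ := g⁻¹ * τ * g with ht₀
    have hτeq : τ = g * t₀ * g⁻¹ := by rw [ht₀]; group
    rw [hτeq]
    have hc : t₀ * x = x * t₀ := A.htc t₀ hτ x hx
    calc g * t₀ * g⁻¹ * (g * x * g⁻¹) = g * (t₀ * x) * g⁻¹ := by group
      _ = g * (x * t₀) * g⁻¹ := by rw [hc]
      _ = g * x * g⁻¹ * (g * t₀ * g⁻¹) := by group
  -- Sylow 2-subgroup of H containing DD
  have hDDinv : ∀ k ∈ DD, k * k = 1 := A.D_inv hyS hyT hy2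
  have hDDp : IsPGroup 2 DD := isPGroup_two_of_invol hDDinv
  obtain ⟨Q, hQ⟩ := (hDDp.comap_subtype (K := H)).exists_le_sylow
  set P₀ := Q.toSubgroup.map H.subtype with hP₀def
  have hDDP₀ : DD ≤ P₀ := by
    intro d hd
    exact ⟨⟨d, hDDH hd⟩, hQ (by simpa [Subgroup.mem_comap, Subgroup.mem_subgroupOf] using hd), rfl⟩
  have hP₀H : P₀ ≤ H := Subgroup.map_subtype_le _
  have hP₀p : IsPGroup 2 P₀ := Q.isPGroup'.map _
  have hcardP₀ : Nat.card Q = Nat.card P₀ :=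
    Nat.card_congr (Q.toSubgroup.equivMapOfInjective _ (Subtype.coe_injective)).toEquiv
  -- |T| ≤ |P₀|
  have hTleP₀ : Nat.card A.T ≤ Nat.card P₀ := by
    have h1 : IsPGroup 2 (cj g A.T) := isPGroup_two_of_invol ((A.conj g).ht2)
    obtain ⟨Q₂, hQ₂⟩ := (h1.comap_subtype (K := H)).exists_le_sylow
    have e1 : Nat.card ((cj g A.T).comap H.subtype) = Nat.card (cj g A.T) := by
      have : (cj g A.T).comap H.subtype = (cj g A.T).subgroupOf H := rfl
      rw [this]
      exact Nat.card_congr (Subgroup.subgroupOfEquivOfLe hTgH).toEquiv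
    have e2 : Nat.card ((cj g A.T).comap H.subtype) ≤ Nat.card Q₂ :=
      Subgroup.card_le_of_le hQ₂
    have e3 : Nat.card Q₂ = Nat.card Q := by
      rw [Sylow.card_eq_multiplicity, Sylow.card_eq_multiplicity]
    calc Nat.card A.T = Nat.card (cj g A.T) := (card_cj g A.T).symm
      _ = Nat.card ((cj g A.T).comap H.subtype) := e1.symm
      _ ≤ Nat.card Q₂ := e2
      _ = Nat.card P₀ := by rw [e3, hcardP₀]
  -- Sylow 2-subgroup S₁ of G containing P₀
  obtain ⟨S₁, hP₀S₁⟩ := hP₀p.exists_le_sylow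
  obtain ⟨h, hh⟩ := MulAction.exists_smul_eq G S₀ S₁
  set B := A.conj h with hB
  have hS₁B : (S₁ : Subgroup G) = B.S := by
    rw [← hh, hB]
    ext w
    rw [Sylow.coe_subgroup_smul, Subgroup.mem_pointwise_smul_iff_inv_smul_mem]
    rw [Sys.conj_S, mem_cj, hS₀]
    rfl
  have hyS₁ : yy ∈ B.S := by
    rw [← hS₁B]; exact hP₀S₁ (hDDP₀ (A.y_mem_D hyS hyT hy2))
  have hcardZB : Nat.card B.Z = Nat.card A.Z := card_cj h A.Z
  have hcardTB : Nat.card B.T = Nat.card A.T := card_cj h A.T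
  by_cases hyT₁ : yy ∈ B.T
  case neg =>
    -- y outside both: P₀ is too big to centralize y
    have hP₀D : P₀ ≤ B.D hyS₁ hyT₁ hy2 := by
      intro p hp
      have hpS₁ : p ∈ B.S := by rw [← hS₁B]; exact hP₀S₁ hp
      have hpH : p ∈ H := hP₀H hp
      have hpy : p * yy = yy * p := by
        rw [hHdef, Subgroup.mem_centralizer_iff] at hpH
        exact (hpH yy (Set.mem_singleton yy)).symm
      exact B.mem_D_of_commute hyS₁ hyT₁ hy2 hpS₁ hpy
    have c1 : Nat.card A.T ≤ Nat.card (B.D hyS₁ hyT₁ hy2) :=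
      le_trans hTleP₀ (Subgroup.card_le_of_le hP₀D)
    rw [B.card_D hyS₁ hyT₁ hy2, hcardZB, ← A.hcard] at c1
    nlinarith [hZ3, hZpos]
  case pos =>
    by_cases hZsub : ∀ z ∈ A.Z, z ∈ B.T
    case pos =>
      -- Subcase: DD ≤ B.T.  Conjugate B.T into S inside N_G(DD), deduce T central.
      have hDT₁ : DD ≤ B.T := by
        rintro d (hd | ⟨z, hz, rfl⟩)
        · exact hZsub d hd
        · exact mul_mem (hZsub z hz) hyT₁
      set N := Subgroup.normalizer (DD : Set G) with hN
      have hSN : A.S ≤ N := A.S_le_normalizer_D hyS hyT hy2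
      have hT₁N : B.T ≤ N := by
        intro t ht
        have hcent : ∀ w ∈ DD, t * w * t⁻¹ = w := by
          intro w hw
          have : t * w = w * t := B.htc t ht w (hDT₁ hw)
          rw [this]; group
        rw [Subgroup.mem_normalizer_iff]
        intro d
        constructor
        · intro hdD
          rw [hcent d hdD]; exact hdD
        · intro hdD
          have hcomm : t * (t * d * t⁻¹) = (t * d * t⁻¹) * t := B.htc t ht _ (hDT₁ hdD)
          have e : d = t⁻¹ * (t * d * t⁻¹) * t := by group
          rw [e]
          have e2 : t⁻¹ * (t * d * t⁻¹) * t = t * d * t⁻¹ := by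
            rw [show t⁻¹ * (t * d * t⁻¹) * t = t⁻¹ * ((t * d * t⁻¹) * t) from by group,
              ← hcomm]
            group
          rw [e2]; exact hdD
      have hS₀N : (S₀ : Subgroup G) ≤ N := by rw [hS₀]; exact hSN
      set SN : Sylow 2 (↥N) := S₀.subtype hS₀N with hSNdef
      have hT₁p : IsPGroup 2 (B.T.comap N.subtype) :=
        (isPGroup_two_of_invol B.ht2).comap_subtype
      obtain ⟨Q₃, hQ₃⟩ := hT₁p.exists_le_sylow
      obtain ⟨ν, hν⟩ := MulAction.exists_smul_eq (↥N) Q₃ SN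
      set n : G := (ν : G) with hndef
      have hnN : n ∈ N := ν.2
      have hKS : cj n B.T ≤ A.S := by
        intro k hk
        rw [mem_cj] at hk
        have hτN : n⁻¹ * k * n ∈ N := hT₁N hk
        have hQm : (⟨n⁻¹ * k * n, hτN⟩ : ↥N) ∈ Q₃ :=
          hQ₃ (by simpa [Subgroup.mem_comap, Subgroup.mem_subgroupOf] using hk)
        have hsm : (MulAut.conj ν) • (⟨n⁻¹ * k * n, hτN⟩ : ↥N)
            ∈ (MulAut.conj ν) • Q₃.toSubgroup :=
          Subgroup.smul_mem_pointwise_smul _ _ _ hQm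
        have : (MulAut.conj ν) • Q₃.toSubgroup = (SN : Subgroup ↥N) := by
          rw [← hν]; rfl
        rw [this] at hsm
        have hmem : ((MulAut.conj ν • (⟨n⁻¹ * k * n, hτN⟩ : ↥N) : ↥N) : G) ∈ (S₀ : Subgroup G) := by
          have := hsm
          rw [hSNdef, Sylow.coe_subtype] at this
          exact this
        have e : ((MulAut.conj ν • (⟨n⁻¹ * k * n, hτN⟩ : ↥N) : ↥N) : G) = k := by
          simp only [MulAut.smul_def, MulAut.conj_apply]
          push_cast
          rw [hndef]
          group
        rw [e, hS₀] at hmem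
        exact hmem
      have hKT : cj n B.T ≤ A.T := by
        by_contra hc
        rw [SetLike.not_le_iff_exists] at hc
        obtain ⟨α, hαK, hαT⟩ := hc
        have hαS : α ∈ A.S := hKS hαK
        have hα2 : α * α = 1 := (B.conj n).ht2 α hαK
        have hKD : cj n B.T ≤ A.D hαS hαT hα2 := by
          intro k hk
          exact A.mem_D_of_commute hαS hαT hα2 (hKS hk) ((B.conj n).htc k hk α hαK)
        have c1 : Nat.card (cj n B.T) ≤ Nat.card (A.D hαS hαT hα2) :=
          Subgroup.card_le_of_le hKD
        rw [A.card_D hαS hαT hα2, card_cj, hcardTB, ← A.hcard] at c1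
        nlinarith [hZ3, hZpos]
      have hKeq : cj n B.T = A.T := by
        apply subgroup_eq_of_le_of_card_le hKT
        rw [card_cj, hcardTB]
      have hTZ : A.T ≤ A.Z := by
        intro t htT
        have htK : t ∈ cj n B.T := by rw [hKeq]; exact htT
        rw [mem_cj] at htK
        set τ := n⁻¹ * t * n with hτdef
        have hdDD : n⁻¹ * yy * n ∈ DD := by
          have h2 := (Subgroup.mem_normalizer_iff.1 (inv_mem hnN)) yy
          have := h2.1 (A.y_mem_D hyS hyT hy2)
          simpa using this
        set d := n⁻¹ * yy * n with hddef
        have hdT₁ : d ∈ B.T := hDT₁ hdDD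
        have hcomm : τ * d = d * τ := B.htc τ htK d hdT₁
        have e1 : t * yy * t⁻¹ = n * (τ * d * τ⁻¹) * n⁻¹ := by
          rw [hτdef, hddef]; group
        have e2 : τ * d * τ⁻¹ = d := by rw [hcomm]; group
        have e3 : n * d * n⁻¹ = yy := by rw [hddef]; group
        have e4 : t * yy * t⁻¹ = yy := by rw [e1, e2, e3]
        have e5 : yy * t = t * yy := by
          have := congrArg (fun w => w * t) e4
          simpa [mul_assoc] using this.symm
        exact A.mem_Z_of_commute hyS hyT htT e5
      have c2 : Nat.card A.T ≤ Nat.card A.Z := Subgroup.card_le_of_le hTZ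
      rw [← A.hcard] at c2
      nlinarith [hZ3, hZpos]
    case neg =>
      push_neg at hZsub
      obtain ⟨ζ, hζZ, hζT₁⟩ := hZsub
      have hζS : ζ ∈ A.S := A.hZS hζZ
      have hζS₁ : ζ ∈ B.S := by
        rw [← hS₁B]; exact hP₀S₁ (hDDP₀ (A.Z_le_D hyS hyT hy2 hζZ))
      have hζ2 : ζ * ζ = 1 := A.ht2 ζ (A.hZT hζZ)
      have hyζ : ζ * yy = yy * ζ := A.hzc ζ hζZ yy hyS
      have hyZ₁ : yy ∈ B.Z := B.mem_Z_of_commute hζS₁ hζT₁ hyT₁ hyζ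
      set DD₁ := B.D hζS₁ hζT₁ hζ2 with hDD₁
      have hDDle : DD ≤ DD₁ := by
        intro d hd
        have hdS₁ : d ∈ B.S := by rw [← hS₁B]; exact hP₀S₁ (hDDP₀ hd)
        have hdS : d ∈ A.S := A.D_le_S hyS hyT hy2 hd
        have hcz : ζ * d = d * ζ := A.hzc ζ hζZ d hdS
        exact B.mem_D_of_commute hζS₁ hζT₁ hζ2 hdS₁ hcz.symm
      have hDDeq : DD = DD₁ := by
        apply subgroup_eq_of_le_of_card_le hDDle
        rw [A.card_D hyS hyT hy2, B.card_D hζS₁ hζT₁ hζ2, hcardZB]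
      have hZ₁DD : B.Z ≤ DD := by rw [hDDeq]; exact B.Z_le_D hζS₁ hζT₁ hζ2
      -- find a nontrivial common element of A.Z and B.Z
      have hLne : ∃ a, a ∈ A.Z ∧ a ∈ B.Z ∧ a ≠ 1 := by
        by_contra hcon
        push_neg at hcon
        have hinj : Function.Injective (fun p : A.Z × B.Z =>
            (⟨(p.1 : G) * p.2, mul_mem (A.Z_le_D hyS hyT hy2 p.1.2)
              (hZ₁DD p.2.2)⟩ : DD)) := by
          rintro ⟨z, w⟩ ⟨z', w'⟩ hzw
          simp only [Subtype.mk_eq_mk] at hzw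
          have e : (z' : G)⁻¹ * z = (w' : G) * (w : G)⁻¹ := by
            calc (z' : G)⁻¹ * z = (z' : G)⁻¹ * ((z : G) * w) * (w : G)⁻¹ := by group
              _ = (z' : G)⁻¹ * ((z' : G) * w') * (w : G)⁻¹ := by rw [hzw]
              _ = (w' : G) * (w : G)⁻¹ := by group
          have m1 : (z' : G)⁻¹ * z ∈ A.Z := mul_mem (inv_mem z'.2) z.2
          have m2 : (z' : G)⁻¹ * z ∈ B.Z := by rw [e]; exact mul_mem w'.2 (inv_mem w.2)
          have h1 : (z' : G)⁻¹ * z = 1 := hcon _ m1 m2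
          have hz : (z : G) = z' := (inv_mul_eq_one.mp h1).symm
          have hw : (w : G) = w' := by
            rw [hz] at hzw
            exact mul_left_cancel hzw
          exact Prod.ext (Subtype.ext hz) (Subtype.ext hw)
        have hcle : Nat.card (A.Z × B.Z) ≤ Nat.card DD :=
          Nat.card_le_card_of_injective _ hinj
        rw [Nat.card_prod, hcardZB, A.card_D hyS hyT hy2] at hcle
        nlinarith [hZ3, hZpos]
      obtain ⟨a, haZ, haZ₁, ha1⟩ := hLne
      obtain ⟨u, huT, hu⟩ := A.hsurj hyS hyT hy2 a haZ
      obtain ⟨w, hwT₁, hw⟩ := B.hsurj hζS₁ hζT₁ hζ2 yy hyZ₁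
      have huζ : u * ζ = ζ * u := A.htc u huT ζ (A.hZT hζZ)
      have hua : u * a = a * u := A.htc u huT a (A.hZT haZ)
      have hwy : w * yy = yy * w := B.htc w hwT₁ yy hyT₁
      have hwa : w * a = a * w := B.htc w hwT₁ a (B.hZT haZ₁)
      have hay : a * yy = yy * a := A.hzc a haZ yy hyS
      have ha2 : a * a = 1 := A.ht2 a (A.hZT haZ)
      set k := u * w with hk
      have c1 : k * yy * k⁻¹ = a * yy := by
        have e1 : k * yy * k⁻¹ = u * (w * yy * w⁻¹) * u⁻¹ := by rw [hk]; group
        have e2 : w * yy * w⁻¹ = yy := by rw [hwy]; group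
        rw [e1, e2, hu]
      have c2 : k * ζ * k⁻¹ = a * (yy * ζ) := by
        have e1 : k * ζ * k⁻¹ = u * (w * ζ * w⁻¹) * u⁻¹ := by rw [hk]; group
        rw [e1, hw]
        have e2 : u * (yy * ζ) * u⁻¹ = (u * yy * u⁻¹) * (u * ζ * u⁻¹) := by group
        have e3 : u * ζ * u⁻¹ = ζ := by rw [huζ]; group
        rw [e2, e3, hu]
        group
      have c3 : k * a * k⁻¹ = a := by
        have e1 : k * a * k⁻¹ = u * (w * a * w⁻¹) * u⁻¹ := by rw [hk]; group
        have e2 : w * a * w⁻¹ = a := by rw [hwa]; group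
        have e3 : u * a * u⁻¹ = a := by rw [hua]; group
        rw [e1, e2, e3]
      have c4 : k ^ 2 * ζ * (k ^ 2)⁻¹ = a * ζ := by
        have e0 : k ^ 2 * ζ * (k ^ 2)⁻¹ = k * (k * ζ * k⁻¹) * k⁻¹ := by
          rw [pow_two]; group
        rw [e0, c2]
        have e1 : k * (a * (yy * ζ)) * k⁻¹
            = (k * a * k⁻¹) * ((k * yy * k⁻¹) * (k * ζ * k⁻¹)) := by group
        rw [e1, c3, c1, c2]
        have e2 : yy * a = a * yy := hay.symm
        calc a * ((a * yy) * (a * (yy * ζ))) = (a * a) * ((yy * a) * yy) * ζ := by group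
          _ = (a * a) * ((a * yy) * yy) * ζ := by rw [e2]
          _ = (a * a) * (a * (yy * yy)) * ζ := by group
          _ = a * ζ := by rw [ha2, hy2]; group
      have hper := conj_period c3 c4 ha2
      -- 2-part of k inside the normalizer of DD
      have hSN' : A.S ≤ Subgroup.normalizer (DD : Set G) := A.S_le_normalizer_D hyS hyT hy2
      have hS₁N' : B.S ≤ Subgroup.normalizer (DD : Set G) := by
        have hh2 := B.S_le_normalizer_D hζS₁ hζT₁ hζ2
        rw [← hDD₁, ← hDDeq] at hh2
        exact hh2
      have hkN' : k ∈ Subgroup.normalizer (DD : Set G) := by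
        rw [hk]
        exact mul_mem (hSN' (A.hTS huT)) (hS₁N' (B.hTS hwT₁))
      set r := ordCompl[2] (orderOf k) with hr
      have hk0 : orderOf k ≠ 0 := (orderOf_pos k).ne'
      have hrodd : ¬ 2 ∣ r := Nat.not_dvd_ordCompl Nat.prime_two hk0
      have hrdvd : r ∣ orderOf k := Nat.ordCompl_dvd _ _
      set σ := k ^ r with hσ
      have hσord : orderOf σ = 2 ^ (orderOf k).factorization 2 := by
        rw [hσ, orderOf_pow, Nat.gcd_eq_right hrdvd, hr]
        have hmul := Nat.ordProj_mul_ordCompl_eq_self (orderOf k) 2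
        have hrpos : 0 < ordCompl[2] (orderOf k) := Nat.ordCompl_pos 2 hk0
        calc orderOf k / ordCompl[2] (orderOf k)
            = (2 ^ (orderOf k).factorization 2) * ordCompl[2] (orderOf k) /
              ordCompl[2] (orderOf k) := by rw [hmul]
          _ = 2 ^ (orderOf k).factorization 2 := Nat.mul_div_cancel _ hrpos
      have hσN' : σ ∈ Subgroup.normalizer (DD : Set G) := by rw [hσ]; exact pow_mem hkN' r
      have hzp : IsPGroup 2 (Subgroup.zpowers σ) := by
        apply IsPGroup.of_card (n := (orderOf k).factorization 2)
        rw [Nat.card_zpowers, hσord]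
      have hS₀N' : (S₀ : Subgroup G) ≤ Subgroup.normalizer (DD : Set G) := by rw [hS₀]; exact hSN'
      obtain ⟨n, hnN', hsS'⟩ := conj_into_sylow (Subgroup.normalizer (DD : Set G)) S₀ hS₀N' hσN' hzp
      have hsS : n * σ * n⁻¹ ∈ A.S := by rw [hS₀] at hsS'; exact hsS'
      set s : G := n * σ * n⁻¹ with hs
      have hs2Z : s * s ∈ A.Z := A.sq_mem_Z hsS
      have hζDD : ζ ∈ DD := A.Z_le_D hyS hyT hy2 hζZ
      have hdDD : n * ζ * n⁻¹ ∈ DD := (Subgroup.mem_normalizer_iff.1 hnN' ζ).1 hζDD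
      have hdS : n * ζ * n⁻¹ ∈ A.S := A.D_le_S hyS hyT hy2 hdDD
      have hcd : (s * s) * (n * ζ * n⁻¹) = (n * ζ * n⁻¹) * (s * s) :=
        A.hzc _ hs2Z _ hdS
      have hfix : σ ^ 2 * ζ * (σ ^ 2)⁻¹ = ζ := by
        have e1 : σ ^ 2 = n⁻¹ * (s * s) * n := by rw [hs, pow_two]; group
        rw [e1]
        calc n⁻¹ * (s * s) * n * ζ * (n⁻¹ * (s * s) * n)⁻¹
            = n⁻¹ * ((s * s) * (n * ζ * n⁻¹) * (s * s)⁻¹) * n := by group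
          _ = n⁻¹ * ((n * ζ * n⁻¹) * ((s * s) * (s * s)⁻¹)) * n := by rw [hcd]; group
          _ = ζ := by group
      obtain ⟨j, hj⟩ : ∃ j, r = 2 * j + 1 := by
        rcases Nat.even_or_odd r with he | ho
        · exact absurd he.two_dvd hrodd
        · obtain ⟨j, hj⟩ := ho; exact ⟨j, hj⟩
      have hmove : σ ^ 2 * ζ * (σ ^ 2)⁻¹ = a * ζ := by
        have e : σ ^ 2 = k ^ (4 * j + 2) := by
          rw [hσ, ← pow_mul]
          congr 1
          rw [hj]; ring
        rw [e]
        exact hper j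
      rw [hfix] at hmove
      exact ha1 (by
        have := congrArg (fun g => g * ζ⁻¹) hmove
        simpa [mul_assoc] using this.symm)

end SC4


/-- A subgroup is *elementary abelian* for the prime `p` if it is commutative and every
element `x` satisfies `x ^ p = 1`. -/
def IsElementaryAbelian (p : ℕ) {G : Type*} [Group G] (A : Subgroup G) : Prop :=
  (∀ a b : A, a * b = b * a) ∧ ∀ a : A, a ^ p = 1

/-- Let `G` be a finite group, `S` a Sylow `2`-subgroup and `T ≤ S` with
(i) `T` elementary abelian of index `2` in `S`, (ii) `|C_T(S)|² = |T|`.  Then either `|T| = 4`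
or `T` is strongly closed in `S` with respect to `G`. -/
theorem strongly_closed_or_card_four
    {G : Type*} [Group G] [Finite G] (S : Sylow 2 G) (T : Subgroup G)
    (hTS : T ≤ (S : Subgroup G))
    (hea : IsElementaryAbelian 2 T)
    (hidx : T.relIndex (S : Subgroup G) = 2)
    (hcent : Nat.card ↥(T ⊓ Subgroup.centralizer ((S : Subgroup G) : Set G)) ^ 2 =
      Nat.card ↥T) :
    Nat.card ↥T = 4 ∨
      ∀ x ∈ T, ∀ g : G, g * x * g⁻¹ ∈ (S : Subgroup G) → g * x * g⁻¹ ∈ T := by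
  classical
  by_cases h4 : Nat.card ↥T = 4
  · exact Or.inl h4
  right
  intro x hx g hgS
  set Z := T ⊓ Subgroup.centralizer ((S : Subgroup G) : Set G) with hZdef
  have ht2 : ∀ t ∈ T, t * t = 1 := by
    intro t ht
    have := hea.2 ⟨t, ht⟩
    have h2 : ((⟨t, ht⟩ : T) : G) ^ 2 = 1 := by
      rw [← SubgroupClass.coe_pow, this]; rfl
    simpa [pow_two] using h2
  by_cases hT1 : Nat.card ↥T = 1
  · have hTbot : T = ⊥ := Subgroup.card_eq_one.1 hT1
    have : x = 1 := by rw [hTbot] at hx; simpa using hx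
    rw [this]
    simpa using one_mem T
  -- build the system
  have hcard : Nat.card ↥Z * Nat.card ↥Z = Nat.card ↥T := by
    rw [← hcent, pow_two]
  have hZ3 : 3 ≤ Nat.card ↥Z := by
    have hZpos : 0 < Nat.card ↥Z := Nat.card_pos
    by_contra hlt
    push_neg at hlt
    have h12 : Nat.card ↥Z = 1 ∨ Nat.card ↥Z = 2 := by omega
    rcases h12 with h | h
    · rw [h] at hcard; exact hT1 (by omega)
    · rw [h] at hcard; exact h4 (by omega)
  set A : SC4.Sys G := {
    S := (S : Subgroup G)
    T := T
    Z := Z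
    hTS := hTS
    hZT := inf_le_left
    hzc := by
      intro z hz s hs
      rw [hZdef, Subgroup.mem_inf, Subgroup.mem_centralizer_iff] at hz
      exact (hz.2 s hs).symm
    hzmem := by
      intro t ht hcomm
      rw [hZdef, Subgroup.mem_inf, Subgroup.mem_centralizer_iff]
      exact ⟨ht, fun s hs => (hcomm s hs).symm⟩
    ht2 := ht2
    htc := by
      intro t ht t' ht'
      have := hea.1 ⟨t, ht⟩ ⟨t', ht'⟩
      exact congrArg Subtype.val this
    hcoset := by
      intro s hs hsT σ hσ hσT
      have hidx' : (T.subgroupOf (S : Subgroup G)).index = 2 := hidx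
      have := Subgroup.mul_mem_iff_of_index_two hidx'
        (a := (⟨s, hs⟩ : (S : Subgroup G))⁻¹) (b := (⟨σ, hσ⟩ : (S : Subgroup G)))
      have hiff : ((⟨s, hs⟩ : (S : Subgroup G))⁻¹ ∈ T.subgroupOf (S : Subgroup G) ↔
          (⟨σ, hσ⟩ : (S : Subgroup G)) ∈ T.subgroupOf (S : Subgroup G)) := by
        constructor
        · intro hmem
          exact absurd (by simpa [Subgroup.mem_subgroupOf] using inv_mem hmem) hsT
        · intro hmem
          exact absurd (by simpa [Subgroup.mem_subgroupOf] using hmem) hσT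
      have hmem := this.2 hiff
      simpa [Subgroup.mem_subgroupOf] using hmem
    hcard := hcard } with hA
  by_cases hyT : g * x * g⁻¹ ∈ T
  · exact hyT
  exfalso
  exact SC4.no_fusion A S rfl hZ3 hx rfl hgS hyT
end

section
/- Let G be a finite group, S a Sylow 2-subgroup of G, T a subgroup of S, K a subgroup of N_G(T), and Z = Z(T). Assume: (i) |S : T| = 2 and |Z : C_Z(S)| = 2; (ii) |K| is odd, C_Z(K) ≠ Z, and the only K-invariant subgroups X of Z with C_Z(K) ≤ X ≤ Z are C_Z(K) and Z (K acts irreducibly on Z/C_Z(K) by conjugation); (iii) C_Z(K) ∩ C_Z(S) = 1. Then |Z| = 4. -/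
set_option linter.unusedSectionVars false
set_option linter.unusedVariables false
namespace StmtFive
variable {V : Type*} [CommGroup V]

def IsTv (τ : MulAut V) (u : V) : Prop :=
  τ ^ 2 = 1 ∧ u ≠ 1 ∧ (∃ z, τ z ≠ z) ∧ ∀ z, τ z = z ∨ τ z = z * u
theorem IsTv.sq {τ : MulAut V} {u : V} (h : IsTv τ u) : τ ^ 2 = 1 := h.1
theorem IsTv.ne_one {τ : MulAut V} {u : V} (h : IsTv τ u) : u ≠ 1 := h.2.1
theorem IsTv.moved {τ : MulAut V} {u : V} (h : IsTv τ u) {z : V} (hz : τ z ≠ z) :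
    τ z = z * u := (h.2.2.2 z).resolve_left hz
theorem IsTv.unique {τ : MulAut V} {u u' : V} (h : IsTv τ u) (h' : IsTv τ u') : u = u' := by
  obtain ⟨z, hz⟩ := h.2.2.1
  exact mul_left_cancel ((h.moved hz).symm.trans (h'.moved hz))
theorem IsTv.apply_apply {τ : MulAut V} {u : V} (h : IsTv τ u) (z : V) : τ (τ z) = z := by
  have := congrArg (fun (f : MulAut V) => f z) h.sq
  simpa [pow_succ, MulAut.mul_apply] using this
theorem IsTv.u_sq {τ : MulAut V} {u : V} (h : IsTv τ u) : u * u = 1 := by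
  obtain ⟨z, hz⟩ := h.2.2.1
  have h1 : τ z = z * u := h.moved hz
  have h2 : τ (z * u) = z := by rw [← h1, h.apply_apply]
  rcases h.2.2.2 (z * u) with h3 | h3
  · exact absurd (mul_left_cancel (a := z) (by simpa using h2.symm.trans h3)) h.ne_one
  · have := h2.symm.trans h3
    simpa [mul_assoc] using this.symm
theorem IsTv.fix_u {τ : MulAut V} {u : V} (h : IsTv τ u) : τ u = u := by
  rcases h.2.2.2 u with h3 | h3
  · exact h3
  · rw [h.u_sq] at h3
    exact absurd (τ.injective (by simpa using h3)) h.ne_one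
theorem IsTv.u_cancel {τ : MulAut V} {u : V} (h : IsTv τ u) (z : V) : u * (u * z) = z := by
  rw [← mul_assoc, h.u_sq, one_mul]

theorem IsTv.inv_eq {τ : MulAut V} {u : V} (h : IsTv τ u) : τ⁻¹ = τ := by
  have := h.sq
  rw [pow_two] at this
  exact (eq_inv_of_mul_eq_one_left this).symm
theorem IsTv.tau_ne_one {τ : MulAut V} {u : V} (h : IsTv τ u) : τ ≠ 1 := by
  obtain ⟨z, hz⟩ := h.2.2.1
  intro hc; rw [hc] at hz; exact hz rfl

-- NEW PART
theorem IsTv.conj {τ : MulAut V} {u : V} (h : IsTv τ u) (a : MulAut V) :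
    IsTv (a * τ * a⁻¹) (a u) := by
  refine ⟨?_, ?_, ?_, ?_⟩
  · rw [conj_pow, h.sq, mul_one, mul_inv_cancel]
  · simpa using fun hc => h.ne_one (a.injective (by simpa using hc))
  · obtain ⟨z, hz⟩ := h.2.2.1
    refine ⟨a z, fun hc => hz ?_⟩
    apply a.injective
    simpa [MulAut.mul_apply] using hc
  · intro z
    rcases h.2.2.2 (a⁻¹ z) with h3 | h3
    · left
      have := congrArg a h3
      simpa [MulAut.mul_apply] using this
    · right
      have := congrArg a h3
      simpa [MulAut.mul_apply, map_mul] using this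

theorem tv_mul_sq_eq_one {τ₁ τ₂ : MulAut V} {u₁ u₂ : V}
    (h1 : IsTv τ₁ u₁) (h2 : IsTv τ₂ u₂) (f12 : τ₁ u₂ = u₂) (f21 : τ₂ u₁ = u₁) :
    (τ₁ * τ₂) ^ 2 = 1 := by
  have key : ∀ z, τ₁ (τ₂ (τ₁ (τ₂ z))) = z := by
    intro z
    rcases h2.2.2.2 z with hA | hA <;> rcases h1.2.2.2 z with hB | hB <;>
      simp only [map_mul, hA, hB, f12, f21, h1.fix_u, h2.fix_u] <;>
      simp [mul_comm, mul_assoc, mul_left_comm, h1.u_sq, h2.u_sq, h1.u_cancel, h2.u_cancel]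
  ext z
  have : ((τ₁ * τ₂) ^ 2) z = τ₁ (τ₂ (τ₁ (τ₂ z))) := by
    simp [pow_two, MulAut.mul_apply]
  simp [this, key z]

variable [Finite V]

theorem order_odd {R : Subgroup (MulAut V)}
    (HK : ∀ x ∈ R, ∀ y ∈ R, x ^ 2 = 1 → y ^ 2 = 1 → Commute x y → x = 1 ∨ y = 1 ∨ x = y)
    {τ₁ τ₂ : MulAut V} (m1 : τ₁ ∈ R) (m2 : τ₂ ∈ R)
    (i1 : τ₁ ^ 2 = 1) (i2 : τ₂ ^ 2 = 1) (n1 : τ₁ ≠ 1) (n2 : τ₂ ≠ 1) :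
    Odd (orderOf (τ₁ * τ₂)) := by
  set ρ := τ₁ * τ₂ with hρ
  by_contra hodd
  rw [Nat.odd_iff] at hodd
  obtain ⟨m, hm⟩ : Even (orderOf ρ) := Nat.even_iff.mpr (by omega)
  have hinv1 : τ₁⁻¹ = τ₁ := by
    rw [pow_two] at i1; exact (eq_inv_of_mul_eq_one_left i1).symm
  have hinv2 : τ₂⁻¹ = τ₂ := by
    rw [pow_two] at i2; exact (eq_inv_of_mul_eq_one_left i2).symm
  have hnpos : 0 < orderOf ρ := orderOf_pos ρ
  have hmpos : 0 < m := by omega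
  have hconj : τ₁ * ρ * τ₁⁻¹ = ρ⁻¹ := by
    rw [hρ, hinv1, mul_inv_rev, hinv1, hinv2]
    calc τ₁ * (τ₁ * τ₂) * τ₁ = (τ₁ * τ₁) * τ₂ * τ₁ := by group
      _ = τ₂ * τ₁ := by rw [← pow_two, i1, one_mul]
  set y := ρ ^ m with hy
  have hy2 : y ^ 2 = 1 := by
    rw [hy, ← pow_mul, show m * 2 = orderOf ρ by omega, pow_orderOf_eq_one]
  have hyinv : y⁻¹ = y := by
    rw [pow_two] at hy2; exact (eq_inv_of_mul_eq_one_left hy2).symm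
  have hyne : y ≠ 1 := by
    intro hc
    have := Nat.le_of_dvd hmpos (orderOf_dvd_of_pow_eq_one (hy ▸ hc))
    omega
  have hconjy : τ₁ * y * τ₁⁻¹ = y⁻¹ := by
    rw [hy, ← conj_pow, hconj, inv_pow]
  have hcomm : Commute τ₁ y := by
    have h2 : τ₁ * y * τ₁⁻¹ = y := by rw [hconjy, hyinv]
    calc τ₁ * y = (τ₁ * y * τ₁⁻¹) * τ₁ := by group
      _ = y * τ₁ := by rw [h2]
  have hyR : y ∈ R := Subgroup.pow_mem R (Subgroup.mul_mem R m1 m2) m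
  rcases HK τ₁ m1 y hyR i1 hy2 hcomm with hc | hc | hc
  · exact n1 hc
  · exact hyne hc
  · have hro2 : ρ ^ 2 = 1 := by
      have hcr : Commute τ₁ ρ := hc ▸ (Commute.pow_right (Commute.refl ρ) m).symm
      have hre : ρ⁻¹ = ρ := by rw [← hconj, hcr.eq]; group
      rw [pow_two]
      nth_rewrite 1 [← hre]
      exact inv_mul_cancel ρ
    have h2 : orderOf ρ ∣ 2 := orderOf_dvd_of_pow_eq_one hro2
    rcases (Nat.dvd_prime Nat.prime_two).mp h2 with ho | ho
    · omega
    have hm1 : m = 1 := by omega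
    have hty : τ₁ = ρ := by rw [hc, hy, hm1, pow_one]
    have : τ₁ * τ₂ = τ₁ * 1 := by rw [mul_one, ← hρ, ← hty]
    exact n2 (mul_left_cancel this)

section Cls
variable {R : Subgroup (MulAut V)} {σ : MulAut V} {u₀ : V}

/-- The conjugacy class of `σ` under `R`. -/
def cls (R : Subgroup (MulAut V)) (σ : MulAut V) : Set (MulAut V) :=
  {τ | ∃ a ∈ R, a * σ * a⁻¹ = τ}

theorem sigma_mem_cls (hσR : σ ∈ R) : σ ∈ cls R σ :=
  ⟨1, R.one_mem, by group⟩

theorem cls_subset_R (hσR : σ ∈ R) {τ : MulAut V} (hτ : τ ∈ cls R σ) : τ ∈ R := by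
  obtain ⟨a, ha, rfl⟩ := hτ
  exact R.mul_mem (R.mul_mem ha hσR) (R.inv_mem ha)

theorem cls_conj {τ : MulAut V} (hτ : τ ∈ cls R σ) {a : MulAut V} (ha : a ∈ R) :
    a * τ * a⁻¹ ∈ cls R σ := by
  obtain ⟨b, hb, rfl⟩ := hτ
  exact ⟨a * b, R.mul_mem ha hb, by group⟩

open Classical in
/-- The center of a transvection-like automorphism. -/
noncomputable def ctr (τ : MulAut V) : V :=
  if h : ∃ u, IsTv τ u then h.choose else 1

open Classical in
theorem ctr_eq {τ : MulAut V} {u : V} (h : IsTv τ u) : ctr τ = u := by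
  have hex : ∃ u, IsTv τ u := ⟨u, h⟩
  simp only [ctr, dif_pos hex]
  exact hex.choose_spec.unique h

theorem cls_tv (hTv : IsTv σ u₀) {τ : MulAut V} (hτ : τ ∈ cls R σ) : IsTv τ (ctr τ) := by
  obtain ⟨a, ha, rfl⟩ := hτ
  have := hTv.conj a
  rwa [ctr_eq this]

theorem ctr_conj (hTv : IsTv σ u₀) {τ : MulAut V} (hτ : τ ∈ cls R σ) (a : MulAut V) :
    ctr (a * τ * a⁻¹) = a (ctr τ) :=
  ctr_eq ((cls_tv hTv hτ).conj a)

/-- P0: products of two distinct class elements is not an involution. -/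
theorem cls_mul_sq_ne_one
    (HK : ∀ x ∈ R, ∀ y ∈ R, x ^ 2 = 1 → y ^ 2 = 1 → Commute x y → x = 1 ∨ y = 1 ∨ x = y)
    (hσR : σ ∈ R) (hTv : IsTv σ u₀) {τ₁ τ₂ : MulAut V}
    (h1 : τ₁ ∈ cls R σ) (h2 : τ₂ ∈ cls R σ) (hne : τ₁ ≠ τ₂) :
    (τ₁ * τ₂) ^ 2 ≠ 1 := by
  intro hsq
  have hodd := order_odd HK (cls_subset_R hσR h1) (cls_subset_R hσR h2)
    (cls_tv hTv h1).sq (cls_tv hTv h2).sq (cls_tv hTv h1).tau_ne_one (cls_tv hTv h2).tau_ne_one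
  have hdvd : orderOf (τ₁ * τ₂) ∣ 2 := orderOf_dvd_of_pow_eq_one hsq
  rcases (Nat.dvd_prime Nat.prime_two).mp hdvd with ho | ho
  · have h1eq : τ₁ * τ₂ = 1 := orderOf_eq_one_iff.mp ho
    exact hne ((eq_inv_of_mul_eq_one_left h1eq).trans (cls_tv hTv h2).inv_eq)
  · rw [ho] at hodd
    have := Nat.odd_iff.mp hodd
    omega

/-- P2: class elements with equal centers are equal. -/
theorem ctr_inj
    (HK : ∀ x ∈ R, ∀ y ∈ R, x ^ 2 = 1 → y ^ 2 = 1 → Commute x y → x = 1 ∨ y = 1 ∨ x = y)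
    (hσR : σ ∈ R) (hTv : IsTv σ u₀) {τ₁ τ₂ : MulAut V}
    (h1 : τ₁ ∈ cls R σ) (h2 : τ₂ ∈ cls R σ) (hc : ctr τ₁ = ctr τ₂) : τ₁ = τ₂ := by
  by_contra hne
  refine cls_mul_sq_ne_one HK hσR hTv h1 h2 hne
    (tv_mul_sq_eq_one (cls_tv hTv h1) (cls_tv hTv h2) ?_ ?_)
  · rw [← hc]; exact (cls_tv hTv h1).fix_u
  · rw [hc]; exact (cls_tv hTv h2).fix_u

/-- P3: a class element moves the center of any other class element. -/
theorem ctr_moved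
    (HK : ∀ x ∈ R, ∀ y ∈ R, x ^ 2 = 1 → y ^ 2 = 1 → Commute x y → x = 1 ∨ y = 1 ∨ x = y)
    (hσR : σ ∈ R) (hTv : IsTv σ u₀) {τ₁ τ₂ : MulAut V}
    (h1 : τ₁ ∈ cls R σ) (h2 : τ₂ ∈ cls R σ) (hne : τ₁ ≠ τ₂) :
    τ₁ (ctr τ₂) ≠ ctr τ₂ := by
  intro hfix
  have h3 : τ₁ * τ₂ * τ₁⁻¹ ∈ cls R σ := cls_conj h2 (cls_subset_R hσR h1)
  have hc3 : ctr (τ₁ * τ₂ * τ₁⁻¹) = ctr τ₂ := by rw [ctr_conj hTv h2, hfix]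
  have heq : τ₁ * τ₂ * τ₁⁻¹ = τ₂ := ctr_inj HK hσR hTv h3 h2 hc3
  refine cls_mul_sq_ne_one HK hσR hTv h1 h2 hne ?_
  have hi1 : τ₁⁻¹ = τ₁ := (cls_tv hTv h1).inv_eq
  have hsq2 : τ₂ * τ₂ = 1 := by rw [← pow_two]; exact (cls_tv hTv h2).sq
  have hc12 : τ₁ * τ₂ = τ₂ * τ₁ := by
    calc τ₁ * τ₂ = (τ₁ * τ₂ * τ₁⁻¹) * τ₁ := by group
      _ = τ₂ * τ₁ := by rw [heq]
  have hsq1 : τ₁ * τ₁ = 1 := by rw [← pow_two]; exact (cls_tv hTv h1).sq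
  calc (τ₁ * τ₂) ^ 2 = τ₁ * τ₂ * (τ₁ * τ₂) := by rw [pow_two]
    _ = τ₂ * τ₁ * (τ₁ * τ₂) := by rw [hc12]
    _ = τ₂ * (τ₁ * τ₁) * τ₂ := by group
    _ = τ₂ * 1 * τ₂ := by rw [hsq1]
    _ = 1 := by rw [mul_one]; exact hsq2

/-- P4: conjugating a class element multiplies centers. -/
theorem ctr_conj_mul
    (HK : ∀ x ∈ R, ∀ y ∈ R, x ^ 2 = 1 → y ^ 2 = 1 → Commute x y → x = 1 ∨ y = 1 ∨ x = y)
    (hσR : σ ∈ R) (hTv : IsTv σ u₀) {τ₁ τ₂ : MulAut V}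
    (h1 : τ₁ ∈ cls R σ) (h2 : τ₂ ∈ cls R σ) (hne : τ₁ ≠ τ₂) :
    ctr (τ₁ * τ₂ * τ₁⁻¹) = ctr τ₂ * ctr τ₁ := by
  rw [ctr_conj hTv h2]
  exact (cls_tv hTv h1).moved (ctr_moved HK hσR hTv h1 h2 hne)

end Cls

section Helpers
variable {V : Type*} [CommGroup V]

/-- The displacement homomorphism `z ↦ z⁻¹ * τ z`. -/
def tvHom (τ : MulAut V) : V →* V where
  toFun z := z⁻¹ * τ z
  map_one' := by simp
  map_mul' a b := by
    simp only [map_mul, mul_inv_rev]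
    simp [mul_comm, mul_assoc, mul_left_comm]

theorem tvHom_apply (τ : MulAut V) (z : V) : tvHom τ z = z⁻¹ * τ z := rfl

theorem tvHom_eq_one_iff (τ : MulAut V) (z : V) : tvHom τ z = 1 ↔ τ z = z := by
  rw [tvHom_apply, inv_mul_eq_one, eq_comm]

theorem tvHom_pair {τ : MulAut V} {u : V} (h : IsTv τ u) (z : V) :
    tvHom τ z = 1 ∨ tvHom τ z = u := by
  rcases h.2.2.2 z with h1 | h1
  · left; rw [tvHom_eq_one_iff]; exact h1
  · right; rw [tvHom_apply, h1]; group

theorem card_le_two_of_pair {W : Type*} [Group W] [Finite W] {A : Subgroup W} {a : W}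
    (h : (A : Set W) ⊆ {1, a}) : Nat.card A ≤ 2 := by
  rw [show Nat.card A = (A : Set W).ncard from by rw [← Nat.card_coe_set_eq]; rfl]
  calc (A : Set W).ncard ≤ ({1, a} : Set W).ncard :=
        Set.ncard_le_ncard h (Set.toFinite _)
    _ ≤ 2 := by
        by_cases hc : (1 : W) = a
        · simp [hc.symm]
        · rw [Set.ncard_pair hc]

theorem three_le_card {W : Type*} [Group W] [Finite W] {A : Subgroup W} {a b c : W}
    (ha : a ∈ A) (hb : b ∈ A) (hc : c ∈ A) (hab : a ≠ b) (hac : a ≠ c) (hbc : b ≠ c) :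
    3 ≤ Nat.card A := by
  rw [show Nat.card A = (A : Set W).ncard from by rw [← Nat.card_coe_set_eq]; rfl]
  have hsub : ({a, b, c} : Set W) ⊆ A := by
    intro x hx; rcases hx with rfl | rfl | rfl <;> assumption
  calc (3 : ℕ) = ({a, b, c} : Set W).ncard := by
        rw [Set.ncard_insert_of_notMem (by simp [hab, hac]) (Set.toFinite _),
          Set.ncard_pair hbc]
    _ ≤ (A : Set W).ncard := Set.ncard_le_ncard hsub (Set.toFinite _)

theorem exists_klein {W : Type*} [Group W] {x y : W} (hx2 : x ^ 2 = 1) (hy2 : y ^ 2 = 1)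
    (hcxy : Commute x y) : ∃ P : Subgroup W, (P : Set W) = {1, x, y, x * y} := by
  have hx : x * x = 1 := by rw [← pow_two]; exact hx2
  have hy : y * y = 1 := by rw [← pow_two]; exact hy2
  have hxy2 : (x * y) * (x * y) = 1 := by
    calc x * y * (x * y) = x * (y * x) * y := by group
      _ = x * (x * y) * y := by rw [← hcxy.eq]
      _ = (x * x) * (y * (y * 1)) := by group
      _ = 1 := by rw [hx]; simp [hy]
  have h1 : x * (x * y) = y := by rw [← mul_assoc, hx, one_mul]
  have h2 : y * (x * y) = x := by
    calc y * (x * y) = (y * x) * y := by group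
      _ = (x * y) * y := by rw [hcxy.eq]
      _ = x * (y * y) := by group
      _ = x := by rw [hy, mul_one]
  have h3 : (x * y) * x = y := by
    calc (x * y) * x = x * (y * x) := by group
      _ = x * (x * y) := by rw [hcxy.eq]
      _ = y := h1
  have h4 : (x * y) * y = x := by
    calc (x * y) * y = x * (y * y) := by group
      _ = x := by rw [hy, mul_one]
  have h5 : y * x = x * y := hcxy.eq.symm
  have hxi : x⁻¹ = x := (eq_inv_of_mul_eq_one_left hx).symm
  have hyi : y⁻¹ = y := (eq_inv_of_mul_eq_one_left hy).symm
  have hxyi : (x * y)⁻¹ = x * y := (eq_inv_of_mul_eq_one_left hxy2).symm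
  refine ⟨{ carrier := {1, x, y, x * y}, one_mem' := Or.inl rfl,
            mul_mem' := ?_, inv_mem' := ?_ }, rfl⟩
  · rintro a b ha hb
    simp only [Set.mem_insert_iff, Set.mem_singleton_iff] at ha hb ⊢
    rcases ha with rfl | rfl | rfl | rfl <;> rcases hb with rfl | rfl | rfl | rfl <;>
      (try simp only [one_mul, mul_one]) <;> tauto
  · rintro a ha
    simp only [Set.mem_insert_iff, Set.mem_singleton_iff] at ha ⊢
    rcases ha with rfl | rfl | rfl | rfl <;>
      (try simp only [inv_one, hxi, hyi, hxyi]) <;> tauto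

theorem card_eq_range_mul_ker {W X : Type*} [Group W] [Group X] [Finite W] (f : W →* X) :
    Nat.card W = Nat.card f.range * Nat.card f.ker := by
  rw [Subgroup.card_eq_card_quotient_mul_card_subgroup f.ker,
    Nat.card_congr (QuotientGroup.quotientKerEquivRange f).toEquiv]

end Helpers

section Main
variable {V : Type*} [CommGroup V] [Finite V]
variable {R : Subgroup (MulAut V)} {σ : MulAut V} {u₀ : V}

theorem exists_U
    (HK : ∀ x ∈ R, ∀ y ∈ R, x ^ 2 = 1 → y ^ 2 = 1 → Commute x y → x = 1 ∨ y = 1 ∨ x = y)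
    (hσR : σ ∈ R) (hTv : IsTv σ u₀) :
    ∃ U : Subgroup V, (U : Set V) = (ctr '' cls R σ) ∪ {1} := by
  refine ⟨{ carrier := (ctr '' cls R σ) ∪ {1},
            one_mem' := Or.inr rfl, mul_mem' := ?_, inv_mem' := ?_ }, rfl⟩
  · rintro a b (⟨τ₁, h1, rfl⟩ | ha) (⟨τ₂, h2, rfl⟩ | hb)
    · by_cases hne : τ₁ = τ₂
      · subst hne
        right
        exact (cls_tv hTv h1).u_sq
      · left
        refine ⟨τ₁ * τ₂ * τ₁⁻¹, cls_conj h2 (cls_subset_R hσR h1), ?_⟩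
        rw [ctr_conj_mul HK hσR hTv h1 h2 hne, mul_comm]
    · rcases hb with rfl
      rw [mul_one]; exact Or.inl ⟨τ₁, h1, rfl⟩
    · rcases ha with rfl
      rw [one_mul]; exact Or.inl ⟨τ₂, h2, rfl⟩
    · rcases ha with rfl; rcases hb with rfl
      rw [one_mul]; exact Or.inr rfl
  · rintro a (⟨τ, h, rfl⟩ | ha)
    · left
      refine ⟨τ, h, ?_⟩
      exact eq_inv_of_mul_eq_one_left (cls_tv hTv h).u_sq
    · rcases ha with rfl
      rw [inv_one]; exact Or.inr rfl

theorem core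
    (R KR : Subgroup (MulAut V)) (hKR : KR ≤ R)
    (HK : ∀ x ∈ R, ∀ y ∈ R, x ^ 2 = 1 → y ^ 2 = 1 → Commute x y → x = 1 ∨ y = 1 ∨ x = y)
    (σ : MulAut V) (hσR : σ ∈ R) (u₀ : V) (hTv : IsTv σ u₀)
    (Z₀ : Subgroup V) (hZ₀mem : ∀ v : V, v ∈ Z₀ ↔ ∀ k ∈ KR, k v = v)
    (hZ₀ne : Z₀ ≠ ⊤)
    (hirr : ∀ X : Subgroup V, Z₀ ≤ X → (∀ k ∈ KR, ∀ x ∈ X, k x ∈ X) → X = Z₀ ∨ X = ⊤)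
    (h3 : ∀ v ∈ Z₀, σ v = v → v = 1) :
    Nat.card V = 4 := by
  classical
  obtain ⟨U, hU⟩ := exists_U HK hσR hTv
  have hctrσ : ctr σ = u₀ := ctr_eq hTv
  have hctrU : ∀ τ ∈ cls R σ, ctr τ ∈ U := by
    intro τ h
    rw [← SetLike.mem_coe, hU]; exact Or.inl ⟨τ, h, rfl⟩
  have hu₀U : u₀ ∈ U := hctrσ ▸ hctrU σ (sigma_mem_cls hσR)
  have hUmem : ∀ x : V, x ∈ U → x = 1 ∨ ∃ τ ∈ cls R σ, ctr τ = x := by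
    intro x hx
    rw [← SetLike.mem_coe, hU] at hx
    rcases hx with ⟨τ, h, rfl⟩ | hx
    · exact Or.inr ⟨τ, h, rfl⟩
    · exact Or.inl hx
  have hKU : ∀ k ∈ KR, ∀ x ∈ U, k x ∈ U := by
    intro k hk x hx
    rcases hUmem x hx with rfl | ⟨τ, hτ, rfl⟩
    · rw [map_one]; exact U.one_mem
    · have h1 : k * τ * k⁻¹ ∈ cls R σ := cls_conj hτ (hKR hk)
      have h2 := hctrU _ h1
      rwa [ctr_conj hTv hτ] at h2
  -- irreducibility applied to Z₀ ⊔ U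
  have hinv : ∀ k ∈ KR, ∀ x ∈ Z₀ ⊔ U, k x ∈ Z₀ ⊔ U := by
    intro k hk x hx
    rcases Subgroup.mem_sup.mp hx with ⟨y, hy, z, hz, rfl⟩
    rw [map_mul, (hZ₀mem y).mp hy k hk]
    exact Subgroup.mul_mem_sup hy (hKU k hk z hz)
  rcases hirr (Z₀ ⊔ U) le_sup_left hinv with hX | hX
  · -- U ≤ Z₀ : contradiction via u₀
    have hu₀Z₀ : u₀ ∈ Z₀ := hX ▸ Subgroup.mem_sup_right hu₀U
    exact absurd (h3 u₀ hu₀Z₀ hTv.fix_u) hTv.ne_one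
  -- now Z₀ ⊔ U = ⊤
  -- |Z₀| ≤ 2
  have hZ₀card : Nat.card Z₀ ≤ 2 := by
    set f := (tvHom σ).comp Z₀.subtype with hf
    have hker : f.ker = ⊥ := by
      ext x
      simp only [MonoidHom.mem_ker, Subgroup.mem_bot, hf, MonoidHom.comp_apply,
        Subgroup.coe_subtype, tvHom_eq_one_iff]
      constructor
      · intro hfix
        exact Subtype.ext (h3 x.1 x.2 hfix)
      · rintro rfl; simp
    have hcard := card_eq_range_mul_ker f
    have hrange : Nat.card f.range ≤ 2 := by
      refine card_le_two_of_pair (a := u₀) ?_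
      rintro w ⟨z, rfl⟩
      rcases tvHom_pair hTv z.1 with h1 | h1 <;> simp only [hf, MonoidHom.comp_apply,
        Subgroup.coe_subtype] <;> rw [h1] <;> simp
    rw [hcard, hker] at *
    simpa using Nat.mul_le_mul hrange (le_refl (Nat.card (⊥ : Subgroup Z₀)))
  -- σ-fixed points of U lie in {1, u₀}
  have hfixU : ∀ x ∈ U, σ x = x → x = 1 ∨ x = u₀ := by
    intro x hxU hfix
    rcases hUmem x hxU with rfl | ⟨τ, hτ, rfl⟩
    · exact Or.inl rfl
    · by_cases hts : σ = τ
      · right; rw [← hts, hctrσ]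
      · exact absurd hfix (ctr_moved HK hσR hTv (sigma_mem_cls hσR) hτ hts)
  -- |U| = r * k with r, k ≤ 2
  set fU := (tvHom σ).comp U.subtype with hfU
  have hUcard : Nat.card U = Nat.card fU.range * Nat.card fU.ker :=
    card_eq_range_mul_ker fU
  have hr2 : Nat.card fU.range ≤ 2 := by
    refine card_le_two_of_pair (a := u₀) ?_
    rintro w ⟨z, rfl⟩
    rcases tvHom_pair hTv z.1 with h1 | h1 <;> simp only [hfU, MonoidHom.comp_apply,
      Subgroup.coe_subtype] <;> rw [h1] <;> simp
  have hk2 : Nat.card fU.ker ≤ 2 := by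
    refine card_le_two_of_pair (a := (⟨u₀, hu₀U⟩ : U)) ?_
    rintro z hz
    simp only [SetLike.mem_coe, MonoidHom.mem_ker, hfU, MonoidHom.comp_apply,
      Subgroup.coe_subtype, tvHom_eq_one_iff] at hz
    rcases hfixU z.1 z.2 hz with h1 | h1
    · exact Or.inl (Subtype.ext h1)
    · exact Or.inr (Subtype.ext h1)
  -- |V| ≥ 3
  have hV3 : 3 ≤ Nat.card V := by
    obtain ⟨v, hv⟩ : ∃ v : V, v ∉ Z₀ := by
      by_contra hc
      push_neg at hc
      exact hZ₀ne (Subgroup.eq_top_iff' Z₀ |>.mpr hc)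
    obtain ⟨k, hk, hkv⟩ : ∃ k ∈ KR, k v ≠ v := by
      by_contra hc
      push_neg at hc
      exact hv ((hZ₀mem v).mpr hc)
    have hv1 : v ≠ 1 := by rintro rfl; exact hkv (map_one k)
    have hkv1 : k v ≠ 1 := fun hc => hv1 (k.injective (by simpa using hc))
    have := three_le_card (A := (⊤ : Subgroup V)) trivial trivial trivial
      hv1.symm hkv1.symm (Ne.symm hkv)
    calc (3:ℕ) ≤ Nat.card (⊤ : Subgroup V) := this
      _ = Nat.card V := by rw [Subgroup.card_top]
  by_cases hZU : Z₀ ≤ U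
  · -- Case A : U = ⊤
    have hUtop : U = ⊤ := by rw [← hX, sup_eq_right.mpr hZU]
    set f := tvHom σ with hfdef
    have hc := card_eq_range_mul_ker f
    have hrange2 : Nat.card f.range ≤ 2 := by
      refine card_le_two_of_pair (a := u₀) ?_
      rintro w ⟨z, rfl⟩
      rcases tvHom_pair hTv z with h1 | h1 <;> rw [h1] <;> simp
    have hker2 : Nat.card f.ker ≤ 2 := by
      refine card_le_two_of_pair (a := u₀) ?_
      rintro z hz
      simp only [SetLike.mem_coe, MonoidHom.mem_ker, hfdef, tvHom_eq_one_iff] at hz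
      exact hfixU z (hUtop ▸ Subgroup.mem_top z) hz
    set a := Nat.card f.range
    set b := Nat.card f.ker
    rw [hc] at hV3 ⊢
    interval_cases a <;> interval_cases b <;> omega
  · -- Case B : ∃ z₀ ∈ Z₀ \ U
    obtain ⟨z₀, hz₀Z, hz₀U⟩ : ∃ z₀, z₀ ∈ Z₀ ∧ z₀ ∉ U := by
      by_contra hc
      push_neg at hc
      exact hZU hc
    have hz₀1 : z₀ ≠ 1 := fun hc => hz₀U (hc ▸ U.one_mem)
    have hu₀1 : u₀ ≠ 1 := hTv.ne_one
    have hz₀u₀ : z₀ ≠ u₀ := fun hc => hz₀U (hc ▸ hu₀U)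
    have hUpos : 0 < Nat.card U := Nat.card_pos
    have hu₀inv : u₀⁻¹ = u₀ := (eq_inv_of_mul_eq_one_left hTv.u_sq).symm
    by_cases hU4 : Nat.card U = 4
    · -- |U| = 4 : contradiction
      have hUne : U ≠ ⊤ := fun h => hz₀U (h ▸ Subgroup.mem_top z₀)
      have hVle : Nat.card V ≤ 8 := by
        have hsurj : Function.Surjective (fun p : Z₀ × U => (p.1 : V) * p.2) := by
          intro x
          have hx : x ∈ Z₀ ⊔ U := hX ▸ Subgroup.mem_top x
          rcases Subgroup.mem_sup.mp hx with ⟨y, hy, z, hz, rfl⟩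
          exact ⟨(⟨y, hy⟩, ⟨z, hz⟩), rfl⟩
        calc Nat.card V ≤ Nat.card (Z₀ × U) := Nat.card_le_card_of_surjective _ hsurj
          _ = Nat.card Z₀ * Nat.card U := Nat.card_prod _ _
          _ ≤ 2 * 4 := Nat.mul_le_mul hZ₀card (le_of_eq hU4)
      have hidx0 : U.index ≠ 0 := Subgroup.index_ne_zero_of_finite
      have hidx1 : U.index ≠ 1 := fun h => hUne (Subgroup.index_eq_one.mp h)
      have hidx2 : U.index = 2 := by
        have hmi := Subgroup.card_mul_index U
        rw [hU4] at hmi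
        omega
      have hV8 : Nat.card V = 8 := by
        rw [← Subgroup.card_mul_index U, hU4, hidx2]
      obtain ⟨x, hxU, hx1⟩ : ∃ x, x ∈ U ∧ x ≠ 1 := by
        rcases U.bot_or_exists_ne_one with h | h
        · rw [h, Subgroup.card_bot] at hU4; omega
        · exact h
      obtain ⟨y, hyU, hy1, hyx⟩ : ∃ y, y ∈ U ∧ y ≠ 1 ∧ y ≠ x := by
        by_contra hc
        push_neg at hc
        have hpair : (U : Set V) ⊆ {1, x} := by
          intro w hw
          rcases eq_or_ne w 1 with rfl | hw1
          · exact Or.inl rfl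
          · exact Or.inr (hc w hw hw1)
        have := card_le_two_of_pair hpair
        omega
      obtain ⟨τ₁, hτ₁, hcx⟩ : ∃ τ ∈ cls R σ, ctr τ = x := (hUmem x hxU).resolve_left hx1
      obtain ⟨τ₂, hτ₂, hcy⟩ : ∃ τ ∈ cls R σ, ctr τ = y := (hUmem y hyU).resolve_left hy1
      have hτne : τ₁ ≠ τ₂ := fun h => hyx (by rw [← hcy, ← h, hcx])
      set τ₃ := τ₁ * τ₂ * τ₁⁻¹ with hτ₃def
      have hτ₃ : τ₃ ∈ cls R σ := cls_conj hτ₂ (cls_subset_R hσR hτ₁)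
      have hc3 : ctr τ₃ = x * y := by
        rw [hτ₃def, ctr_conj_mul HK hσR hTv hτ₁ hτ₂ hτne, hcy, hcx, mul_comm]
      have hxx : x * x = 1 := by rw [← hcx]; exact (cls_tv hTv hτ₁).u_sq
      have hyy : y * y = 1 := by rw [← hcy]; exact (cls_tv hTv hτ₂).u_sq
      have hxy1 : x * y ≠ 1 := by rw [← hc3]; exact (cls_tv hTv hτ₃).ne_one
      have hxyx : x * y ≠ x := fun h => hy1 (mul_left_cancel (h.trans (mul_one x).symm))
      have hxyy : x * y ≠ y := fun h => hx1 (mul_right_cancel (h.trans (one_mul y).symm))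
      have hUset4 : (U : Set V) = {1, x, y, x * y} := by
        refine (Set.eq_of_subset_of_ncard_le ?_ ?_ (Set.toFinite _)).symm
        · rintro w (rfl | rfl | rfl | rfl)
          · exact U.one_mem
          · exact hxU
          · exact hyU
          · exact U.mul_mem hxU hyU
        · rw [show (U : Set V).ncard = Nat.card U from
            by rw [← Nat.card_coe_set_eq]; rfl, hU4,
            Set.ncard_insert_of_notMem (by simp [Ne.symm hx1, Ne.symm hy1, Ne.symm hxy1])
              (Set.toFinite _),
            Set.ncard_insert_of_notMem (by simp [Ne.symm hyx, Ne.symm hxyx]) (Set.toFinite _),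
            Set.ncard_pair (Ne.symm hxyy)]
      have hΘ : ∀ τ ∈ cls R σ, τ = τ₁ ∨ τ = τ₂ ∨ τ = τ₃ := by
        intro τ hτ
        have h1 : (ctr τ : V) ∈ ({1, x, y, x * y} : Set V) := hUset4 ▸ hctrU τ hτ
        rcases h1 with h2 | h2 | h2 | h2
        · exact absurd h2 (cls_tv hTv hτ).ne_one
        · exact Or.inl (ctr_inj HK hσR hTv hτ hτ₁ (h2.trans hcx.symm))
        · exact Or.inr (Or.inl (ctr_inj HK hσR hTv hτ hτ₂ (h2.trans hcy.symm)))
        · exact Or.inr (Or.inr (ctr_inj HK hσR hTv hτ hτ₃ (h2.trans hc3.symm)))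
      set F := (tvHom τ₁).prod (tvHom τ₂) with hFdef
      have hFmem : ∀ z : V, z ∈ F.ker ↔ (τ₁ z = z ∧ τ₂ z = z) := by
        intro z
        rw [MonoidHom.mem_ker, hFdef, MonoidHom.prod_apply, Prod.mk_eq_one,
          tvHom_eq_one_iff, tvHom_eq_one_iff]
      have hrange4 : Nat.card F.range ≤ 4 := by
        have hle : F.range ≤ (Subgroup.zpowers x).prod (Subgroup.zpowers y) := by
          rintro w ⟨z, rfl⟩
          rw [Subgroup.mem_prod]
          constructor
          · rcases tvHom_pair (cls_tv hTv hτ₁) z with h1 | h1 <;>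
              rw [hFdef, MonoidHom.prod_apply] <;> simp only [h1, hcx]
            · exact Subgroup.one_mem _
            · exact Subgroup.mem_zpowers x
          · rcases tvHom_pair (cls_tv hTv hτ₂) z with h1 | h1 <;>
              rw [hFdef, MonoidHom.prod_apply] <;> simp only [h1, hcy]
            · exact Subgroup.one_mem _
            · exact Subgroup.mem_zpowers y
        have hox : orderOf x = 2 := orderOf_eq_prime (by rw [pow_two]; exact hxx) hx1
        have hoy : orderOf y = 2 := orderOf_eq_prime (by rw [pow_two]; exact hyy) hy1
        calc Nat.card F.range
            ≤ Nat.card ((Subgroup.zpowers x).prod (Subgroup.zpowers y)) :=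
              Subgroup.card_le_of_le hle
          _ = Nat.card (Subgroup.zpowers x) * Nat.card (Subgroup.zpowers y) := by
              rw [Nat.card_congr (Subgroup.prodEquiv _ _).toEquiv, Nat.card_prod]
          _ = 4 := by rw [Nat.card_zpowers, Nat.card_zpowers, hox, hoy]
      have hkerF2 : 2 ≤ Nat.card F.ker := by
        have hce := card_eq_range_mul_ker F
        rw [hV8] at hce
        have hrpos : 0 < Nat.card F.range := Nat.card_pos
        set r := Nat.card F.range
        interval_cases r <;> omega
      have hkerU : ∀ z, z ∈ F.ker → z ∈ U → z = 1 := by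
        intro z hzk hzU
        obtain ⟨hf1, hf2⟩ := (hFmem z).mp hzk
        rcases hUmem z hzU with rfl | ⟨τ, hτ, rfl⟩
        · rfl
        · by_cases h1 : τ₁ = τ
          · by_cases h2 : τ₂ = τ
            · exact absurd (h1.trans h2.symm) hτne
            · exact absurd hf2 (ctr_moved HK hσR hTv hτ₂ hτ h2)
          · exact absurd hf1 (ctr_moved HK hσR hTv hτ₁ hτ h1)
      have hkerFle : Nat.card F.ker ≤ 2 := by
        set g := (QuotientGroup.mk' U).comp F.ker.subtype with hgdef
        have hginj : Function.Injective g := by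
          rw [← MonoidHom.ker_eq_bot_iff]
          ext w
          simp only [MonoidHom.mem_ker, hgdef, MonoidHom.comp_apply, Subgroup.coe_subtype,
            Subgroup.mem_bot, QuotientGroup.mk'_apply, QuotientGroup.eq_one_iff]
          constructor
          · intro hw; exact Subtype.ext (hkerU w.1 w.2 hw)
          · rintro rfl; simpa using U.one_mem
        calc Nat.card F.ker ≤ Nat.card (V ⧸ U) := Nat.card_le_card_of_injective g hginj
          _ = U.index := rfl
          _ = 2 := hidx2
      have hkerFcard : Nat.card F.ker = 2 := le_antisymm hkerFle hkerF2
      obtain ⟨c, hcK, hc1⟩ : ∃ c ∈ F.ker, c ≠ 1 := by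
        rcases Subgroup.bot_or_exists_ne_one F.ker with h | h
        · rw [h] at hkerFcard
          simp [Subgroup.card_bot] at hkerFcard
        · exact h
      have hkerEls : ∀ w ∈ F.ker, w = 1 ∨ w = c := by
        intro w hw
        by_contra hc'
        push_neg at hc'
        have := three_le_card (A := F.ker) F.ker.one_mem hcK hw
          (Ne.symm hc1) (Ne.symm hc'.1) (fun h => hc'.2 h.symm)
        omega
      obtain ⟨hfc1, hfc2⟩ := (hFmem c).mp hcK
      have hfc3 : τ₃ c = c := by
        have hi : τ₁⁻¹ c = c := by
          calc τ₁⁻¹ c = τ₁⁻¹ (τ₁ c) := by rw [hfc1]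
            _ = c := by simp
        rw [hτ₃def]
        show (τ₁ * τ₂ * τ₁⁻¹) c = c
        rw [MulAut.mul_apply, MulAut.mul_apply, hi, hfc2, hfc1]
      have hallfix : ∀ τ ∈ cls R σ, τ c = c := by
        intro τ hτ
        rcases hΘ τ hτ with rfl | rfl | rfl <;> assumption
      have hcZ₀ : c ∈ Z₀ := by
        rw [hZ₀mem]
        intro k hk
        have hfixk : ∀ τ ∈ cls R σ, τ (k c) = k c := by
          intro τ hτ
          have hconj : k⁻¹ * τ * (k⁻¹)⁻¹ ∈ cls R σ := cls_conj hτ (R.inv_mem (hKR hk))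
          rw [inv_inv] at hconj
          have hfix := hallfix _ hconj
          have heval : (k⁻¹ * τ * k) c = k⁻¹ (τ (k c)) := by
            simp [MulAut.mul_apply]
          rw [heval] at hfix
          have := congrArg k hfix
          simpa using this
        have hkcK : k c ∈ F.ker := (hFmem _).mpr ⟨hfixk τ₁ hτ₁, hfixk τ₂ hτ₂⟩
        rcases hkerEls _ hkcK with h | h
        · exact absurd (k.injective (by simpa using h)) hc1
        · exact h
      exact absurd (h3 c hcZ₀ (hallfix σ (sigma_mem_cls hσR))) hc1
    · -- |U| ≤ 2 : |V| = 4
      have hUle2 : Nat.card U ≤ 2 := by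
        have h1 := hr2; have h2 := hk2
        set a := Nat.card fU.range
        set b := Nat.card fU.ker
        rw [hUcard] at hU4 ⊢
        interval_cases a <;> interval_cases b <;> omega
      have hUset : ({1, u₀} : Set V) = (U : Set V) := by
        refine Set.eq_of_subset_of_ncard_le ?_ ?_ (Set.toFinite _)
        · rintro x (rfl | rfl)
          · exact U.one_mem
          · exact hu₀U
        · rw [show (U : Set V).ncard = Nat.card U from
            by rw [← Nat.card_coe_set_eq]; rfl, Set.ncard_pair (Ne.symm hu₀1)]
          exact hUle2
      have hZ₀set : ({1, z₀} : Set V) = (Z₀ : Set V) := by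
        refine Set.eq_of_subset_of_ncard_le ?_ ?_ (Set.toFinite _)
        · rintro x (rfl | rfl)
          · exact Z₀.one_mem
          · exact hz₀Z
        · rw [show (Z₀ : Set V).ncard = Nat.card Z₀ from
            by rw [← Nat.card_coe_set_eq]; rfl, Set.ncard_pair (Ne.symm hz₀1)]
          exact hZ₀card
      have huniv : (Set.univ : Set V) = {1, z₀, u₀, z₀ * u₀} := by
        refine Set.Subset.antisymm ?_ (Set.subset_univ _)
        intro x _
        have hx : x ∈ Z₀ ⊔ U := hX ▸ Subgroup.mem_top x
        rcases Subgroup.mem_sup.mp hx with ⟨w, hw, z, hz, rfl⟩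
        have hw' : w ∈ ({1, z₀} : Set V) := by rw [hZ₀set]; exact hw
        have hz' : z ∈ ({1, u₀} : Set V) := by rw [hUset]; exact hz
        rcases hw' with rfl | rfl <;> rcases hz' with rfl | rfl <;> simp
      have hzu1 : z₀ * u₀ ≠ 1 := by
        intro hc
        exact hz₀u₀ (by rw [← hu₀inv]; exact eq_inv_of_mul_eq_one_left hc)
      have hzuz : z₀ * u₀ ≠ z₀ := fun h => hu₀1 (mul_left_cancel (h.trans (mul_one z₀).symm))
      have hzuu : z₀ * u₀ ≠ u₀ := fun h => hz₀1 (mul_right_cancel (h.trans (one_mul u₀).symm))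
      rw [← Set.ncard_univ, huniv,
        Set.ncard_insert_of_notMem (by simp [Ne.symm hz₀1, Ne.symm hu₀1, Ne.symm hzu1])
          (Set.toFinite _),
        Set.ncard_insert_of_notMem (by simp [hz₀u₀, Ne.symm hzuz]) (Set.toFinite _),
        Set.ncard_pair (Ne.symm hzuu)]

end Main
end StmtFive

/-- The center `Z(H)` of a subgroup `H`, as a subgroup of the ambient group. -/
def relCenter {G : Type*} [Group G] (H : Subgroup G) : Subgroup G :=
  H ⊓ Subgroup.centralizer (H : Set G)

/-- Let `G` be a finite group, `S` a Sylow `2`-subgroup, `T ≤ S`,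
`K ≤ N_G(T)` and `Z = Z(T)`.  Assume (i) `|S : T| = 2` and `|Z : C_Z(S)| = 2`;
(ii) `|K|` is odd and `K` acts irreducibly on `Z/C_Z(K)`; (iii) `C_Z(K) ∩ C_Z(S) = 1`.
Then `|Z| = 4`. -/
theorem card_center_eq_four
    {G : Type*} [Group G] [Finite G] (S : Sylow 2 G) (T K : Subgroup G)
    (hTS : T ≤ (S : Subgroup G)) (hK : K ≤ Subgroup.normalizer (T : Set G))
    (h1a : T.relIndex (S : Subgroup G) = 2)
    (h1b : (Subgroup.centralizer ((S : Subgroup G) : Set G)).relIndex (relCenter T) = 2)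
    (h2a : Odd (Nat.card K))
    (h2b : ¬ relCenter T ≤ Subgroup.centralizer (K : Set G))
    (h2c : ∀ X : Subgroup G, X ≤ relCenter T →
      relCenter T ⊓ Subgroup.centralizer (K : Set G) ≤ X →
      (∀ k ∈ K, ∀ x ∈ X, k * x * k⁻¹ ∈ X) →
      X = relCenter T ⊓ Subgroup.centralizer (K : Set G) ∨ X = relCenter T)
    (h3 : (relCenter T ⊓ Subgroup.centralizer (K : Set G)) ⊓
      (relCenter T ⊓ Subgroup.centralizer ((S : Subgroup G) : Set G)) = ⊥) :
    Nat.card ↥(relCenter T) = 4 := by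
  classical
  set Z := relCenter T with hZdef
  haveI hZcomm : IsMulCommutative Z := ⟨⟨by
    rintro ⟨a, ha⟩ ⟨b, hb⟩
    exact Subtype.ext (Subgroup.mem_centralizer_iff.mp hb.2 a ha.1)⟩⟩
  letI : CommGroup Z := { (inferInstance : Group Z) with mul_comm := hZcomm.is_comm.comm }
  set N := Subgroup.normalizer (T : Set G) with hNdef
  set T' := T.subgroupOf (S : Subgroup G) with hT'def
  have hT'idx : T'.index = 2 := h1a
  have hconjT : ∀ g ∈ (S : Subgroup G), ∀ x ∈ T, g * x * g⁻¹ ∈ T := by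
    intro g hg x hx
    have hx' : (⟨x, hTS hx⟩ : ↥(S : Subgroup G)) ∈ T' := Subgroup.mem_subgroupOf.mpr hx
    have h1 : (⟨g, hg⟩ : ↥(S : Subgroup G)) * ⟨x, hTS hx⟩ * (⟨g, hg⟩ : ↥(S:Subgroup G))⁻¹ ∈ T' := by
      rw [Subgroup.mul_mem_iff_of_index_two hT'idx,
        Subgroup.mul_mem_iff_of_index_two hT'idx, inv_mem_iff]
      tauto
    exact Subgroup.mem_subgroupOf.mp h1
  have hSN : (S : Subgroup G) ≤ N := by
    intro g hg
    rw [hNdef, Subgroup.mem_normalizer_iff]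
    intro x
    constructor
    · intro hx; exact hconjT g hg x hx
    · intro hx
      have h2 := hconjT g⁻¹ (inv_mem hg) _ hx
      have key : g⁻¹ * (g * x * g⁻¹) * g⁻¹⁻¹ = x := by group
      rwa [key] at h2
  have hKN : K ≤ N := hK
  have hZleT : Z ≤ T := inf_le_left
  have hZleC : Z ≤ Subgroup.centralizer (T : Set G) := inf_le_right
  have hTcomm : ∀ t ∈ T, ∀ z, z ∈ Z → t * z = z * t := by
    intro t ht z hz
    exact Subgroup.mem_centralizer_iff.mp (hZleC hz) t ht
  have hfwd : ∀ n ∈ N, ∀ z ∈ Z, n * z * n⁻¹ ∈ Z := by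
    intro n hn z hz
    have hntiff : ∀ x, x ∈ T ↔ n * x * n⁻¹ ∈ T := Subgroup.mem_normalizer_iff.mp hn
    refine Subgroup.mem_inf.mpr ⟨(hntiff z).mp (hZleT hz), Subgroup.mem_centralizer_iff.mpr ?_⟩
    intro t ht
    have ht' : n⁻¹ * t * n ∈ T := by
      refine (hntiff (n⁻¹ * t * n)).mpr ?_
      have key : n * (n⁻¹ * t * n) * n⁻¹ = t := by group
      rwa [key]
    have hcz := hTcomm _ ht' z hz
    calc t * (n * z * n⁻¹) = n * ((n⁻¹ * t * n) * z) * n⁻¹ := by group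
      _ = n * (z * (n⁻¹ * t * n)) * n⁻¹ := by rw [hcz]
      _ = (n * z * n⁻¹) * t := by group
  have hNZ : N ≤ Subgroup.normalizer (Z : Set G) := by
    intro n hn
    rw [Subgroup.mem_normalizer_iff]
    intro z
    constructor
    · exact fun hz => hfwd n hn z hz
    · intro hz
      have h2 := hfwd n⁻¹ (inv_mem hn) _ hz
      have key : n⁻¹ * (n * z * n⁻¹) * n⁻¹⁻¹ = z := by group
      rwa [key] at h2
  set φ : ↥N →* MulAut ↥Z := Z.normalizerMonoidHom.comp (Subgroup.inclusion hNZ) with hφdef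
  have hφap : ∀ (n : ↥N) (z : ↥Z), ((φ n z : ↥Z) : G) = ↑n * ↑z * (↑n)⁻¹ := fun n z => rfl
  have hTker : ∀ (n : ↥N), (n : G) ∈ T → φ n = 1 := by
    intro n hn
    ext z
    have hc := hTcomm _ hn _ z.2
    have : ((φ n z : ↥Z) : G) = ↑z := by
      rw [hφap]
      calc (n : G) * ↑z * (↑n)⁻¹ = (↑z * ↑n) * (↑n)⁻¹ := by rw [← hc]
        _ = ↑z := by group
    simpa using Subtype.ext this
  -- choose s
  have hT'neTop : T' ≠ ⊤ := by
    intro h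
    rw [h, Subgroup.index_top] at hT'idx
    omega
  obtain ⟨s', hs'⟩ : ∃ s' : ↥(S : Subgroup G), s' ∉ T' := by
    by_contra hc
    push_neg at hc
    exact hT'neTop (Subgroup.eq_top_iff' T' |>.mpr hc)
  set s : G := ↑s' with hsdef
  have hsS : s ∈ (S : Subgroup G) := s'.2
  have hsT : s ∉ T := fun h => hs' (Subgroup.mem_subgroupOf.mpr h)
  have hsN : s ∈ N := hSN hsS
  set σ := φ ⟨s, hsN⟩ with hσdef
  have hσR : σ ∈ φ.range := ⟨_, rfl⟩
  have hs2T : s * s ∈ T := by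
    have h1 := Subgroup.sq_mem_of_index_two hT'idx s'
    have h2 : ((s' ^ 2 : ↥(S:Subgroup G)) : G) ∈ T := Subgroup.mem_subgroupOf.mp h1
    simpa [pow_two] using h2
  have hσ2 : σ ^ 2 = 1 := by
    have h1 : σ ^ 2 = φ (⟨s, hsN⟩ * ⟨s, hsN⟩) := by rw [map_mul, pow_two]
    rw [h1]
    exact hTker _ hs2T
  set CC := (Subgroup.centralizer ((S : Subgroup G) : Set G)).subgroupOf Z with hCCdef
  have hCCidx : CC.index = 2 := h1b
  have hSgen : ∀ g ∈ (S : Subgroup G), g ∈ Subgroup.closure ((T : Set G) ∪ {s}) := by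
    set L := Subgroup.closure ((T : Set G) ∪ {s}) with hLdef
    have hTL : T ≤ L := fun x hx => Subgroup.subset_closure (Or.inl hx)
    have hsL : s ∈ L := Subgroup.subset_closure (Or.inr rfl)
    have hLS : L ≤ (S : Subgroup G) := by
      rw [hLdef, Subgroup.closure_le]
      rintro x (hx | rfl)
      · exact hTS hx
      · exact hsS
    set L' := L.subgroupOf (S : Subgroup G) with hL'def
    have hT'L' : T' ≤ L' := fun x hx =>
      Subgroup.mem_subgroupOf.mpr (hTL (Subgroup.mem_subgroupOf.mp hx))
    have hidx : L'.index ∣ 2 := by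
      have h0 : L'.index ∣ T'.index := Subgroup.index_dvd_of_le hT'L'
      rwa [hT'idx] at h0
    have hL'top : L' = ⊤ := by
      rcases (Nat.dvd_prime Nat.prime_two).mp hidx with h | h
      · exact Subgroup.index_eq_one.mp h
      · exfalso
        have hc1 := Subgroup.card_mul_index T'
        have hc2 := Subgroup.card_mul_index L'
        rw [hT'idx] at hc1
        rw [h] at hc2
        have hcards : Nat.card L' ≤ Nat.card T' := by omega
        have heq : T' = L' := SetLike.ext'
          (Set.eq_of_subset_of_ncard_le hT'L' (by
            rw [show (T' : Set ↥(S:Subgroup G)).ncard = Nat.card T' from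
              by rw [← Nat.card_coe_set_eq]; rfl,
              show (L' : Set ↥(S:Subgroup G)).ncard = Nat.card L' from
              by rw [← Nat.card_coe_set_eq]; rfl]
            exact hcards) (Set.toFinite _))
        have hs'L : s' ∈ L' := Subgroup.mem_subgroupOf.mpr hsL
        rw [← heq] at hs'L
        exact hs' hs'L
    intro g hg
    have hgL : (⟨g, hg⟩ : ↥(S : Subgroup G)) ∈ L' := hL'top ▸ Subgroup.mem_top _
    exact Subgroup.mem_subgroupOf.mp hgL
  have hfixiff : ∀ z : ↥Z, σ z = z ↔ z ∈ CC := by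
    intro z
    constructor
    · intro hfix
      rw [hCCdef, Subgroup.mem_subgroupOf, Subgroup.mem_centralizer_iff]
      intro g hg
      have h1 := congrArg (Subtype.val) hfix
      rw [hφap] at h1
      have hzs : s * ↑z = ↑z * s := by
        calc s * (z:G) = (s * ↑z * s⁻¹) * s := by group
          _ = ↑z * s := by rw [h1]
      have hle : Subgroup.closure ((T : Set G) ∪ {s}) ≤ Subgroup.centralizer {(z : G)} := by
        rw [Subgroup.closure_le]
        rintro x (hx | rfl)
        · rw [SetLike.mem_coe, Subgroup.mem_centralizer_iff]
          rintro h rfl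
          exact (hTcomm x hx _ z.2).symm
        · rw [SetLike.mem_coe, Subgroup.mem_centralizer_iff]
          rintro h rfl
          exact hzs.symm
      have hgz := hle (hSgen g hg)
      rw [Subgroup.mem_centralizer_iff] at hgz
      exact (hgz ↑z rfl).symm
    · intro hz
      have h1 : s * ↑z = ↑z * s :=
        Subgroup.mem_centralizer_iff.mp (Subgroup.mem_subgroupOf.mp hz) s hsS
      apply Subtype.ext
      rw [hφap]
      calc s * (z:G) * s⁻¹ = (↑z * s) * s⁻¹ := by rw [h1]
        _ = ↑z := by group
  have hCCneTop : CC ≠ ⊤ := by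
    intro h
    rw [h, Subgroup.index_top] at hCCidx
    omega
  obtain ⟨z₁, hz₁⟩ : ∃ z₁ : ↥Z, z₁ ∉ CC := by
    by_contra hc
    push_neg at hc
    exact hCCneTop (Subgroup.eq_top_iff' CC |>.mpr hc)
  set u₀ : ↥Z := z₁⁻¹ * σ z₁ with hu₀def
  have hmoved : σ z₁ ≠ z₁ := fun h => hz₁ ((hfixiff z₁).mp h)
  have hu₀1 : u₀ ≠ 1 := by
    rw [hu₀def]
    intro h
    exact hmoved (inv_mul_eq_one.mp h).symm
  have hcoset : ∀ a b : ↥Z, a ∉ CC → b ∉ CC → a⁻¹ * b ∈ CC := by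
    obtain ⟨c₀, hc₀⟩ := Subgroup.index_eq_two_iff.mp hCCidx
    intro a b ha hb
    have ha' : a * c₀ ∈ CC := by
      rcases hc₀ a with ⟨h, _⟩ | ⟨h, _⟩
      · exact h
      · exact absurd h ha
    have hb' : b * c₀ ∈ CC := by
      rcases hc₀ b with ⟨h, _⟩ | ⟨h, _⟩
      · exact h
      · exact absurd h hb
    have key : a⁻¹ * b = (a * c₀)⁻¹ * (b * c₀) := by
      calc a⁻¹ * b = c₀⁻¹ * (c₀ * (a⁻¹ * b)) := by rw [inv_mul_cancel_left]
        _ = c₀⁻¹ * ((c₀ * a⁻¹) * b) := by rw [mul_assoc c₀ a⁻¹ b]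
        _ = c₀⁻¹ * ((a⁻¹ * c₀) * b) := by rw [mul_comm c₀ a⁻¹]
        _ = c₀⁻¹ * (a⁻¹ * (c₀ * b)) := by rw [mul_assoc a⁻¹ c₀ b]
        _ = c₀⁻¹ * (a⁻¹ * (b * c₀)) := by rw [mul_comm c₀ b]
        _ = (c₀⁻¹ * a⁻¹) * (b * c₀) := by rw [mul_assoc]
        _ = (a * c₀)⁻¹ * (b * c₀) := by rw [mul_inv_rev]
    rw [key]
    exact CC.mul_mem (CC.inv_mem ha') hb'
  have hTv : StmtFive.IsTv σ u₀ := by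
    refine ⟨hσ2, hu₀1, ⟨z₁, hmoved⟩, ?_⟩
    intro z
    by_cases hz : z ∈ CC
    · exact Or.inl ((hfixiff z).mpr hz)
    · right
      have hc : z₁⁻¹ * z ∈ CC := hcoset z₁ z hz₁ hz
      have hfixc : σ (z₁⁻¹ * z) = z₁⁻¹ * z := (hfixiff _).mpr hc
      calc σ z = σ (z₁ * (z₁⁻¹ * z)) := by rw [mul_inv_cancel_left]
        _ = σ z₁ * (z₁⁻¹ * z) := by rw [map_mul, hfixc]
        _ = z * u₀ := by rw [hu₀def]; simp [mul_comm, mul_assoc, mul_left_comm]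
  -- Sylow bound
  have SB : ∀ Q : Subgroup (MulAut ↥Z), IsPGroup 2 Q → Q ≤ φ.range → Nat.card Q ≤ 2 := by
    intro Q hQ hQR
    set A := φ.range with hAdef
    have hQ' : IsPGroup 2 (Q.subgroupOf A) :=
      IsPGroup.of_equiv hQ (Subgroup.subgroupOfEquivOfLe hQR).symm
    obtain ⟨Qs, hQle⟩ := hQ'.exists_le_sylow
    have hc1 : Nat.card (Q.subgroupOf A) = Nat.card Q :=
      Nat.card_congr (Subgroup.subgroupOfEquivOfLe hQR).toEquiv
    have hAcard : Nat.card ↥A = φ.ker.index := by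
      rw [← Nat.card_congr (QuotientGroup.quotientKerEquivRange φ).toEquiv]
      rfl
    have hTk : T.subgroupOf N ≤ φ.ker := by
      intro t ht
      exact hTker t (Subgroup.mem_subgroupOf.mp ht)
    have hdvd1 : φ.ker.index ∣ (T.subgroupOf N).index := Subgroup.index_dvd_of_le hTk
    have hTS' : T.subgroupOf N ≤ (S : Subgroup G).subgroupOf N := fun x hx =>
      Subgroup.mem_subgroupOf.mpr (hTS (Subgroup.mem_subgroupOf.mp hx))
    have hrel : (T.subgroupOf N).relIndex ((S : Subgroup G).subgroupOf N) = 2 := by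
      rw [Subgroup.relIndex_subgroupOf hSN]
      exact h1a
    have hindex : (T.subgroupOf N).index = 2 * ((S : Subgroup G).subgroupOf N).index := by
      rw [← Subgroup.relIndex_mul_index hTS', hrel]
    have hodd : ¬ 2 ∣ ((S : Subgroup G).subgroupOf N).index := Sylow.not_dvd_index (S.subtype hSN)
    have hker0 : (T.subgroupOf N).index ≠ 0 := Subgroup.index_ne_zero_of_finite
    have hS0 : ((S : Subgroup G).subgroupOf N).index ≠ 0 := Subgroup.index_ne_zero_of_finite
    have hA0 : Nat.card ↥A ≠ 0 := Nat.card_pos.ne'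
    have hfact : (Nat.card ↥A).factorization 2 ≤ 1 := by
      have hAdvd : Nat.card ↥A ∣ (T.subgroupOf N).index := hAcard ▸ hdvd1
      calc (Nat.card ↥A).factorization 2 ≤ ((T.subgroupOf N).index).factorization 2 :=
            (Nat.factorization_le_iff_dvd hA0 hker0).mpr hAdvd 2
        _ ≤ 1 := by
            rw [hindex, Nat.factorization_mul (by norm_num) hS0]
            have hf2 : (Nat.factorization 2) 2 = 1 := Nat.Prime.factorization_self Nat.prime_two
            have hf3 : (((S : Subgroup G).subgroupOf N).index).factorization 2 = 0 :=
              Nat.factorization_eq_zero_of_not_dvd hodd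
            simp [hf2, hf3]
    have hQs2 : Nat.card Qs ≤ 2 := by
      rw [Sylow.card_eq_multiplicity Qs]
      calc 2 ^ ((Nat.card ↥A).factorization 2) ≤ 2 ^ 1 :=
            Nat.pow_le_pow_right (by norm_num) hfact
        _ = 2 := rfl
    calc Nat.card Q = Nat.card (Q.subgroupOf A) := hc1.symm
      _ ≤ Nat.card Qs := Subgroup.card_le_of_le hQle
      _ ≤ 2 := hQs2
  have HK : ∀ x ∈ φ.range, ∀ y ∈ φ.range, x ^ 2 = 1 → y ^ 2 = 1 → Commute x y →
      x = 1 ∨ y = 1 ∨ x = y := by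
    intro x hx y hy hx2 hy2 hxy
    by_contra hcon
    push_neg at hcon
    obtain ⟨hx1, hy1, hxyne⟩ := hcon
    obtain ⟨P, hPset⟩ := StmtFive.exists_klein hx2 hy2 hxy
    have hmem : ∀ w ∈ ({1, x, y, x * y} : Set (MulAut ↥Z)), w ∈ P := fun w hw => by
      rw [← SetLike.mem_coe, hPset]; exact hw
    have hP3 : 3 ≤ Nat.card P :=
      StmtFive.three_le_card (hmem 1 (by simp)) (hmem x (by simp)) (hmem y (by simp))
        (Ne.symm hx1) (Ne.symm hy1) hxyne
    have hPle : P ≤ φ.range := by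
      intro w hw
      rw [← SetLike.mem_coe, hPset] at hw
      rcases hw with rfl | rfl | rfl | rfl
      · exact one_mem _
      · exact hx
      · exact hy
      · exact mul_mem hx hy
    have hP2 : IsPGroup 2 P := by
      intro g
      refine ⟨1, Subtype.ext ?_⟩
      have hg := g.2
      rw [← SetLike.mem_coe, hPset] at hg
      rw [pow_one, SubmonoidClass.coe_pow, OneMemClass.coe_one]
      rcases hg with h | h | h | h <;> rw [h]
      · exact one_pow 2
      · exact hx2
      · exact hy2
      · rw [hxy.mul_pow, hx2, hy2, one_mul]
    have := SB P hP2 hPle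
    omega
  -- KR and transports
  set KR := Subgroup.map φ (K.subgroupOf N) with hKRdef
  have hKRle : KR ≤ φ.range := by
    rintro w ⟨k, hk, rfl⟩
    exact ⟨k, rfl⟩
  set Z₀' := (Subgroup.centralizer (K : Set G)).subgroupOf Z with hZ₀'def
  have hZ₀mem' : ∀ v : ↥Z, v ∈ Z₀' ↔ ∀ κ ∈ KR, κ v = v := by
    intro v
    constructor
    · intro hv κ hκ
      obtain ⟨k', hk', rfl⟩ := hκ
      have hkK : (k' : G) ∈ K := Subgroup.mem_subgroupOf.mp hk'
      have hcomm := Subgroup.mem_centralizer_iff.mp (Subgroup.mem_subgroupOf.mp hv) _ hkK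
      apply Subtype.ext
      rw [hφap]
      calc (k' : G) * ↑v * (↑k')⁻¹ = (↑v * ↑k') * (↑k')⁻¹ := by rw [← hcomm]
        _ = ↑v := by group
    · intro hall
      rw [hZ₀'def, Subgroup.mem_subgroupOf, Subgroup.mem_centralizer_iff]
      intro k hkK
      have hκ : φ ⟨k, hKN hkK⟩ ∈ KR := ⟨⟨k, hKN hkK⟩, Subgroup.mem_subgroupOf.mpr hkK, rfl⟩
      have hfix := congrArg Subtype.val (hall _ hκ)
      rw [hφap] at hfix
      calc k * (v : G) = (k * ↑v * k⁻¹) * k := by group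
        _ = ↑v * k := by rw [hfix]
  have hZ₀ne' : Z₀' ≠ ⊤ := by
    intro h
    apply h2b
    intro z hz
    have hmem : (⟨z, hz⟩ : ↥Z) ∈ Z₀' := h ▸ Subgroup.mem_top _
    exact Subgroup.mem_subgroupOf.mp hmem
  have hirr' : ∀ X : Subgroup ↥Z, Z₀' ≤ X → (∀ κ ∈ KR, ∀ v ∈ X, κ v ∈ X) →
      X = Z₀' ∨ X = ⊤ := by
    intro X hle hinvX
    set Xg := X.map Z.subtype with hXgdef
    have hm1 : Xg ≤ Z := Subgroup.map_subtype_le X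
    have hm2 : Z ⊓ Subgroup.centralizer (K : Set G) ≤ Xg := by
      intro g hg
      exact ⟨⟨g, hg.1⟩, hle (Subgroup.mem_subgroupOf.mpr hg.2), rfl⟩
    have hm3 : ∀ k ∈ K, ∀ x ∈ Xg, k * x * k⁻¹ ∈ Xg := by
      intro k hk x hxg
      obtain ⟨x', hx', rfl⟩ := hxg
      have hκ : φ ⟨k, hKN hk⟩ ∈ KR := ⟨⟨k, hKN hk⟩, Subgroup.mem_subgroupOf.mpr hk, rfl⟩
      exact ⟨φ ⟨k, hKN hk⟩ x', hinvX _ hκ x' hx', hφap _ _⟩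
    rcases h2c Xg hm1 hm2 hm3 with h | h
    · left
      have hmapeq : Xg = Z₀'.map Z.subtype := by
        rw [h, hZ₀'def, Subgroup.subgroupOf_map_subtype, inf_comm]
      exact Subgroup.map_injective Z.subtype_injective (hXgdef ▸ hmapeq)
    · right
      have hmapeq : Xg = (⊤ : Subgroup ↥Z).map Z.subtype := by
        have htop : Subgroup.map Z.subtype ⊤ = Z := by
          rw [← MonoidHom.range_eq_map, Subgroup.range_subtype]
        rw [h, htop]
      exact Subgroup.map_injective Z.subtype_injective (hXgdef ▸ hmapeq)
  have h3' : ∀ v ∈ Z₀', σ v = v → v = 1 := by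
    intro v hv hfix
    have hvC : v ∈ CC := (hfixiff v).mp hfix
    have hbot : (v : G) ∈ (Z ⊓ Subgroup.centralizer (K : Set G)) ⊓
        (Z ⊓ Subgroup.centralizer ((S : Subgroup G) : Set G)) :=
      ⟨⟨v.2, Subgroup.mem_subgroupOf.mp hv⟩, ⟨v.2, Subgroup.mem_subgroupOf.mp hvC⟩⟩
    rw [h3] at hbot
    exact Subtype.ext (Subgroup.mem_bot.mp hbot)
  exact StmtFive.core φ.range KR hKRle HK σ hσR u₀ hTv Z₀' hZ₀mem' hZ₀ne' hirr' h3'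
end

section
/- Let p be a prime and G a finite group. Let V ≤ W be elementary abelian normal p-subgroups of G with [V, J(G)] ≠ 1. Let A ∈ 𝒜(G) with [V, A] ≠ 1 be such that A·C_G(W) is minimal with respect to inclusion among the subgroups B·C_G(W) with B ∈ 𝒜(G) and [W, B] ≠ 1. Assume A is not an over-offender on V, i.e. |V : C_V(A)| ≥ |A : C_A(V)|. Then |W : C_W(A)| = |A : C_A(W)| = |V : C_V(A)| and W = V·C_W(A). -/
/-- `𝒜(H)`: the set of elementary abelian `p`-subgroups of `H` of maximal order. -/
def maxElemAbIn (p : ℕ) {G : Type*} [Group G] (H : Subgroup G) : Set (Subgroup G) :=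
  {A | A ≤ H ∧ IsElementaryAbelian p A ∧
    ∀ B : Subgroup G, B ≤ H → IsElementaryAbelian p B → Nat.card B ≤ Nat.card A}

/-- The Thompson subgroup `J(H)` of `H`, generated by all members of `𝒜(H)`. -/
def thompsonJ (p : ℕ) {G : Type*} [Group G] (H : Subgroup G) : Subgroup G :=
  sSup (maxElemAbIn p H)

section Helpers

variable {G : Type*} [Group G]

/-- Commuting subgroups normalize each other. -/
lemma le_normalizer_of_le_centralizer' {H K : Subgroup G}
    (h : K ≤ Subgroup.centralizer (H : Set G)) : K ≤ Subgroup.normalizer (H : Set G) := by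
  intro k hk
  rw [Subgroup.mem_normalizer_iff]
  intro g
  constructor
  · intro hg
    have hc : g * k = k * g := Subgroup.mem_centralizer_iff.mp (h hk) g hg
    have : k * g * k⁻¹ = g := by rw [← hc, mul_inv_cancel_right]
    rwa [this]
  · intro hg
    have hc : (k * g * k⁻¹) * k = k * (k * g * k⁻¹) :=
      Subgroup.mem_centralizer_iff.mp (h hk) _ hg
    have e : k * (k * g * k⁻¹) = k * g := by rw [← hc]; group
    have := mul_left_cancel e
    rwa [this] at hg

lemma relindex_mul_card' [Finite G] (H K : Subgroup G) :
    H.relIndex K * Nat.card (H ⊓ K : Subgroup G) = Nat.card K := by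
  have h1 : Nat.card ((H ⊓ K).subgroupOf K) = Nat.card (H ⊓ K : Subgroup G) :=
    Nat.card_congr (Subgroup.subgroupOfEquivOfLe inf_le_right).toEquiv
  calc H.relIndex K * Nat.card (H ⊓ K : Subgroup G)
      = (H.subgroupOf K).index * Nat.card ((H ⊓ K).subgroupOf K) := by rw [h1]; rfl
    _ = (H.subgroupOf K).index * Nat.card (H.subgroupOf K) := by
        rw [Subgroup.inf_subgroupOf_right]
    _ = Nat.card (H.subgroupOf K) * (H.subgroupOf K).index := mul_comm _ _
    _ = Nat.card K := Subgroup.card_mul_index _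

lemma card_sup_mul_card_inf' [Finite G] {H K : Subgroup G}
    (h : K ≤ Subgroup.centralizer (H : Set G)) :
    Nat.card (H ⊔ K : Subgroup G) * Nat.card (H ⊓ K : Subgroup G)
      = Nat.card H * Nat.card K := by
  set L : Subgroup G := H ⊔ K with hL
  have hHL : H ≤ L := le_sup_left
  have hKL : K ≤ L := le_sup_right
  have hnorm : L ≤ Subgroup.normalizer (H : Set G) := sup_le Subgroup.le_normalizer
    (le_normalizer_of_le_centralizer' h)
  haveI : (H.subgroupOf L).Normal := by
    rw [Subgroup.normal_subgroupOf_iff hHL]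
    intro a k ha hk
    exact (Subgroup.mem_normalizer_iff.mp (hnorm hk) a).mp ha
  set H' := H.subgroupOf L with hH'
  set K' := K.subgroupOf L with hK'
  have htop : H' ⊔ K' = (⊤ : Subgroup L) := by
    rw [hH', hK', ← Subgroup.subgroupOf_sup hHL hKL, ← hL, Subgroup.subgroupOf_self]
  have e1 : H'.index = H'.relIndex K' := by
    rw [← Subgroup.relIndex_top_right, ← htop, Subgroup.relIndex_sup_left]
  have e2 : H'.relIndex K' * Nat.card (H' ⊓ K' : Subgroup L) = Nat.card K' :=
    relindex_mul_card' _ _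
  have cH : Nat.card H' = Nat.card H := Nat.card_congr (Subgroup.subgroupOfEquivOfLe hHL).toEquiv
  have cK : Nat.card K' = Nat.card K := Nat.card_congr (Subgroup.subgroupOfEquivOfLe hKL).toEquiv
  have hinf : (H ⊓ K).subgroupOf L = H' ⊓ K' := by
    rw [hH', hK']
    exact Subgroup.comap_inf _ _ _
  have cI : Nat.card (H' ⊓ K' : Subgroup L) = Nat.card (H ⊓ K : Subgroup G) := by
    rw [← hinf]
    exact Nat.card_congr (Subgroup.subgroupOfEquivOfLe (inf_le_left.trans hHL)).toEquiv
  have e0 : Nat.card H' * H'.index = Nat.card L := Subgroup.card_mul_index H'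
  calc Nat.card L * Nat.card (H ⊓ K : Subgroup G)
      = Nat.card H' * H'.index * Nat.card (H' ⊓ K' : Subgroup L) := by rw [e0, cI]
    _ = Nat.card H' * (H'.relIndex K' * Nat.card (H' ⊓ K' : Subgroup L)) := by
        rw [e1, mul_assoc]
    _ = Nat.card H * Nat.card K := by rw [e2, cH, cK]

variable {p : ℕ}

lemma IsElementaryAbelian.le_centralizer_self {H : Subgroup G}
    (h : IsElementaryAbelian p H) : H ≤ Subgroup.centralizer (H : Set G) := by
  intro x hx
  rw [Subgroup.mem_centralizer_iff]
  intro g hg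
  exact congrArg Subtype.val (h.1 ⟨g, hg⟩ ⟨x, hx⟩)

lemma IsElementaryAbelian.of_le {H K : Subgroup G}
    (h : IsElementaryAbelian p K) (hle : H ≤ K) : IsElementaryAbelian p H := by
  constructor
  · intro a b
    have := congrArg Subtype.val (h.1 ⟨a, hle a.2⟩ ⟨b, hle b.2⟩)
    simp only [Subgroup.coe_mul] at this
    exact Subtype.ext (by simpa using this)
  · intro a
    have := h.2 ⟨a, hle a.2⟩
    have h2 : ((a : G)) ^ p = 1 := by
      have := congrArg Subtype.val this
      simpa using this
    exact Subtype.ext (by simpa using h2)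

lemma IsElementaryAbelian.sup {H K : Subgroup G}
    (hH : IsElementaryAbelian p H) (hK : IsElementaryAbelian p K)
    (hc : K ≤ Subgroup.centralizer (H : Set G)) : IsElementaryAbelian p (H ⊔ K) := by
  have hc' : H ≤ Subgroup.centralizer (K : Set G) := Subgroup.le_centralizer_iff.mpr hc
  have hsup : H ⊔ K ≤ Subgroup.centralizer ((H ⊔ K : Subgroup G) : Set G) := by
    refine sup_le ?_ ?_ <;> rw [Subgroup.le_centralizer_iff]
    · exact sup_le hH.le_centralizer_self hc
    · exact sup_le hc' hK.le_centralizer_self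
  constructor
  · intro a b
    have := Subgroup.mem_centralizer_iff.mp (hsup b.2) (a : G) a.2
    exact Subtype.ext this
  · intro a
    let T : Subgroup G :=
      { carrier := {x | x ∈ H ⊔ K ∧ x ^ p = 1}
        one_mem' := ⟨one_mem _, one_pow p⟩
        mul_mem' := by
          rintro x y ⟨hx, hxp⟩ ⟨hy, hyp⟩
          refine ⟨mul_mem hx hy, ?_⟩
          have hcomm : Commute x y := Subgroup.mem_centralizer_iff.mp (hsup hy) x hx
          rw [hcomm.mul_pow, hxp, hyp, one_mul]
        inv_mem' := by
          rintro x ⟨hx, hxp⟩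
          exact ⟨inv_mem hx, by rw [inv_pow, hxp, inv_one]⟩ }
    have hHT : H ≤ T := by
      intro x hx
      refine ⟨(le_sup_left : H ≤ H ⊔ K) hx, ?_⟩
      have := congrArg Subtype.val (hH.2 ⟨x, hx⟩)
      simpa using this
    have hKT : K ≤ T := by
      intro x hx
      refine ⟨(le_sup_right : K ≤ H ⊔ K) hx, ?_⟩
      have := congrArg Subtype.val (hK.2 ⟨x, hx⟩)
      simpa using this
    have := ((sup_le hHT hKT) a.2).2
    exact Subtype.ext (by simpa using this)

end Helpers

/-- Let `V ≤ W` be elementary abelian normal `p`-subgroups of a finite group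
`G` with `[V, J(G)] ≠ 1`.  Let `A ∈ 𝒜(G)` with `[V, A] ≠ 1` be such that `A·C_G(W)` is minimal
(with respect to inclusion) among the subgroups `B·C_G(W)` with `B ∈ 𝒜(G)` and `[W, B] ≠ 1`.
If `A` is not an over-offender on `V` (i.e. `|V : C_V(A)| ≥ |A : C_A(V)|`), then
`|W : C_W(A)| = |A : C_A(W)| = |V : C_V(A)|` and `W = V·C_W(A)`. -/
theorem minimal_offender_cover
    {p : ℕ} (hp : p.Prime) {G : Type*} [Group G] [Finite G]
    (V W A : Subgroup G) (hVW : V ≤ W) (hV : V.Normal) (hW : W.Normal)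
    (hVea : IsElementaryAbelian p V) (hWea : IsElementaryAbelian p W)
    (hVJ : ⁅V, thompsonJ p (⊤ : Subgroup G)⁆ ≠ ⊥)
    (hA : A ∈ maxElemAbIn p (⊤ : Subgroup G)) (hVA : ⁅V, A⁆ ≠ ⊥)
    (hmin : ∀ B ∈ maxElemAbIn p (⊤ : Subgroup G), ⁅W, B⁆ ≠ ⊥ →
      B ⊔ Subgroup.centralizer (W : Set G) ≤ A ⊔ Subgroup.centralizer (W : Set G) →
      B ⊔ Subgroup.centralizer (W : Set G) = A ⊔ Subgroup.centralizer (W : Set G))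
    (hno : (Subgroup.centralizer ((V : Subgroup G) : Set G)).relIndex A ≤
      (Subgroup.centralizer ((A : Subgroup G) : Set G)).relIndex V) :
    (Subgroup.centralizer ((A : Subgroup G) : Set G)).relIndex W =
        (Subgroup.centralizer ((W : Subgroup G) : Set G)).relIndex A ∧
      (Subgroup.centralizer ((A : Subgroup G) : Set G)).relIndex W =
        (Subgroup.centralizer ((A : Subgroup G) : Set G)).relIndex V ∧
      W = V ⊔ (W ⊓ Subgroup.centralizer ((A : Subgroup G) : Set G)) := by
  obtain ⟨-, hAea, hAmax⟩ := hA
  -- abbreviations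
  set C : Subgroup G := A ⊓ Subgroup.centralizer (V : Set G) with hCdef
  set D : Subgroup G := W ⊓ Subgroup.centralizer (C : Set G) with hDdef
  set B : Subgroup G := C ⊔ D with hBdef
  set E : Subgroup G := V ⊔ (W ⊓ Subgroup.centralizer (A : Set G)) with hEdef
  -- basic commuting facts
  have hWc : W ≤ Subgroup.centralizer (W : Set G) := hWea.le_centralizer_self
  have hAc : A ≤ Subgroup.centralizer (A : Set G) := hAea.le_centralizer_self
  have hWV : Subgroup.centralizer (W : Set G) ≤ Subgroup.centralizer (V : Set G) :=
    Subgroup.centralizer_le (SetLike.coe_subset_coe.mpr hVW)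
  -- C_W(A) = W ⊓ A
  have hWA : W ⊓ Subgroup.centralizer (A : Set G) = W ⊓ A := by
    apply le_antisymm
    · have hXea : IsElementaryAbelian p (W ⊓ Subgroup.centralizer (A : Set G)) :=
        hWea.of_le inf_le_left
      have hsupea : IsElementaryAbelian p (A ⊔ (W ⊓ Subgroup.centralizer (A : Set G))) :=
        hAea.sup hXea inf_le_right
      have hcard : Nat.card (A ⊔ (W ⊓ Subgroup.centralizer (A : Set G)) : Subgroup G)
          ≤ Nat.card A := hAmax _ le_top hsupea
      have heq : A = A ⊔ (W ⊓ Subgroup.centralizer (A : Set G)) :=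
        Subgroup.eq_of_le_of_card_ge le_sup_left hcard
      exact le_inf inf_le_left (le_sup_right.trans heq.ge)
    · exact le_inf inf_le_left (inf_le_right.trans hAc)
  -- C_V(A) = V ⊓ A
  have hVA2 : V ⊓ Subgroup.centralizer (A : Set G) = V ⊓ A := by
    have h1 : V ⊓ Subgroup.centralizer (A : Set G)
        = V ⊓ (W ⊓ Subgroup.centralizer (A : Set G)) := by
      rw [← inf_assoc, inf_eq_left.mpr hVW]
    rw [h1, hWA, ← inf_assoc, inf_eq_left.mpr hVW]
  -- C ⊓ D = W ⊓ A
  have hWcA : W ⊓ A ≤ Subgroup.centralizer (V : Set G) := (inf_le_left.trans hWc).trans hWV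
  have hCD : C ⊓ D = W ⊓ A := by
    apply le_antisymm
    · exact le_inf (inf_le_right.trans inf_le_left) (inf_le_left.trans inf_le_left)
    · refine le_inf (le_inf inf_le_right hWcA) (le_inf inf_le_left ?_)
      rw [Subgroup.le_centralizer_iff]
      exact inf_le_left.trans (hAc.trans
        (Subgroup.centralizer_le (SetLike.coe_subset_coe.mpr inf_le_right)))
  -- E ≤ D
  have hVcC : V ≤ Subgroup.centralizer (C : Set G) := Subgroup.le_centralizer_iff.mpr inf_le_right
  have hCWAc : W ⊓ Subgroup.centralizer (A : Set G) ≤ Subgroup.centralizer (C : Set G) := by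
    rw [Subgroup.le_centralizer_iff]
    exact inf_le_left.trans (Subgroup.le_centralizer_iff.mpr inf_le_right)
  have hED : E ≤ D := sup_le (le_inf hVW hVcC) (le_inf inf_le_left hCWAc)
  have hDC : D ≤ Subgroup.centralizer (C : Set G) := inf_le_right
  -- product formulas
  have hBcard : Nat.card B * Nat.card (W ⊓ A : Subgroup G) = Nat.card C * Nat.card D := by
    rw [hBdef, ← hCD]
    exact card_sup_mul_card_inf' hDC
  have hCWAcV : W ⊓ Subgroup.centralizer (A : Set G) ≤ Subgroup.centralizer (V : Set G) :=
    (inf_le_left.trans hWc).trans hWV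
  have hEcard : Nat.card E * Nat.card (V ⊓ A : Subgroup G)
      = Nat.card V * Nat.card (W ⊓ A : Subgroup G) := by
    have h0 := card_sup_mul_card_inf' hCWAcV
    rw [← hEdef] at h0
    have h1 : V ⊓ (W ⊓ Subgroup.centralizer (A : Set G)) = V ⊓ A := by
      rw [← inf_assoc, inf_eq_left.mpr hVW, hVA2]
    rw [h1, hWA] at h0
    exact h0
  -- the offender inequality, in cardinality form
  have hr1 : (Subgroup.centralizer (V : Set G)).relIndex A * Nat.card C = Nat.card A := by
    have := relindex_mul_card' (Subgroup.centralizer (V : Set G)) A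
    have hc : Subgroup.centralizer (V : Set G) ⊓ A = C := by rw [hCdef, inf_comm]
    rwa [hc] at this
  have hr2 : (Subgroup.centralizer (A : Set G)).relIndex V * Nat.card (V ⊓ A : Subgroup G)
      = Nat.card V := by
    have := relindex_mul_card' (Subgroup.centralizer (A : Set G)) V
    have hc : Subgroup.centralizer (A : Set G) ⊓ V = V ⊓ A := by rw [inf_comm, hVA2]
    rwa [hc] at this
  have hoff : Nat.card A * Nat.card (V ⊓ A : Subgroup G) ≤ Nat.card V * Nat.card C := by
    calc Nat.card A * Nat.card (V ⊓ A : Subgroup G)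
        = (Subgroup.centralizer (V : Set G)).relIndex A * Nat.card C
            * Nat.card (V ⊓ A : Subgroup G) := by rw [hr1]
      _ ≤ (Subgroup.centralizer (A : Set G)).relIndex V * Nat.card C
            * Nat.card (V ⊓ A : Subgroup G) :=
          Nat.mul_le_mul_right _ (Nat.mul_le_mul_right _ hno)
      _ = (Subgroup.centralizer (A : Set G)).relIndex V * Nat.card (V ⊓ A : Subgroup G)
            * Nat.card C := by ring
      _ = Nat.card V * Nat.card C := by rw [hr2]
  -- B is elementary abelian of maximal order
  have hCea : IsElementaryAbelian p C := hAea.of_le inf_le_left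
  have hDea : IsElementaryAbelian p D := hWea.of_le inf_le_left
  have hBea : IsElementaryAbelian p B := by
    rw [hBdef]; exact hCea.sup hDea hDC
  have hBle : Nat.card B ≤ Nat.card A := hAmax _ le_top hBea
  have hEle : Nat.card E ≤ Nat.card D := Subgroup.card_le_of_le hED
  -- positivity
  have posWA : 0 < Nat.card (W ⊓ A : Subgroup G) := Nat.card_pos
  have posVA : 0 < Nat.card (V ⊓ A : Subgroup G) := Nat.card_pos
  have posC : 0 < Nat.card C := Nat.card_pos
  -- the numerical chain
  have u3 : Nat.card B * Nat.card (W ⊓ A : Subgroup G) * Nat.card (V ⊓ A : Subgroup G)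
      = Nat.card C * Nat.card D * Nat.card (V ⊓ A : Subgroup G) := by rw [hBcard]
  have uc : Nat.card C * Nat.card E * Nat.card (V ⊓ A : Subgroup G)
      = Nat.card V * Nat.card C * Nat.card (W ⊓ A : Subgroup G) := by
    calc Nat.card C * Nat.card E * Nat.card (V ⊓ A : Subgroup G)
        = Nat.card C * (Nat.card E * Nat.card (V ⊓ A : Subgroup G)) := by ring
      _ = Nat.card C * (Nat.card V * Nat.card (W ⊓ A : Subgroup G)) := by rw [hEcard]
      _ = Nat.card V * Nat.card C * Nat.card (W ⊓ A : Subgroup G) := by ring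
  have hle1 : Nat.card A * Nat.card (W ⊓ A : Subgroup G) * Nat.card (V ⊓ A : Subgroup G)
      ≤ Nat.card C * Nat.card E * Nat.card (V ⊓ A : Subgroup G) := by
    rw [uc]
    calc Nat.card A * Nat.card (W ⊓ A : Subgroup G) * Nat.card (V ⊓ A : Subgroup G)
        = Nat.card A * Nat.card (V ⊓ A : Subgroup G) * Nat.card (W ⊓ A : Subgroup G) := by ring
      _ ≤ Nat.card V * Nat.card C * Nat.card (W ⊓ A : Subgroup G) :=
          Nat.mul_le_mul_right _ hoff
  have hle2 : Nat.card C * Nat.card E * Nat.card (V ⊓ A : Subgroup G)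
      ≤ Nat.card C * Nat.card D * Nat.card (V ⊓ A : Subgroup G) :=
    Nat.mul_le_mul_right _ (Nat.mul_le_mul_left _ hEle)
  have hle3 : Nat.card B * Nat.card (W ⊓ A : Subgroup G) * Nat.card (V ⊓ A : Subgroup G)
      ≤ Nat.card A * Nat.card (W ⊓ A : Subgroup G) * Nat.card (V ⊓ A : Subgroup G) :=
    Nat.mul_le_mul_right _ (Nat.mul_le_mul_right _ hBle)
  have hEq1 : Nat.card B * Nat.card (W ⊓ A : Subgroup G) * Nat.card (V ⊓ A : Subgroup G)
      = Nat.card A * Nat.card (W ⊓ A : Subgroup G) * Nat.card (V ⊓ A : Subgroup G) :=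
    le_antisymm hle3 (by
      calc Nat.card A * Nat.card (W ⊓ A : Subgroup G) * Nat.card (V ⊓ A : Subgroup G)
          ≤ Nat.card C * Nat.card E * Nat.card (V ⊓ A : Subgroup G) := hle1
        _ ≤ Nat.card C * Nat.card D * Nat.card (V ⊓ A : Subgroup G) := hle2
        _ = Nat.card B * Nat.card (W ⊓ A : Subgroup G) * Nat.card (V ⊓ A : Subgroup G) :=
            u3.symm)
  have eqB : Nat.card B = Nat.card A :=
    Nat.eq_of_mul_eq_mul_right posWA (Nat.eq_of_mul_eq_mul_right posVA hEq1)
  have hEq2 : Nat.card C * Nat.card D * Nat.card (V ⊓ A : Subgroup G)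
      = Nat.card C * Nat.card E * Nat.card (V ⊓ A : Subgroup G) :=
    le_antisymm (by
      calc Nat.card C * Nat.card D * Nat.card (V ⊓ A : Subgroup G)
          = Nat.card B * Nat.card (W ⊓ A : Subgroup G) * Nat.card (V ⊓ A : Subgroup G) :=
            u3.symm
        _ ≤ Nat.card A * Nat.card (W ⊓ A : Subgroup G) * Nat.card (V ⊓ A : Subgroup G) := hle3
        _ ≤ Nat.card C * Nat.card E * Nat.card (V ⊓ A : Subgroup G) := hle1) hle2
  have eqD : Nat.card D = Nat.card E :=
    Nat.eq_of_mul_eq_mul_left posC (Nat.eq_of_mul_eq_mul_right posVA hEq2)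
  have hEq3 : Nat.card C * Nat.card E * Nat.card (V ⊓ A : Subgroup G)
      = Nat.card A * Nat.card (W ⊓ A : Subgroup G) * Nat.card (V ⊓ A : Subgroup G) :=
    le_antisymm (by
      calc Nat.card C * Nat.card E * Nat.card (V ⊓ A : Subgroup G)
          ≤ Nat.card C * Nat.card D * Nat.card (V ⊓ A : Subgroup G) := hle2
        _ = Nat.card B * Nat.card (W ⊓ A : Subgroup G) * Nat.card (V ⊓ A : Subgroup G) :=
            u3.symm
        _ ≤ Nat.card A * Nat.card (W ⊓ A : Subgroup G) * Nat.card (V ⊓ A : Subgroup G) :=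
            hle3) hle1
  have eqoff : Nat.card V * Nat.card C = Nat.card A * Nat.card (V ⊓ A : Subgroup G) := by
    have h0 : Nat.card V * Nat.card C * Nat.card (W ⊓ A : Subgroup G)
        = Nat.card A * Nat.card (V ⊓ A : Subgroup G) * Nat.card (W ⊓ A : Subgroup G) := by
      rw [← uc, hEq3]; ring
    exact Nat.eq_of_mul_eq_mul_right posWA h0
  have hDE : E = D := Subgroup.eq_of_le_of_card_ge hED eqD.le
  -- B ∈ 𝒜(G)
  have hBmem : B ∈ maxElemAbIn p (⊤ : Subgroup G) :=
    ⟨le_top, hBea, fun B' h1 h2 => (hAmax B' h1 h2).trans eqB.ge⟩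
  -- the key case distinction
  by_cases hWB : ⁅W, B⁆ = ⊥
  · -- [W, B] = 1 : then W = D = E, and all conclusions follow
    have hWD : W ≤ D := by
      refine le_inf le_rfl ?_
      have h0 : W ≤ Subgroup.centralizer (B : Set G) :=
        Subgroup.commutator_eq_bot_iff_le_centralizer.mp hWB
      exact h0.trans (Subgroup.centralizer_le
        (SetLike.coe_subset_coe.mpr (hBdef ▸ (le_sup_left : C ≤ C ⊔ D))))
    have hDW : D = W := le_antisymm inf_le_left hWD
    have hWE : W = E := by rw [← hDW]; exact hDE.symm
    -- relindex conversions
    have rW : (Subgroup.centralizer (A : Set G)).relIndex W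
        * Nat.card (W ⊓ A : Subgroup G) = Nat.card W := by
      have := relindex_mul_card' (Subgroup.centralizer (A : Set G)) W
      have hc : Subgroup.centralizer (A : Set G) ⊓ W = W ⊓ A := by rw [inf_comm, hWA]
      rwa [hc] at this
    have rA : (Subgroup.centralizer (W : Set G)).relIndex A * Nat.card C = Nat.card A := by
      have := relindex_mul_card' (Subgroup.centralizer (W : Set G)) A
      have hc : Subgroup.centralizer (W : Set G) ⊓ A = C := by
        apply le_antisymm
        · exact le_inf inf_le_right (inf_le_left.trans hWV)
        · refine le_inf ?_ inf_le_left
          rw [Subgroup.le_centralizer_iff]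
          exact hDW ▸ hDC
      rwa [hc] at this
    have hWcard : Nat.card W * Nat.card (V ⊓ A : Subgroup G)
        = Nat.card V * Nat.card (W ⊓ A : Subgroup G) := by
      have h0 := hEcard
      rw [← hWE] at h0
      exact h0
    -- |W : C_W(A)| = |V : C_V(A)|
    have g2 : (Subgroup.centralizer (A : Set G)).relIndex W
        = (Subgroup.centralizer (A : Set G)).relIndex V := by
      have h0 : (Subgroup.centralizer (A : Set G)).relIndex W
          * (Nat.card (W ⊓ A : Subgroup G) * Nat.card (V ⊓ A : Subgroup G))
          = (Subgroup.centralizer (A : Set G)).relIndex V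
          * (Nat.card (W ⊓ A : Subgroup G) * Nat.card (V ⊓ A : Subgroup G)) := by
        calc (Subgroup.centralizer (A : Set G)).relIndex W
            * (Nat.card (W ⊓ A : Subgroup G) * Nat.card (V ⊓ A : Subgroup G))
            = (Subgroup.centralizer (A : Set G)).relIndex W
              * Nat.card (W ⊓ A : Subgroup G) * Nat.card (V ⊓ A : Subgroup G) := by ring
          _ = Nat.card W * Nat.card (V ⊓ A : Subgroup G) := by rw [rW]
          _ = Nat.card V * Nat.card (W ⊓ A : Subgroup G) := hWcard
          _ = (Subgroup.centralizer (A : Set G)).relIndex V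
              * Nat.card (V ⊓ A : Subgroup G) * Nat.card (W ⊓ A : Subgroup G) := by rw [hr2]
          _ = (Subgroup.centralizer (A : Set G)).relIndex V
              * (Nat.card (W ⊓ A : Subgroup G) * Nat.card (V ⊓ A : Subgroup G)) := by ring
      exact Nat.eq_of_mul_eq_mul_right (Nat.mul_pos posWA posVA) h0
    -- |A : C_A(W)| = |V : C_V(A)|
    have g1 : (Subgroup.centralizer (W : Set G)).relIndex A
        = (Subgroup.centralizer (A : Set G)).relIndex V := by
      have h0 : (Subgroup.centralizer (W : Set G)).relIndex A
          * (Nat.card C * Nat.card (V ⊓ A : Subgroup G))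
          = (Subgroup.centralizer (A : Set G)).relIndex V
          * (Nat.card C * Nat.card (V ⊓ A : Subgroup G)) := by
        calc (Subgroup.centralizer (W : Set G)).relIndex A
            * (Nat.card C * Nat.card (V ⊓ A : Subgroup G))
            = (Subgroup.centralizer (W : Set G)).relIndex A
              * Nat.card C * Nat.card (V ⊓ A : Subgroup G) := by ring
          _ = Nat.card A * Nat.card (V ⊓ A : Subgroup G) := by rw [rA]
          _ = Nat.card V * Nat.card C := eqoff.symm
          _ = (Subgroup.centralizer (A : Set G)).relIndex V
              * Nat.card (V ⊓ A : Subgroup G) * Nat.card C := by rw [hr2]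
          _ = (Subgroup.centralizer (A : Set G)).relIndex V
              * (Nat.card C * Nat.card (V ⊓ A : Subgroup G)) := by ring
      exact Nat.eq_of_mul_eq_mul_right (Nat.mul_pos posC posVA) h0
    exact ⟨g2.trans g1.symm, g2, hWE⟩
  · -- [W, B] ≠ 1 : contradiction with [V, A] ≠ 1 via minimality
    exfalso
    have hBZ : B ⊔ Subgroup.centralizer (W : Set G) ≤ A ⊔ Subgroup.centralizer (W : Set G) := by
      refine sup_le (hBdef ▸ sup_le ?_ ?_) le_sup_right
      · exact (inf_le_left : C ≤ A).trans le_sup_left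
      · exact ((inf_le_left : D ≤ W).trans hWc).trans le_sup_right
    have heq := hmin B hBmem hWB hBZ
    have hVcB : V ≤ Subgroup.centralizer
        ((B ⊔ Subgroup.centralizer (W : Set G) : Subgroup G) : Set G) := by
      rw [Subgroup.le_centralizer_iff]
      refine sup_le (hBdef ▸ sup_le ?_ ?_) hWV
      · exact inf_le_right
      · exact (inf_le_left.trans hWc).trans hWV
    have hACB : A ≤ B ⊔ Subgroup.centralizer (W : Set G) := by
      rw [heq]; exact le_sup_left
    have hVcA : V ≤ Subgroup.centralizer (A : Set G) :=
      hVcB.trans (Subgroup.centralizer_le (SetLike.coe_subset_coe.mpr hACB))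
    exact hVA (Subgroup.commutator_eq_bot_iff_le_centralizer.mpr hVcA)
end

section
/- Let p be a prime and G a finite group which is minimal parabolic with respect to p, with Sylow p-subgroup T. Then for every normal subgroup N of G, either N ∩ T is normal in G, or the quotient G/N is a p-group. -/
open Subgroup

/-- Frattini-type argument: for `N ⊴ G` and `T` a Sylow `p`-subgroup of `G`,
`N ⊓ T` is a Sylow `p`-subgroup of `N`, so `N_G(N ⊓ T) ⊔ N = ⊤`. -/
lemma frattini_inf_aux {p : ℕ} [Fact p.Prime] {G : Type*} [Group G] [Finite G]
    (T : Sylow p G) (N : Subgroup G) (hN : N.Normal) :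
    Subgroup.normalizer ((N ⊓ (T : Subgroup G) : Subgroup G) : Set G) ⊔ N = ⊤ := by
  obtain ⟨P⟩ : Nonempty (Sylow p N) := inferInstance
  set Q : Subgroup G := Subgroup.map N.subtype (P : Subgroup N) with hQdef
  have hQN : Q ≤ N := map_subtype_le _
  obtain ⟨S, hQS⟩ := (P.2.map N.subtype).exists_le_sylow
  have hSN : (S : Subgroup G) ⊓ N = Q := by
    have h1 : (P : Subgroup N) ≤ ((S : Subgroup G) ⊓ N).subgroupOf N := by
      intro x hx
      exact ⟨hQS ⟨x, hx, rfl⟩, x.2⟩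
    have h2 : IsPGroup p (((S : Subgroup G) ⊓ N).subgroupOf N) :=
      (S.2.to_inf_left.comap_of_injective N.subtype N.subtype_injective)
    have h3 := P.3 h2 h1
    have := congrArg (Subgroup.map N.subtype) h3
    rwa [subgroupOf_map_subtype, inf_of_le_left inf_le_right] at this
  obtain ⟨g, hg⟩ := MulAction.exists_smul_eq G S T
  set f : G ≃* G := MulAut.conj g with hf
  have hmapN : Subgroup.map f.toMonoidHom N = N := by
    ext x
    constructor
    · rintro ⟨n, hn, rfl⟩
      exact hN.conj_mem n hn g
    · intro hx
      exact ⟨g⁻¹ * x * g, by simpa using hN.conj_mem x hx g⁻¹, by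
        simp [hf, MulAut.conj_apply, mul_assoc]⟩
  have hT : (T : Subgroup G) = Subgroup.map f.toMonoidHom (S : Subgroup G) := by
    rw [← hg]
    rfl
  have hinf : N ⊓ (T : Subgroup G) = Subgroup.map f.toMonoidHom Q := by
    rw [← hSN, Subgroup.map_inf _ _ f.toMonoidHom f.injective, hmapN, hT, inf_comm]
  have hfr := Sylow.normalizer_sup_eq_top (G := G) (N := N) P
  have := congrArg (Subgroup.map f.toMonoidHom) hfr
  rwa [Subgroup.map_sup, map_equiv_normalizer_eq, hmapN, ← hinf,
    Subgroup.map_top_of_surjective _ f.surjective] at this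

/-- A finite group `G` with Sylow `p`-subgroup `T` is *minimal parabolic* (with respect to `p`)
if `T` is not normal in `G` and there is a unique maximal subgroup of `G` containing `T`. -/
def IsMinimalParabolic (p : ℕ) (G : Type*) [Group G] (T : Sylow p G) : Prop :=
  ¬ (T : Subgroup G).Normal ∧ ∃! M : Subgroup G, IsCoatom M ∧ (T : Subgroup G) ≤ M

/-- If `G` is minimal parabolic with respect to `p`, with Sylow `p`-subgroup
`T`, then for every normal subgroup `N` of `G`, either `N ∩ T` is normal in `G` or `G/N` is a
`p`-group. -/
theorem normal_inter_sylow_or_pGroup_quotient_of_minimalParabolic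
    {p : ℕ} (hp : p.Prime) {G : Type*} [Group G] [Finite G] (T : Sylow p G)
    (hmin : IsMinimalParabolic p G T)
    (N : Subgroup G) (hN : N.Normal) :
    (N ⊓ (T : Subgroup G)).Normal ∨ IsPGroup p (G ⧸ N) := by
  haveI : Fact p.Prime := ⟨hp⟩
  haveI : Finite (Subgroup G) := Finite.of_injective _ SetLike.coe_injective
  obtain ⟨hTnn, M, ⟨hM, hTM⟩, huniq⟩ := hmin
  have key : ∀ H : Subgroup G, H ≠ ⊤ → (T : Subgroup G) ≤ H → H ≤ M := by
    intro H hH hTH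
    obtain ⟨M', hM', hHM'⟩ := (eq_top_or_exists_le_coatom H).resolve_left hH
    rw [← huniq M' ⟨hM', hTH.trans hHM'⟩]
    exact hHM'
  by_cases hnt : Subgroup.normalizer ((N ⊓ (T : Subgroup G) : Subgroup G) : Set G) = ⊤
  · left
    exact Subgroup.normalizer_eq_top_iff.mp hnt
  right
  have hTnorm : (T : Subgroup G) ≤ Subgroup.normalizer ((N ⊓ (T : Subgroup G) : Subgroup G) : Set G) := by
    intro t ht
    rw [Subgroup.mem_normalizer_iff]
    intro h
    constructor
    · rintro ⟨h1, h2⟩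
      exact ⟨hN.conj_mem h h1 t, mul_mem (mul_mem ht h2) ((T : Subgroup G).inv_mem ht)⟩
    · rintro ⟨h1, h2⟩
      have e : h = t⁻¹ * (t * h * t⁻¹) * t := by group
      constructor
      · rw [e]; simpa using hN.conj_mem _ h1 t⁻¹
      · rw [e]; exact mul_mem (mul_mem ((T : Subgroup G).inv_mem ht) h2) ht
  have hNT : N ⊔ (T : Subgroup G) = ⊤ := by
    by_contra hne
    have h1 : Subgroup.normalizer ((N ⊓ (T : Subgroup G) : Subgroup G) : Set G) ≤ M := key _ hnt hTnorm
    have h2 : N ≤ M := le_sup_left.trans (key _ hne le_sup_right)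
    have hfr := frattini_inf_aux T N hN
    have : (⊤ : Subgroup G) ≤ M := hfr ▸ sup_le h1 h2
    exact hM.1 (top_le_iff.mp this)
  have hmapT : Subgroup.map (QuotientGroup.mk' N) (T : Subgroup G) = ⊤ := by
    have h1 : Subgroup.map (QuotientGroup.mk' N) (N ⊔ (T : Subgroup G)) = ⊤ := by
      rw [hNT]
      exact Subgroup.map_top_of_surjective _ (QuotientGroup.mk'_surjective N)
    rwa [Subgroup.map_sup, QuotientGroup.map_mk'_self, bot_sup_eq] at h1
  have hpg := T.2.map (QuotientGroup.mk' N)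
  rw [hmapT] at hpg
  exact hpg.of_equiv Subgroup.topEquiv
end

section
/- Let p be a prime and G a finite group which is minimal parabolic with respect to p, and suppose every normal p-subgroup of G is trivial. Then for every normal subgroup N of G, either the quotient G/N is a p-group, or N is contained in the Frattini subgroup Φ(G). -/
open Subgroup Pointwise

private lemma OrderIso.isCoatom_map' {α β : Type*} [PartialOrder α] [OrderTop α]
    [PartialOrder β] [OrderTop β] (f : α ≃o β) {a : α} (h : IsCoatom a) : IsCoatom (f a) := by
  constructor
  · intro ht
    exact h.1 (f.injective (by rw [ht, f.map_top]))
  · intro b hb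
    rw [← f.apply_symm_apply b] at hb ⊢
    rw [h.2 _ (f.lt_iff_lt.mp hb), f.map_top]

private lemma isCoatom_conj_smul {G : Type*} [Group G] (g : G) {C : Subgroup G}
    (hC : IsCoatom C) : IsCoatom (MulAut.conj g • C) := by
  have : MulAut.conj g • C = (MulEquiv.mapSubgroup (MulAut.conj g : G ≃* G)) C := rfl
  rw [this]
  exact OrderIso.isCoatom_map' _ hC

/-- Let `G` be a finite group that is minimal parabolic with respect to the
prime `p`, and suppose every normal `p`-subgroup of `G` is trivial.  Then for every normal
subgroup `N` of `G`, either `G/N` is a `p`-group, or `N` is contained in the Frattini subgroup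
of `G`. -/
theorem pGroup_quotient_or_le_frattini_of_minimalParabolic
    {p : ℕ} (hp : p.Prime) {G : Type*} [Group G] [Finite G] (T : Sylow p G)
    (hmin : IsMinimalParabolic p G T)
    (hOp : ∀ P : Subgroup G, P.Normal → IsPGroup p P → P = ⊥)
    (N : Subgroup G) (hN : N.Normal) :
    IsPGroup p (G ⧸ N) ∨ N ≤ frattini G := by
  haveI : Fact p.Prime := ⟨hp⟩
  by_cases htop : (T : Subgroup G) ⊔ N = ⊤
  · -- `G/N` is a `p`-group
    left
    intro q
    obtain ⟨x, rfl⟩ := QuotientGroup.mk'_surjective N q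
    have hx : x ∈ ((T : Subgroup G) ⊔ N) := htop ▸ Subgroup.mem_top x
    rw [← SetLike.mem_coe, Subgroup.mul_normal] at hx
    obtain ⟨t, ht, n, hn, rfl⟩ := hx
    obtain ⟨k, hk⟩ := T.2 ⟨t, ht⟩
    refine ⟨k, ?_⟩
    have htk : t ^ p ^ k = 1 := by
      have := congrArg (Subtype.val) hk
      simpa using this
    have h2 : (QuotientGroup.mk' N) n = 1 := (QuotientGroup.eq_one_iff n).mpr hn
    have h1 : (QuotientGroup.mk' N) (t * n) = (QuotientGroup.mk' N) t := by
      rw [map_mul, h2, mul_one]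
    rw [h1, ← map_pow, htk, map_one]
  · -- `N ≤ frattini G`
    right
    obtain ⟨M, ⟨hM, hTM⟩, huniq⟩ := hmin.2
    have hNM : N ≤ M := by
      rcases eq_top_or_exists_le_coatom ((T : Subgroup G) ⊔ N) with h | ⟨C, hC, hle⟩
      · exact absurd h htop
      · have hCM : C = M := huniq C ⟨hC, le_sup_left.trans hle⟩
        exact hCM ▸ (le_sup_right.trans hle)
    -- Step A: a Sylow `p`-subgroup of `N` contained in `T`
    obtain ⟨Q0⟩ := (Sylow.nonempty : Nonempty (Sylow p ↥N))
    set K : Subgroup G := (Q0 : Subgroup ↥N).map N.subtype with hKdef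
    have hKp : IsPGroup p K := Q0.2.map _
    have hKN : K ≤ N := map_subtype_le _
    obtain ⟨R, hKR⟩ := hKp.exists_le_sylow
    obtain ⟨g, hg⟩ := MulAction.exists_smul_eq G R T
    set K' : Subgroup G := MulAut.conj g • K with hK'def
    have hK'T : K' ≤ (T : Subgroup G) := by
      have h1 : MulAut.conj g • K ≤ MulAut.conj g • (R : Subgroup G) :=
        (pointwise_smul_le_pointwise_smul_iff).mpr hKR
      rwa [← Sylow.coe_subgroup_smul, hg] at h1
    have hK'N : K' ≤ N := by
      have h1 : MulAut.conj g • K ≤ MulAut.conj g • N :=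
        (pointwise_smul_le_pointwise_smul_iff).mpr hKN
      rwa [Normal.conj_smul_eq_self g N] at h1
    have hcardK' : Nat.card K' = p ^ (Nat.card N).factorization p := by
      have h1 : Nat.card K' = Nat.card K :=
        Nat.card_congr (Subgroup.equivSMul (MulAut.conj g) K).toEquiv.symm
      have h2 : Nat.card K = Nat.card Q0 :=
        (Nat.card_congr ((Q0 : Subgroup ↥N).equivMapOfInjective _ N.subtype_injective).toEquiv).symm
      rw [h1, h2, Q0.card_eq_multiplicity]
    have hK'p : IsPGroup p K' := IsPGroup.of_card hcardK'
    have hK'sub_card : Nat.card (K'.subgroupOf N) = p ^ (Nat.card ↥N).factorization p := by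
      rw [Nat.card_congr (Subgroup.subgroupOfEquivOfLe hK'N).toEquiv, hcardK']
    let Q' : Sylow p ↥N := Sylow.ofCard (K'.subgroupOf N) hK'sub_card
    have hQ'coe : (Q' : Subgroup ↥N) = K'.subgroupOf N := rfl
    have hQ'map : (Q' : Subgroup ↥N).map N.subtype = K' := by
      rw [hQ'coe, subgroupOf_map_subtype, inf_of_le_left hK'N]
    have hfr : normalizer (K' : Set G) ⊔ N = ⊤ := by
      have h1 := Sylow.normalizer_sup_eq_top (N := N) Q'
      rwa [hQ'map] at h1
    -- `K' = T ⊓ N`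
    have hK'eq : K' = (T : Subgroup G) ⊓ N := by
      refine le_antisymm (le_inf hK'T hK'N) ?_
      have hsub : ((T : Subgroup G) ⊓ N).subgroupOf N = Q' := by
        apply Q'.3
        · have hXp : IsPGroup p ((T : Subgroup G) ⊓ N : Subgroup G) := T.2.to_inf_left
          exact hXp.comap_of_injective N.subtype N.subtype_injective
        · rw [hQ'coe]
          exact comap_mono (le_inf hK'T hK'N)
      have h1 := congrArg (Subgroup.map N.subtype) hsub
      rw [subgroupOf_map_subtype, hQ'map, inf_assoc, inf_idem] at h1
      exact h1.le
    have hTnorm : (T : Subgroup G) ≤ normalizer (K' : Set G) := by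
      rw [hK'eq]
      intro t ht
      rw [mem_normalizer_iff]
      intro h
      simp only [Subgroup.mem_inf]
      constructor
      · rintro ⟨h1, h2⟩
        exact ⟨mul_mem (mul_mem ht h1) (inv_mem ht), hN.conj_mem h h2 t⟩
      · rintro ⟨h1, h2⟩
        have e : h = t⁻¹ * (t * h * t⁻¹) * t⁻¹⁻¹ := by group
        exact ⟨e ▸ mul_mem (mul_mem (inv_mem ht) h1) (inv_mem (inv_mem ht)),
          e ▸ hN.conj_mem _ h2 t⁻¹⟩
    have hK'norm : normalizer (K' : Set G) = ⊤ := by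
      rcases eq_top_or_exists_le_coatom (normalizer (K' : Set G)) with h | ⟨C, hC, hle⟩
      · exact h
      · exfalso
        have hCM : C = M := huniq C ⟨hC, hTnorm.trans hle⟩
        have hle2 : (⊤ : Subgroup G) ≤ M := by
          rw [← hfr]
          exact sup_le (hCM ▸ hle) hNM
        exact hM.1 (top_le_iff.mp hle2)
    have hK'bot : K' = ⊥ := hOp K' (normalizer_eq_top_iff.mp hK'norm) hK'p
    have hpN : ¬ p ∣ Nat.card N := by
      intro hdvd
      have h1 : p ^ (Nat.card N).factorization p = 1 := by
        rw [← hcardK', hK'bot, Subgroup.card_bot]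
      have hpos : (Nat.card N) ≠ 0 := Nat.card_pos.ne'
      have h2 : 0 < (Nat.card N).factorization p :=
        Nat.Prime.factorization_pos_of_dvd hp hpos hdvd
      have := Nat.one_lt_pow h2.ne' hp.one_lt
      omega
    -- Step B: `N` is contained in every maximal subgroup
    show N ≤ frattini G
    rw [frattini, Order.radical]
    refine le_iInf₂ fun C hC => ?_
    by_contra hNC
    have hsupC : N ⊔ C = ⊤ := by
      refine hC.2 _ (lt_of_le_of_ne le_sup_right fun h => hNC ?_)
      rw [h]
      exact le_sup_left
    set F : N ⧸ (C.subgroupOf N) → G ⧸ C :=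
      fun q => Quotient.liftOn' q (fun n => ((n : G) : G ⧸ C)) (fun a b hab => by
        rw [QuotientGroup.leftRel_apply] at hab
        exact QuotientGroup.eq.mpr (by simpa [Subgroup.mem_subgroupOf] using hab)) with hFdef
    have Finj : Function.Injective F := by
      intro q1 q2
      refine Quotient.inductionOn₂' q1 q2 fun a b h => ?_
      have h' : ((a : G))⁻¹ * (b : G) ∈ C := QuotientGroup.eq.mp h
      apply Quotient.sound'
      rw [QuotientGroup.leftRel_apply]
      exact Subgroup.mem_subgroupOf.mpr (by simpa using h')
    have Fsurj : Function.Surjective F := by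
      intro q
      obtain ⟨x, rfl⟩ := QuotientGroup.mk_surjective q
      have hx : x ∈ (N ⊔ C) := by rw [hsupC]; exact Subgroup.mem_top x
      rw [← SetLike.mem_coe, Subgroup.normal_mul] at hx
      obtain ⟨n, hn, c, hc, rfl⟩ := hx
      exact ⟨Quotient.mk'' ⟨n, hn⟩, QuotientGroup.eq.mpr (by simpa using hc)⟩
    have key : C.index = (C.subgroupOf N).index := by
      rw [Subgroup.index, Subgroup.index]
      exact (Nat.card_congr (Equiv.ofBijective F ⟨Finj, Fsurj⟩)).symm
    have hidx : C.index ∣ Nat.card N := key ▸ Subgroup.index_dvd_card _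
    have hpidx : ¬ p ∣ C.index := fun h => hpN (h.trans hidx)
    obtain ⟨S⟩ := (Sylow.nonempty : Nonempty (Sylow p ↥C))
    have hcardS : Nat.card ((S : Subgroup ↥C).map C.subtype) =
        p ^ (Nat.card G).factorization p := by
      rw [← Nat.card_congr ((S : Subgroup ↥C).equivMapOfInjective _ C.subtype_injective).toEquiv,
        S.card_eq_multiplicity]
      congr 1
      have hG : Nat.card G = Nat.card C * C.index := (Subgroup.card_mul_index C).symm
      rw [hG, Nat.factorization_mul Nat.card_pos.ne' (Subgroup.index_ne_zero_of_finite),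
        Finsupp.add_apply, Nat.factorization_eq_zero_of_not_dvd hpidx, add_zero]
    let R' : Sylow p G := Sylow.ofCard _ hcardS
    have hR'C : (R' : Subgroup G) ≤ C := map_subtype_le _
    obtain ⟨g', hg'⟩ := MulAction.exists_smul_eq G R' T
    have hTgC : (T : Subgroup G) ≤ MulAut.conj g' • C := by
      have h1 : MulAut.conj g' • (R' : Subgroup G) ≤ MulAut.conj g' • C :=
        (pointwise_smul_le_pointwise_smul_iff).mpr hR'C
      rwa [← Sylow.coe_subgroup_smul, hg'] at h1
    have hgC : MulAut.conj g' • C = M := huniq _ ⟨isCoatom_conj_smul g' hC, hTgC⟩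
    apply hNC
    have hle3 : N ≤ MulAut.conj g' • C := hgC ▸ hNM
    have h4 : (MulAut.conj g')⁻¹ • N ≤ (MulAut.conj g')⁻¹ • (MulAut.conj g' • C) :=
      (pointwise_smul_le_pointwise_smul_iff).mpr hle3
    rwa [inv_smul_smul, ← map_inv MulAut.conj g', Normal.conj_smul_eq_self] at h4
end

section
/- Let p be a prime, G a finite group, T a Sylow p-subgroup of G, and H a subgroup with N_G(T) ≤ H < G. Let P be a subgroup of G which is minimal with respect to inclusion among subgroups satisfying T ≤ P and P not contained in H. Then P is minimal parabolic with respect to p (with Sylow p-subgroup T), and H ∩ P is the unique maximal subgroup of P containing T. -/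
/-- Let `p` be a prime, `G` a finite group, `T` a Sylow `p`-subgroup of `G`,
and `H` a subgroup with `N_G(T) ≤ H < G`.  Let `P` be minimal (with respect to inclusion) among
the subgroups of `G` satisfying `T ≤ P` and `P ≰ H`.  Then `P` is minimal parabolic with respect
to `p` (with Sylow `p`-subgroup `T`): `T` is not normal in `P` and `H ∩ P` is the unique maximal
subgroup of `P` containing `T`. -/
theorem minimalParabolic_of_minimal_not_le
    {p : ℕ} (hp : p.Prime) {G : Type*} [Group G] [Finite G] (T : Sylow p G)
    (H P : Subgroup G)
    (hNH : Subgroup.normalizer ((T : Subgroup G) : Set G) ≤ H) (hHG : H < ⊤)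
    (hTP : (T : Subgroup G) ≤ P) (hPH : ¬ P ≤ H)
    (hminP : ∀ P' : Subgroup G, (T : Subgroup G) ≤ P' → ¬ P' ≤ H → P' ≤ P → P' = P) :
    ¬ ((T : Subgroup G).subgroupOf P).Normal ∧
      IsCoatom ((H ⊓ P).subgroupOf P) ∧
      (T : Subgroup G).subgroupOf P ≤ (H ⊓ P).subgroupOf P ∧
      ∀ M : Subgroup ↥P, IsCoatom M → (T : Subgroup G).subgroupOf P ≤ M →
        M = (H ⊓ P).subgroupOf P := by
  have hTH : (T : Subgroup G) ≤ H := le_trans Subgroup.le_normalizer hNH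
  -- key: any subgroup of P containing T.subgroupOf P and not ≤ (H⊓P).subgroupOf P is ⊤
  have key : ∀ M : Subgroup ↥P, (T : Subgroup G).subgroupOf P ≤ M →
      ¬ M ≤ (H ⊓ P).subgroupOf P → M = ⊤ := by
    intro M hTM hMH
    set M' := M.map P.subtype with hM'
    have hM'P : M' ≤ P := by
      rw [hM']; rintro x ⟨y, _, rfl⟩; exact y.2
    have hTM' : (T : Subgroup G) ≤ M' := by
      intro x hx
      exact ⟨⟨x, hTP hx⟩, hTM hx, rfl⟩
    have hM'H : ¬ M' ≤ H := by
      intro h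
      apply hMH
      intro x hx
      exact ⟨h ⟨x, hx, rfl⟩, x.2⟩
    have hMP : M' = P := hminP M' hTM' hM'H hM'P
    rw [Subgroup.eq_top_iff']
    intro x
    have hx : (x : G) ∈ M' := by rw [hMP]; exact x.2
    obtain ⟨y, hy, hyx⟩ := hx
    have hxy : y = x := Subtype.ext hyx
    exact hxy ▸ hy
  have hTle : (T : Subgroup G).subgroupOf P ≤ (H ⊓ P).subgroupOf P :=
    fun x hx => ⟨hTH hx, hTP hx⟩
  have hHPne : (H ⊓ P).subgroupOf P ≠ ⊤ := by
    rw [Ne, Subgroup.subgroupOf_eq_top]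
    intro h
    exact hPH fun x hx => (h hx).1
  constructor
  · intro hN
    rw [Subgroup.normal_subgroupOf_iff hTP] at hN
    apply hPH
    intro g hg
    apply hNH
    rw [Subgroup.mem_normalizer_iff]
    intro x
    constructor
    · intro hx; exact hN x g hx hg
    · intro hx
      have := hN _ g⁻¹ hx (P.inv_mem hg)
      simpa [mul_assoc] using this
  refine ⟨⟨hHPne, fun M hM => ?_⟩, hTle, fun M hM hTM => ?_⟩
  · exact key M (le_trans hTle hM.le) (fun h => absurd (lt_of_lt_of_le hM h) (lt_irrefl _))
  · by_contra hne
    by_cases h : M ≤ (H ⊓ P).subgroupOf P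
    · exact hHPne (hM.2 _ (lt_of_le_of_ne h hne))
    · exact hM.1 (key M hTM h)
end

section
/- Let p be a prime, S a finite p-group, and Q a subgroup of S such that J(S) is not contained in Q. Then J(N_S(J(Q))) is not contained in Q. -/
section Aux

variable {p : ℕ} {S : Type*} [Group S]

lemma isElementaryAbelian_map {A : Subgroup S} (f : S →* S) (hf : Function.Injective f)
    (hA : IsElementaryAbelian p A) : IsElementaryAbelian p (A.map f) := by
  obtain ⟨hc, hpow⟩ := hA
  have e := A.equivMapOfInjective f hf
  constructor
  · intro a b
    obtain ⟨a', rfl⟩ := e.surjective a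
    obtain ⟨b', rfl⟩ := e.surjective b
    rw [← map_mul, ← map_mul, hc]
  · intro a
    obtain ⟨a', rfl⟩ := e.surjective a
    rw [← map_pow, hpow, map_one]

lemma card_map_conj {A : Subgroup S} (f : S →* S) (hf : Function.Injective f) :
    Nat.card (A.map f) = Nat.card A :=
  Nat.card_congr (A.equivMapOfInjective f hf).toEquiv.symm

lemma maxElemAbIn_map_conj {H : Subgroup S} {x : S} (hx : x ∈ Subgroup.normalizer (H : Set S))
    {A : Subgroup S} (hA : A ∈ maxElemAbIn p H) :
    A.map (MulAut.conj x).toMonoidHom ∈ maxElemAbIn p H := by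
  obtain ⟨hAH, hAe, hAmax⟩ := hA
  have hinj : Function.Injective (MulAut.conj x).toMonoidHom := (MulAut.conj x).injective
  refine ⟨?_, isElementaryAbelian_map _ hinj hAe, fun B hB hBe => ?_⟩
  · intro g hg
    obtain ⟨a, ha, rfl⟩ := hg
    have : (MulAut.conj x).toMonoidHom a = x * a * x⁻¹ := by
      simp [MulAut.conj_apply]
    rw [this]
    exact (Subgroup.mem_normalizer_iff.mp hx a).mp (hAH ha)
  · rw [card_map_conj _ hinj]
    exact hAmax B hB hBe

lemma conj_comp_conj_inv (x : S) :
    ((MulAut.conj x).toMonoidHom.comp (MulAut.conj x⁻¹).toMonoidHom) = MonoidHom.id S := by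
  ext a; simp; group

lemma normalizer_le_normalizer_thompsonJ (p : ℕ) (H : Subgroup S) :
    Subgroup.normalizer (H : Set S) ≤ Subgroup.normalizer (thompsonJ p H : Set S) := by
  intro x hx
  have hle : ∀ y ∈ Subgroup.normalizer (H : Set S),
      (thompsonJ p H).map (MulAut.conj y).toMonoidHom ≤ thompsonJ p H := by
    intro y hy
    rw [thompsonJ, Subgroup.map_le_iff_le_comap]
    apply sSup_le
    intro A hA
    rw [← Subgroup.map_le_iff_le_comap]
    exact le_sSup (maxElemAbIn_map_conj hy hA)
  have h1 := hle x hx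
  have h2 := hle x⁻¹ ((Subgroup.normalizer (H : Set S)).inv_mem hx)
  have h3 : thompsonJ p H ≤ (thompsonJ p H).map (MulAut.conj x).toMonoidHom := by
    have := Subgroup.map_mono (f := (MulAut.conj x).toMonoidHom) h2
    rwa [Subgroup.map_map, conj_comp_conj_inv, Subgroup.map_id] at this
  have heq : (thompsonJ p H).map (MulAut.conj x).toMonoidHom = thompsonJ p H :=
    le_antisymm h1 h3
  rw [Subgroup.mem_normalizer_iff]
  intro g
  constructor
  · intro hg
    have : (MulAut.conj x).toMonoidHom g ∈ (thompsonJ p H).map (MulAut.conj x).toMonoidHom :=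
      Subgroup.mem_map_of_mem _ hg
    rw [heq] at this
    simpa using this
  · intro hg
    have : (MulAut.conj x).toMonoidHom g ∈ (thompsonJ p H).map (MulAut.conj x).toMonoidHom := by
      rw [heq]; simpa using hg
    obtain ⟨a, ha, hag⟩ := this
    have : a = g := (MulAut.conj x).injective hag
    rwa [← this]

lemma exists_mem_maxElemAbIn [Finite S] (p : ℕ) (H : Subgroup S) :
    ∃ A, A ∈ maxElemAbIn p H := by
  have hbot : (⊥ : Subgroup S) ≤ H ∧ IsElementaryAbelian p (⊥ : Subgroup S) := by
    refine ⟨bot_le, fun a b => Subsingleton.elim _ _, fun a => Subsingleton.elim _ _⟩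
  obtain ⟨A, hA, hAmax⟩ := Set.exists_max_image
    {A : Subgroup S | A ≤ H ∧ IsElementaryAbelian p A} (fun A => Nat.card A)
    (Set.toFinite _) ⟨⊥, hbot⟩
  exact ⟨A, hA.1, hA.2, fun B hB hBe => hAmax B ⟨hB, hBe⟩⟩

end Aux

/-- Let `p` be a prime, `S` a finite `p`-group and `Q ≤ S` a subgroup with
`J(S) ≰ Q`.  Then `J(N_S(J(Q))) ≰ Q`. -/
theorem thompsonJ_normalizer_not_le
    {p : ℕ} (hp : p.Prime) {S : Type*} [Group S] [Finite S] (hS : IsPGroup p S)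
    (Q : Subgroup S) (h : ¬ thompsonJ p (⊤ : Subgroup S) ≤ Q) :
    ¬ thompsonJ p (Subgroup.normalizer (thompsonJ p Q : Set S)) ≤ Q := by
  intro hJN
  set N := Subgroup.normalizer (thompsonJ p Q : Set S) with hN
  have hQN : Q ≤ N :=
    Subgroup.le_normalizer.trans (normalizer_le_normalizer_thompsonJ p Q)
  obtain ⟨A₀, hA₀⟩ := exists_mem_maxElemAbIn p N
  have hsub : maxElemAbIn p N ⊆ maxElemAbIn p Q := by
    rintro A ⟨hAN, hAe, hAmax⟩
    have hAQ : A ≤ Q := (le_sSup (show A ∈ maxElemAbIn p N from ⟨hAN, hAe, hAmax⟩)).trans hJN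
    exact ⟨hAQ, hAe, fun B hBQ hBe => hAmax B (hBQ.trans hQN) hBe⟩
  have hsub' : maxElemAbIn p Q ⊆ maxElemAbIn p N := by
    rintro A ⟨hAQ, hAe, hAmax⟩
    refine ⟨hAQ.trans hQN, hAe, fun B hBN hBe => ?_⟩
    calc Nat.card B ≤ Nat.card A₀ := hA₀.2.2 B hBN hBe
      _ ≤ Nat.card A := hAmax A₀ (hsub hA₀).1 (hsub hA₀).2.1
  have hset : maxElemAbIn p N = maxElemAbIn p Q := le_antisymm hsub hsub'
  have hJeq : thompsonJ p N = thompsonJ p Q := by rw [thompsonJ, hset]; rfl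
  have hNN : Subgroup.normalizer (N : Set S) = N := by
    refine le_antisymm (fun x hx => ?_) Subgroup.le_normalizer
    have := normalizer_le_normalizer_thompsonJ p N hx
    rwa [hJeq] at this
  haveI : Fact p.Prime := ⟨hp⟩
  haveI : Group.IsNilpotent S := hS.isNilpotent
  have hNtop : N = ⊤ :=
    normalizerCondition_iff_only_full_group_self_normalizing.mp
      (normalizerCondition_of_isNilpotent) N hNN
  exact h (hNtop ▸ hJN)
end
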